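/- arXiv:1209.1162 — 4 statements merged into one kernel-verified Lean document; each statement's English description precedes it below -/
import Mathlib

section
/- In the braid group B_n, the Birman–Ko–Lee generators β_{i,j} and β_{k,l} commute whenever 1 ≤ i < j < k < l ≤ n (disjoint indices) or 1 ≤ i < k < l < j ≤ n (nested indices). -/
/-- Braid relations on generators σ_1, ..., σ_{n-1} (indexed by `Fin (n-1)`, 0-based):
σ_i σ_j = σ_j σ_i for |i-j| ≥ 2 and σ_i σ_{i+1} σ_i = σ_{i+1} σ_i σ_{i+1}. -/
def braidRels (n : ℕ) : Set (FreeGroup (Fin (n - 1))) :=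
  {r | (∃ i j : Fin (n - 1), (i : ℕ) + 2 ≤ (j : ℕ) ∧
          r = FreeGroup.of i * FreeGroup.of j * (FreeGroup.of i)⁻¹ * (FreeGroup.of j)⁻¹) ∨
       (∃ i j : Fin (n - 1), (j : ℕ) = (i : ℕ) + 1 ∧
          r = FreeGroup.of i * FreeGroup.of j * FreeGroup.of i *
              (FreeGroup.of j * FreeGroup.of i * FreeGroup.of j)⁻¹)}

/-- The braid group B_n. -/
abbrev BraidGroup (n : ℕ) : Type _ := PresentedGroup (braidRels n)

/-- The braid generator σ_k (1-based index, so `1 ≤ k ≤ n-1`). -/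
def braidGen (n k : ℕ) : BraidGroup n :=
  if h : k - 1 < n - 1 then PresentedGroup.of (⟨k - 1, h⟩ : Fin (n - 1)) else 1

/-- The Birman–Ko–Lee generator
β_{i,j} = (σ_{i+1} ⋯ σ_{j-1})⁻¹ σ_i (σ_{i+1} ⋯ σ_{j-1}) (1-based, `1 ≤ i < j ≤ n`). -/
def bkl (n i j : ℕ) : BraidGroup n :=
  (((List.range (j - 1 - i)).map fun t => braidGen n (i + 1 + t)).prod)⁻¹ *
    braidGen n i *
    ((List.range (j - 1 - i)).map fun t => braidGen n (i + 1 + t)).prod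

/- ### Auxiliary machinery -/

private lemma braid_rel_one {n : ℕ} {r : FreeGroup (Fin (n - 1))}
    (hr : r ∈ braidRels n) : (QuotientGroup.mk r : BraidGroup n) = 1 :=
  (QuotientGroup.eq_one_iff r).mpr (Subgroup.subset_normalClosure hr)

/-- Commutation of far-apart generators. -/
private lemma gen_comm (n a b : ℕ) (ha : 1 ≤ a) (hab : a + 2 ≤ b) :
    Commute (braidGen n a) (braidGen n b) := by
  by_cases hb : b - 1 < n - 1
  · have ha' : a - 1 < n - 1 := by omega
    have key : (QuotientGroup.mk
        (FreeGroup.of (⟨a - 1, ha'⟩ : Fin (n - 1)) * FreeGroup.of (⟨b - 1, hb⟩ : Fin (n - 1)) *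
          (FreeGroup.of (⟨a - 1, ha'⟩ : Fin (n - 1)))⁻¹ *
          (FreeGroup.of (⟨b - 1, hb⟩ : Fin (n - 1)))⁻¹) : BraidGroup n) = 1 :=
      braid_rel_one (Or.inl ⟨⟨a - 1, ha'⟩, ⟨b - 1, hb⟩, by simp; omega, rfl⟩)
    have key2 : PresentedGroup.of (⟨a - 1, ha'⟩ : Fin (n - 1)) *
        PresentedGroup.of (⟨b - 1, hb⟩ : Fin (n - 1)) *
        (PresentedGroup.of (⟨a - 1, ha'⟩ : Fin (n - 1)))⁻¹ *
        (PresentedGroup.of (⟨b - 1, hb⟩ : Fin (n - 1)))⁻¹ = (1 : BraidGroup n) := by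
      exact key
    rw [show braidGen n a = PresentedGroup.of (⟨a - 1, ha'⟩ : Fin (n - 1)) from dif_pos ha',
      show braidGen n b = PresentedGroup.of (⟨b - 1, hb⟩ : Fin (n - 1)) from dif_pos hb]
    exact commutatorElement_eq_one_iff_commute.mp key2
  · rw [show braidGen n b = 1 from dif_neg hb]
    exact Commute.one_right _

/-- The braid relation. -/
private lemma braid_rel (n a : ℕ) (ha : 1 ≤ a) (ha' : a + 1 ≤ n - 1) :
    braidGen n a * braidGen n (a + 1) * braidGen n a =
      braidGen n (a + 1) * braidGen n a * braidGen n (a + 1) := by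
  have h1 : a - 1 < n - 1 := by omega
  have h2 : a + 1 - 1 < n - 1 := by omega
  have key : (QuotientGroup.mk
      (FreeGroup.of (⟨a - 1, h1⟩ : Fin (n - 1)) * FreeGroup.of (⟨a + 1 - 1, h2⟩ : Fin (n - 1)) *
        FreeGroup.of (⟨a - 1, h1⟩ : Fin (n - 1)) *
        (FreeGroup.of (⟨a + 1 - 1, h2⟩ : Fin (n - 1)) * FreeGroup.of (⟨a - 1, h1⟩ : Fin (n - 1)) *
          FreeGroup.of (⟨a + 1 - 1, h2⟩ : Fin (n - 1)))⁻¹) : BraidGroup n) = 1 :=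
    braid_rel_one (Or.inr ⟨⟨a - 1, h1⟩, ⟨a + 1 - 1, h2⟩, by simp; omega, rfl⟩)
  have key2 : PresentedGroup.of (⟨a - 1, h1⟩ : Fin (n - 1)) *
      PresentedGroup.of (⟨a + 1 - 1, h2⟩ : Fin (n - 1)) *
      PresentedGroup.of (⟨a - 1, h1⟩ : Fin (n - 1)) *
      (PresentedGroup.of (⟨a + 1 - 1, h2⟩ : Fin (n - 1)) *
        PresentedGroup.of (⟨a - 1, h1⟩ : Fin (n - 1)) *
        PresentedGroup.of (⟨a + 1 - 1, h2⟩ : Fin (n - 1)))⁻¹ = (1 : BraidGroup n) := by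
    exact key
  rw [show braidGen n a = PresentedGroup.of (⟨a - 1, h1⟩ : Fin (n - 1)) from dif_pos h1,
    show braidGen n (a + 1) = PresentedGroup.of (⟨a + 1 - 1, h2⟩ : Fin (n - 1)) from dif_pos h2]
  exact mul_inv_eq_one.mp key2

/-- The chain σ_a σ_{a+1} ⋯ σ_{a+len-1}. -/
private def ch (n a len : ℕ) : BraidGroup n :=
  ((List.range len).map fun t => braidGen n (a + t)).prod

private lemma ch_add (n a p q : ℕ) : ch n a (p + q) = ch n a p * ch n (a + p) q := by
  unfold ch
  rw [List.range_add, List.map_append, List.prod_append, List.map_map]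
  simp only [Function.comp_def, ← Nat.add_assoc]

private lemma ch_one (n a : ℕ) : ch n a 1 = braidGen n a := by
  show ((List.range 1).map fun t => braidGen n (a + t)).prod = braidGen n a
  rw [List.range_succ, List.range_zero]; simp

/-- A generator below a chain commutes with it. -/
private lemma gen_comm_ch (n m a len : ℕ) (hm : 1 ≤ m) (h : m + 2 ≤ a) :
    Commute (braidGen n m) (ch n a len) := by
  refine Commute.list_prod_right _ _ ?_
  intro x hx
  simp only [List.mem_map, List.mem_range] at hx
  obtain ⟨t, _, rfl⟩ := hx
  exact gen_comm n m (a + t) hm (by omega)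

/-- A generator above a chain commutes with it. -/
private lemma gen_comm_ch' (n m a len : ℕ) (ha : 1 ≤ a) (h : a + len + 1 ≤ m) :
    Commute (braidGen n m) (ch n a len) := by
  refine Commute.list_prod_right _ _ ?_
  intro x hx
  simp only [List.mem_map, List.mem_range] at hx
  obtain ⟨t, ht, rfl⟩ := hx
  exact (gen_comm n (a + t) m (by omega) (by omega)).symm

/-- Conjugation by the chain shifts interior generators up by one. -/
private lemma ch_shift (n a len m : ℕ) (ha : 1 ≤ a) (h1 : a ≤ m) (h2 : m + 2 ≤ a + len)
    (hn : a + len ≤ n) :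
    ch n a len * braidGen n m = braidGen n (m + 1) * ch n a len := by
  obtain ⟨p, q, hlen, hap⟩ : ∃ p q, len = p + (1 + (1 + q)) ∧ a + p = m :=
    ⟨m - a, a + len - m - 2, by omega, by omega⟩
  rw [hlen, ch_add, ch_add, ch_add, ch_one, ch_one, hap]
  have hm1 : 1 ≤ m := le_trans ha h1
  have hv : Commute (braidGen n m) (ch n (m + 1 + 1) q) := gen_comm_ch n m _ q hm1 (by omega)
  have hu : Commute (braidGen n (m + 1)) (ch n a p) := gen_comm_ch' n (m + 1) a p ha (by omega)
  have hbr : braidGen n m * braidGen n (m + 1) * braidGen n m =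
      braidGen n (m + 1) * braidGen n m * braidGen n (m + 1) :=
    braid_rel n m hm1 (by omega)
  have e1 : ch n (m + 1 + 1) q * braidGen n m = braidGen n m * ch n (m + 1 + 1) q := hv.eq.symm
  calc ch n a p * (braidGen n m * (braidGen n (m + 1) * ch n (m + 1 + 1) q)) * braidGen n m
      = ch n a p * braidGen n m * braidGen n (m + 1) *
          (ch n (m + 1 + 1) q * braidGen n m) := by group
    _ = ch n a p * braidGen n m * braidGen n (m + 1) *
          (braidGen n m * ch n (m + 1 + 1) q) := by rw [e1]
    _ = ch n a p * (braidGen n m * braidGen n (m + 1) * braidGen n m) *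
          ch n (m + 1 + 1) q := by group
    _ = ch n a p * (braidGen n (m + 1) * braidGen n m * braidGen n (m + 1)) *
          ch n (m + 1 + 1) q := by rw [hbr]
    _ = ch n a p * braidGen n (m + 1) *
          (braidGen n m * braidGen n (m + 1) * ch n (m + 1 + 1) q) := by group
    _ = braidGen n (m + 1) * ch n a p *
          (braidGen n m * braidGen n (m + 1) * ch n (m + 1 + 1) q) := by rw [← hu.eq]
    _ = braidGen n (m + 1) * (ch n a p * (braidGen n m *
          (braidGen n (m + 1) * ch n (m + 1 + 1) q))) := by group

/-- Interior generators commute with β_{i,j}. -/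
private lemma gen_comm_bkl (n i j m : ℕ) (hi : 1 ≤ i) (hm1 : i + 1 ≤ m) (hm2 : m + 2 ≤ j)
    (hj : j ≤ n) : Commute (braidGen n m) (bkl n i j) := by
  show Commute (braidGen n m) ((ch n (i + 1) (j - 1 - i))⁻¹ * braidGen n i * ch n (i + 1) (j - 1 - i))
  set w := ch n (i + 1) (j - 1 - i) with hw
  have hsum : i + 1 + (j - 1 - i) = j := by omega
  have hshift : w * braidGen n m = braidGen n (m + 1) * w := by
    rw [hw]; exact ch_shift n (i + 1) (j - 1 - i) m (by omega) (by omega) (by omega) (by omega)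
  have hm : braidGen n m = w⁻¹ * braidGen n (m + 1) * w := by
    rw [mul_assoc, ← hshift, ← mul_assoc, inv_mul_cancel, one_mul]
  have hc : braidGen n i * braidGen n (m + 1) = braidGen n (m + 1) * braidGen n i :=
    (gen_comm n i (m + 1) hi (by omega)).eq
  show braidGen n m * (w⁻¹ * braidGen n i * w) = w⁻¹ * braidGen n i * w * braidGen n m
  rw [hm]
  calc w⁻¹ * braidGen n (m + 1) * w * (w⁻¹ * braidGen n i * w)
      = w⁻¹ * (braidGen n (m + 1) * braidGen n i) * w := by group
    _ = w⁻¹ * (braidGen n i * braidGen n (m + 1)) * w := by rw [hc]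
    _ = w⁻¹ * braidGen n i * w * (w⁻¹ * braidGen n (m + 1) * w) := by group

/-- If a single element commutes with all the constituents of β_{i,j}, it commutes with β_{i,j}. -/
private lemma comm_bkl_of_comm (n i j : ℕ) {x : BraidGroup n}
    (h1 : Commute x (braidGen n i)) (h2 : Commute x (ch n (i + 1) (j - 1 - i))) :
    Commute x (bkl n i j) :=
  (h2.inv_right.mul_right h1).mul_right h2

/-- The Birman–Ko–Lee generators β_{i,j} and β_{k,l} of the braid group B_n commute whenever
1 ≤ i < j < k < l ≤ n (disjoint indices) or 1 ≤ i < k < l < j ≤ n (nested indices). -/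
theorem bkl_commute (n i j k l : ℕ) (hi : 1 ≤ i)
    (h : (i < j ∧ j < k ∧ k < l ∧ l ≤ n) ∨ (i < k ∧ k < l ∧ l < j ∧ j ≤ n)) :
    Commute (bkl n i j) (bkl n k l) := by
  rcases h with ⟨hij, hjk, hkl, hln⟩ | ⟨hik, hkl, hlj, hjn⟩
  · -- disjoint: every generator of bkl n i j is ≤ j-1, every generator of bkl n k l is ≥ k ≥ j+1
    have A : ∀ m, 1 ≤ m → m + 1 ≤ j → Commute (braidGen n m) (bkl n k l) := by
      intro m hm hmj
      refine comm_bkl_of_comm n k l ?_ ?_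
      · exact gen_comm n m k hm (by omega)
      · exact gen_comm_ch n m (k + 1) _ hm (by omega)
    have hg : Commute (braidGen n i) (bkl n k l) := A i hi (by omega)
    have hch : Commute (ch n (i + 1) (j - 1 - i)) (bkl n k l) := by
      refine (Commute.list_prod_right _ _ ?_).symm
      intro x hx
      simp only [List.mem_map, List.mem_range] at hx
      obtain ⟨t, ht, rfl⟩ := hx
      exact (A (i + 1 + t) (by omega) (by omega)).symm
    exact ((hch.inv_left.mul_left hg).mul_left hch)
  · -- nested: every generator of bkl n k l is interior to (i, j)
    refine Commute.symm ?_
    have hg : Commute (braidGen n k) (bkl n i j) :=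
      gen_comm_bkl n i j k hi (by omega) (by omega) hjn
    have hch : Commute (ch n (k + 1) (l - 1 - k)) (bkl n i j) := by
      refine (Commute.list_prod_right _ _ ?_).symm
      intro x hx
      simp only [List.mem_map, List.mem_range] at hx
      obtain ⟨t, ht, rfl⟩ := hx
      exact (gen_comm_bkl n i j (k + 1 + t) hi (by omega) (by omega) hjn).symm
    exact ((hch.inv_left.mul_left hg).mul_left hch)
end

section
/- Let g ≥ 3 and let w := v_4 (v_5^{-1} v_6^{-1} ⋯ v_{2g−1}^{-1}) v_{2g} (v_{2g−1}^{-1} ⋯ v_6^{-1} v_5^{-1}) v_4 ∈ A(C̄_{2g+1}). Then there exists an injective group homomorphism A(C̄_5) → A(C̄_{2g+1}) sending v_1 ↦ v_1, v_2 ↦ v_2, v_3 ↦ v_3, v_4 ↦ w, and v_5 ↦ v_{2g+1}. -/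
/-- The right-angled Artin group of a simple graph. -/
def raagRels {V : Type*} (G : SimpleGraph V) : Set (FreeGroup V) :=
  {r | ∃ u u' : V, G.Adj u u' ∧
    r = FreeGroup.of u * FreeGroup.of u' * (FreeGroup.of u)⁻¹ * (FreeGroup.of u')⁻¹}

abbrev RAAG {V : Type*} (G : SimpleGraph V) : Type _ := PresentedGroup (raagRels G)

/-- The complement of the m-cycle: i, j adjacent iff distinct and not cyclically adjacent
(vertices are 0-based, so vertex v_k of the paper corresponds to index k-1). -/
def cycCompl (m : ℕ) : SimpleGraph (Fin m) where
  Adj i j := i ≠ j ∧ ((i : ℕ) + 1) % m ≠ (j : ℕ) ∧ ((j : ℕ) + 1) % m ≠ (i : ℕ)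
  symm := by constructor; intro i j h; exact ⟨h.1.symm, h.2.2, h.2.1⟩
  loopless := by constructor; intro i h; exact h.1 rfl

/-- The generator v_k (1-based) of the RAAG on the complement of the m-cycle. -/
def vgen (m k : ℕ) : RAAG (cycCompl m) :=
  if h : k - 1 < m then PresentedGroup.of (⟨k - 1, h⟩ : Fin m) else 1

namespace Raag
open Classical

variable {V : Type*} {Γ : SimpleGraph V}

/-- generator -/
def gen (Γ : SimpleGraph V) (v : V) : RAAG Γ := PresentedGroup.of v

lemma comm_of_adj {u v : V} (h : Γ.Adj u v) : Commute (gen Γ u) (gen Γ v) := by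
  have hr : (FreeGroup.of u * FreeGroup.of v * (FreeGroup.of u)⁻¹ * (FreeGroup.of v)⁻¹) ∈
      Subgroup.normalClosure (raagRels Γ) :=
    Subgroup.subset_normalClosure ⟨u, v, h, rfl⟩
  have h1 : (PresentedGroup.mk (raagRels Γ))
      (FreeGroup.of u * FreeGroup.of v * (FreeGroup.of u)⁻¹ * (FreeGroup.of v)⁻¹) = 1 := by
    exact (QuotientGroup.eq_one_iff _).2 hr
  have : gen Γ u * gen Γ v * (gen Γ u)⁻¹ * (gen Γ v)⁻¹ = 1 := by
    simpa [gen, PresentedGroup.of, map_mul, map_inv] using h1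
  have h3 : gen Γ u * gen Γ v * (gen Γ u)⁻¹ = gen Γ v := mul_inv_eq_one.1 this
  exact mul_inv_eq_iff_eq_mul.1 h3

/-- lift of a map on generators whose images commute along edges -/
noncomputable def liftGens {H : Type*} [Group H] (f : V → H)
    (hf : ∀ u v, Γ.Adj u v → Commute (f u) (f v)) : RAAG Γ →* H :=
  PresentedGroup.toGroup (f := f) (by
    rintro r ⟨u, u', h, rfl⟩
    simp only [map_mul, map_inv, FreeGroup.lift_apply_of]
    have := (hf u u' h).eq
    rw [this]
    group)

@[simp] lemma liftGens_gen {H : Type*} [Group H] (f : V → H)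
    (hf : ∀ u v, Γ.Adj u v → Commute (f u) (f v)) (v : V) :
    liftGens f hf (gen Γ v) = f v := by
  simp [liftGens, gen, PresentedGroup.toGroup.of]


section Retract

/-- retraction killing generators outside S -/
noncomputable def pi (Γ : SimpleGraph V) (S : Set V) : RAAG Γ →* RAAG Γ :=
  liftGens (fun v => if v ∈ S then gen Γ v else 1) (by
    intro u v h
    by_cases hu : u ∈ S <;> by_cases hv : v ∈ S <;>
      simp [hu, hv, comm_of_adj h, Commute.one_left, Commute.one_right])

@[simp] lemma pi_gen (S : Set V) (v : V) :
    pi Γ S (gen Γ v) = if v ∈ S then gen Γ v else 1 := by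
  simp [pi]

lemma pi_pi (S T : Set V) (x : RAAG Γ) : pi Γ T (pi Γ S x) = pi Γ (S ∩ T) x := by
  classical
  have : (pi Γ T).comp (pi Γ S) = pi Γ (S ∩ T) := by
    apply PresentedGroup.ext
    intro v
    show pi Γ T (pi Γ S (gen Γ v)) = pi Γ (S ∩ T) (gen Γ v)
    by_cases hs : v ∈ S <;> by_cases ht : v ∈ T <;>
      simp [hs, ht, Set.mem_inter_iff]
  exact DFunLike.congr_fun this x

/-- the "special subgroup" of elements supported on S, as fixed points of the retraction -/
noncomputable def SP (Γ : SimpleGraph V) (S : Set V) : Subgroup (RAAG Γ) where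
  carrier := {x | pi Γ S x = x}
  one_mem' := map_one _
  mul_mem' := by intro a b ha hb; simp only [Set.mem_setOf_eq, map_mul] at *; rw [ha, hb]
  inv_mem' := by intro a ha; simp only [Set.mem_setOf_eq, map_inv] at *; rw [ha]

lemma mem_SP_iff {S : Set V} {x : RAAG Γ} : x ∈ SP Γ S ↔ pi Γ S x = x := Iff.rfl

lemma gen_mem_SP {S : Set V} {v : V} (h : v ∈ S) : gen Γ v ∈ SP Γ S := by
  simp [mem_SP_iff, h]

lemma SP_inter {S T : Set V} {x : RAAG Γ} (hs : x ∈ SP Γ S) (ht : x ∈ SP Γ T) :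
    x ∈ SP Γ (S ∩ T) := by
  rw [mem_SP_iff] at *
  rw [← pi_pi, hs, ht]

lemma SP_mono {S T : Set V} (hst : S ⊆ T) : SP Γ S ≤ SP Γ T := by
  intro x hx
  rw [mem_SP_iff] at *
  calc pi Γ T x = pi Γ T (pi Γ S x) := by rw [hx]
    _ = pi Γ (S ∩ T) x := pi_pi S T x
    _ = pi Γ S x := by rw [Set.inter_eq_self_of_subset_left hst]
    _ = x := hx

lemma pi_mem_SP (S : Set V) (x : RAAG Γ) : pi Γ S x ∈ SP Γ S := by
  rw [mem_SP_iff, pi_pi, Set.inter_self]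

lemma SP_le_closure (S : Set V) : SP Γ S ≤ Subgroup.closure (gen Γ '' S) := by
  intro x hx
  have h1 : ∀ y : RAAG Γ, pi Γ S y ∈ Subgroup.closure (gen Γ '' S) := by
    intro y
    refine PresentedGroup.generated_by _ ((Subgroup.closure (gen Γ '' S)).comap (pi Γ S)) ?_ y
    intro v
    simp only [Subgroup.mem_comap]
    show pi Γ S (gen Γ v) ∈ _
    by_cases hv : v ∈ S
    · rw [pi_gen, if_pos hv]
      exact Subgroup.subset_closure ⟨v, hv, rfl⟩
    · rw [pi_gen, if_neg hv]; exact one_mem _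
  rw [← hx]; exact h1 x

lemma commute_SP {S : Set V} {z x : RAAG Γ} (hz : ∀ v ∈ S, Commute z (gen Γ v))
    (hx : x ∈ SP Γ S) : Commute z x := by
  have := SP_le_closure S hx
  have hsub : Subgroup.closure (gen Γ '' S) ≤ Subgroup.centralizer {z} := by
    rw [Subgroup.closure_le]
    rintro y ⟨v, hv, rfl⟩
    rw [SetLike.mem_coe, Subgroup.mem_centralizer_iff]
    intro w hw
    rw [Set.mem_singleton_iff] at hw
    subst hw
    exact (hz v hv).eq
  have hc := hsub this
  rw [Subgroup.mem_centralizer_iff] at hc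
  exact hc z rfl

/-- exponent-sum homomorphism of a single generator -/
noncomputable def expv (Γ : SimpleGraph V) (v0 : V) : RAAG Γ →* Multiplicative ℤ :=
  liftGens (fun v => if v = v0 then Multiplicative.ofAdd (1 : ℤ) else 1)
    (fun _ _ _ => Commute.all _ _)

@[simp] lemma expv_gen (v0 v : V) :
    expv Γ v0 (gen Γ v) = if v = v0 then Multiplicative.ofAdd (1 : ℤ) else 1 := by
  simp [expv]

lemma expv_eq_one_of_mem_SP {S : Set V} {v0 : V} (hv : v0 ∉ S) {x : RAAG Γ}
    (hx : x ∈ SP Γ S) : expv Γ v0 x = 1 := by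
  have hcomp : (expv Γ v0).comp (pi Γ S) = 1 := by
    apply PresentedGroup.ext
    intro v
    show expv Γ v0 (pi Γ S (gen Γ v)) = 1
    by_cases hs : v ∈ S
    · have : v ≠ v0 := fun h => hv (h ▸ hs)
      simp [hs, this]
    · simp [hs]
  rw [mem_SP_iff] at hx
  rw [← hx]
  calc expv Γ v0 (pi Γ S x) = ((expv Γ v0).comp (pi Γ S)) x := rfl
    _ = 1 := by rw [hcomp]; rfl

end Retract


section Machine

variable (Γ)

/-- the link of a vertex -/
def lk (t : V) : Set V := {v | Γ.Adj t v}

variable (t : V)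

/-- the special subgroup on the complement of t -/
noncomputable def Asub : Subgroup (RAAG Γ) := SP Γ ({t}ᶜ)

/-- the special subgroup on the link of t -/
noncomputable def Ksub : Subgroup (RAAG Γ) := SP Γ (lk Γ t)

lemma lk_subset_compl : lk Γ t ⊆ {t}ᶜ := by
  intro v hv
  exact fun h => (Γ.ne_of_adj hv) (by simpa using h.symm)

lemma K_le_A : Ksub Γ t ≤ Asub Γ t := SP_mono (lk_subset_compl Γ t)

lemma gen_t_commute_K {k : RAAG Γ} (hk : k ∈ Ksub Γ t) : Commute (gen Γ t) k :=
  commute_SP (fun v hv => comm_of_adj hv) hk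

/-- canonical representative of the right coset `Ksub · a` -/
noncomputable def sig (a : RAAG Γ) : RAAG Γ :=
  if a ∈ Ksub Γ t then 1 else Classical.epsilon (fun c => a * c⁻¹ ∈ Ksub Γ t)

lemma sig_spec (a : RAAG Γ) : a * (sig Γ t a)⁻¹ ∈ Ksub Γ t := by
  unfold sig
  split_ifs with h
  · simpa using h
  · exact Classical.epsilon_spec (p := fun c => a * c⁻¹ ∈ Ksub Γ t)
      ⟨a, by simpa using one_mem (Ksub Γ t)⟩

lemma sig_congr {a b : RAAG Γ} (h : a * b⁻¹ ∈ Ksub Γ t) : sig Γ t a = sig Γ t b := by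
  have hmem : a ∈ Ksub Γ t ↔ b ∈ Ksub Γ t := by
    constructor
    · intro ha
      have := mul_mem (inv_mem h) ha
      simpa [mul_assoc] using this
    · intro hb
      have := mul_mem h hb
      simpa [mul_assoc] using this
  have hpred : (fun c => a * c⁻¹ ∈ Ksub Γ t) = (fun c => b * c⁻¹ ∈ Ksub Γ t) := by
    funext c
    apply propext
    constructor
    · intro hac
      have := mul_mem (inv_mem h) hac
      simpa [mul_assoc] using this
    · intro hbc
      have := mul_mem h hbc
      simpa [mul_assoc] using this
  unfold sig
  by_cases ha : a ∈ Ksub Γ t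
  · rw [if_pos ha, if_pos (hmem.1 ha)]
  · rw [if_neg ha, if_neg (fun hb => ha (hmem.2 hb)), hpred]

lemma sig_of_mem {a : RAAG Γ} (h : a ∈ Ksub Γ t) : sig Γ t a = 1 := if_pos h

lemma sig_not_mem {a : RAAG Γ} (h : a ∉ Ksub Γ t) : sig Γ t a ∉ Ksub Γ t := by
  intro hc
  exact h (by simpa [mul_assoc] using mul_mem (sig_spec Γ t a) hc)

lemma sig_sig (a : RAAG Γ) : sig Γ t (sig Γ t a) = sig Γ t a := by
  apply sig_congr
  have h2 : (a * (sig Γ t a)⁻¹)⁻¹ ∈ Ksub Γ t := inv_mem (sig_spec Γ t a)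
  simpa using h2

lemma sig_one : sig Γ t (1 : RAAG Γ) = 1 := sig_of_mem Γ t (one_mem _)

/-- validity of a list of syllable entries -/
def EntOK (L : List (ℤ × RAAG Γ)) : Prop :=
  (∀ p ∈ L, p.1 ≠ 0 ∧ sig Γ t p.2 = p.2) ∧ ∀ p ∈ L.dropLast, p.2 ∉ Ksub Γ t

lemma entok_nil : EntOK Γ t [] := ⟨by simp, by simp⟩

lemma entok_single {n : ℤ} {c : RAAG Γ} (hn : n ≠ 0) (hc : sig Γ t c = c) :
    EntOK Γ t [(n, c)] := by
  constructor
  · intro p hp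
    simp only [List.mem_singleton] at hp
    subst hp; exact ⟨hn, hc⟩
  · simp [List.dropLast]

lemma entok_cons {n : ℤ} {c : RAAG Γ} {L : List (ℤ × RAAG Γ)} (hn : n ≠ 0)
    (hc : sig Γ t c = c) (hcK : c ∉ Ksub Γ t) (hL : EntOK Γ t L) :
    EntOK Γ t ((n, c) :: L) := by
  constructor
  · intro p hp
    rcases List.mem_cons.1 hp with h | h
    · subst h; exact ⟨hn, hc⟩
    · exact hL.1 p h
  · intro p hp
    cases L with
    | nil => simp at hp
    | cons q L' =>
      rcases List.mem_cons.1 hp with h | h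
      · subst h; exact hcK
      · exact hL.2 p h

lemma entok_tail {n : ℤ} {c : RAAG Γ} {L : List (ℤ × RAAG Γ)}
    (h : EntOK Γ t ((n, c) :: L)) : EntOK Γ t L := by
  constructor
  · intro p hp; exact h.1 p (List.mem_cons_of_mem _ hp)
  · intro p hp
    cases L with
    | nil => simp at hp
    | cons q L' => exact h.2 p (List.mem_cons_of_mem _ hp)

lemma entok_head {n : ℤ} {c : RAAG Γ} {L : List (ℤ × RAAG Γ)}
    (h : EntOK Γ t ((n, c) :: L)) : n ≠ 0 ∧ sig Γ t c = c ∧ (L ≠ [] → c ∉ Ksub Γ t) := by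
  refine ⟨(h.1 _ (List.mem_cons_self)).1, (h.1 _ (List.mem_cons_self)).2, ?_⟩
  intro hL
  cases L with
  | nil => exact absurd rfl hL
  | cons q L' => exact h.2 (n, c) (List.mem_cons_self)

/-- the state space -/
def XS := {p : RAAG Γ × List (ℤ × RAAG Γ) // EntOK Γ t p.2}

/-- the raw `t`-action with exponent ε -/
noncomputable def raw (ε : ℤ) (x : RAAG Γ × List (ℤ × RAAG Γ)) :
    RAAG Γ × List (ℤ × RAAG Γ) :=
  if x.1 ∈ Ksub Γ t then
    match x.2 with
    | [] => (x.1, [(ε, 1)])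
    | (n, c) :: L' => if n = -ε then (x.1 * c, L') else (x.1, (n + ε, c) :: L')
  else (x.1 * (sig Γ t x.1)⁻¹, (ε, sig Γ t x.1) :: x.2)

variable {Γ t}

lemma raw_nil_mem {ε : ℤ} {h : RAAG Γ} (hK : h ∈ Ksub Γ t) :
    raw Γ t ε (h, []) = (h, [(ε, 1)]) := by simp [raw, hK]

lemma raw_cons_pop {ε n : ℤ} {h c : RAAG Γ} {L : List (ℤ × RAAG Γ)}
    (hK : h ∈ Ksub Γ t) (hn : n = -ε) :
    raw Γ t ε (h, (n, c) :: L) = (h * c, L) := by simp [raw, hK, hn]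

lemma raw_cons_merge {ε n : ℤ} {h c : RAAG Γ} {L : List (ℤ × RAAG Γ)}
    (hK : h ∈ Ksub Γ t) (hn : ¬ n = -ε) :
    raw Γ t ε (h, (n, c) :: L) = (h, (n + ε, c) :: L) := by simp [raw, hK, hn]

lemma raw_not_mem {ε : ℤ} {h : RAAG Γ} (hK : h ∉ Ksub Γ t) (L : List (ℤ × RAAG Γ)) :
    raw Γ t ε (h, L) = (h * (sig Γ t h)⁻¹, (ε, sig Γ t h) :: L) := by simp [raw, hK]

lemma raw_entok {ε : ℤ} (hε : ε ≠ 0) (x : RAAG Γ × List (ℤ × RAAG Γ))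
    (hx : EntOK Γ t x.2) : EntOK Γ t (raw Γ t ε x).2 := by
  obtain ⟨h, L⟩ := x
  by_cases hK : h ∈ Ksub Γ t
  · cases L with
    | nil => rw [raw_nil_mem hK]; exact entok_single Γ t hε (sig_one Γ t)
    | cons p L' =>
      obtain ⟨n, c⟩ := p
      by_cases hn : n = -ε
      · rw [raw_cons_pop hK hn]
        exact entok_tail Γ t hx
      · rw [raw_cons_merge hK hn]
        obtain ⟨h1, h2, h3⟩ := entok_head Γ t hx
        cases L' with
        | nil => exact entok_single Γ t (by omega) h2
        | cons q L'' =>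
          exact entok_cons Γ t (by omega) h2 (h3 (by simp)) (entok_tail Γ t hx)
  · rw [raw_not_mem hK]
    exact entok_cons Γ t hε (sig_sig Γ t h) (sig_not_mem Γ t hK) hx

lemma raw_raw {ε : ℤ} (hε : ε = 1 ∨ ε = -1) (x : RAAG Γ × List (ℤ × RAAG Γ))
    (hx : EntOK Γ t x.2) : raw Γ t (-ε) (raw Γ t ε x) = x := by
  obtain ⟨h, L⟩ := x
  by_cases hK : h ∈ Ksub Γ t
  · cases L with
    | nil =>
      rw [raw_nil_mem hK, raw_cons_pop hK (by ring)]
      simp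
    | cons p L' =>
      obtain ⟨n, c⟩ := p
      by_cases hn : n = -ε
      · rw [raw_cons_pop hK hn]
        obtain ⟨h1, h2, h3⟩ := entok_head Γ t hx
        by_cases hcK : c ∈ Ksub Γ t
        · have hc1 : c = 1 := by rw [← h2, sig_of_mem Γ t hcK]
          have hL' : L' = [] := by
            by_contra hne
            exact (h3 hne) hcK
          subst hc1; subst hL'
          rw [show h * 1 = h from mul_one h, raw_nil_mem hK, hn]
        · have hhc : h * c ∉ Ksub Γ t := by
            intro hc2
            exact hcK (by simpa [mul_assoc] using mul_mem (inv_mem hK) hc2)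
          rw [raw_not_mem hhc]
          have hsig : sig Γ t (h * c) = c := by
            rw [show sig Γ t (h * c) = sig Γ t c from sig_congr Γ t (by simpa using hK), h2]
          rw [hsig, hn]
          simp [mul_assoc]
      · rw [raw_cons_merge hK hn]
        have h1 := (entok_head Γ t hx).1
        rw [raw_cons_merge hK (by omega)]
        simp
  · rw [raw_not_mem hK L, raw_cons_pop (sig_spec Γ t h) (by ring)]
    simp

variable (Γ t)

/-- the permutation given by the stable letter t -/
noncomputable def tperm : Equiv.Perm (XS Γ t) where
  toFun x := ⟨raw Γ t 1 x.1, raw_entok one_ne_zero x.1 x.2⟩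
  invFun x := ⟨raw Γ t (-1) x.1, raw_entok (by norm_num) x.1 x.2⟩
  left_inv x := by
    apply Subtype.ext
    exact raw_raw (Or.inl rfl) x.1 x.2
  right_inv x := by
    apply Subtype.ext
    have := raw_raw (Or.inr rfl) x.1 x.2
    simpa using this

lemma tperm_apply (x : XS Γ t) : ((tperm Γ t) x).1 = raw Γ t 1 x.1 := rfl

lemma tperm_inv_apply (x : XS Γ t) : ((tperm Γ t)⁻¹ x).1 = raw Γ t (-1) x.1 := rfl

/-- head multiplication as a homomorphism to permutations -/
noncomputable def hmul : RAAG Γ →* Equiv.Perm (XS Γ t) where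
  toFun a :=
    { toFun := fun x => ⟨(a * x.1.1, x.1.2), x.2⟩
      invFun := fun x => ⟨(a⁻¹ * x.1.1, x.1.2), x.2⟩
      left_inv := by intro x; apply Subtype.ext; simp [mul_assoc]
      right_inv := by intro x; apply Subtype.ext; simp [mul_assoc] }
  map_one' := by ext x; simp; rfl
  map_mul' := by
    intro a b; ext x
    simp [Equiv.Perm.mul_apply, mul_assoc]
    rfl

lemma hmul_apply (a : RAAG Γ) (x : XS Γ t) :
    ((hmul Γ t a) x).1 = (a * x.1.1, x.1.2) := rfl

lemma tperm_comm_hmul {k : RAAG Γ} (hk : k ∈ Ksub Γ t) :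
    Commute (tperm Γ t) (hmul Γ t k) := by
  have key : ∀ x : XS Γ t, (tperm Γ t) ((hmul Γ t k) x) = (hmul Γ t k) ((tperm Γ t) x) := by
    intro x
    obtain ⟨⟨h, L⟩, hL⟩ := x
    apply Subtype.ext
    show raw Γ t 1 (k * h, L) = (k * (raw Γ t 1 (h, L)).1, (raw Γ t 1 (h, L)).2)
    by_cases hK : h ∈ Ksub Γ t
    · have hkh : k * h ∈ Ksub Γ t := mul_mem hk hK
      cases L with
      | nil => rw [raw_nil_mem hkh, raw_nil_mem hK]
      | cons p L' =>
        obtain ⟨n, c⟩ := p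
        by_cases hn : n = -1
        · rw [raw_cons_pop hkh (by omega), raw_cons_pop hK (by omega)]
          simp [mul_assoc]
        · rw [raw_cons_merge hkh (by omega), raw_cons_merge hK (by omega)]
    · have hkh : k * h ∉ Ksub Γ t := by
        intro hc
        exact hK (by simpa [mul_assoc] using mul_mem (inv_mem hk) hc)
      rw [raw_not_mem hkh, raw_not_mem hK]
      have hs : sig Γ t (k * h) = sig Γ t h := sig_congr Γ t (by simpa [mul_assoc] using hk)
      simp [hs, mul_assoc]
  exact Equiv.ext key

/-- the machine homomorphism -/
noncomputable def mach : RAAG Γ →* Equiv.Perm (XS Γ t) :=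
  liftGens (fun v => if v = t then tperm Γ t else hmul Γ t (gen Γ v)) (by
    intro u v huv
    show Commute (if u = t then tperm Γ t else hmul Γ t (gen Γ u))
      (if v = t then tperm Γ t else hmul Γ t (gen Γ v))
    by_cases hu : u = t <;> by_cases hv : v = t
    · rw [if_pos hu, if_pos hv]
    · rw [if_pos hu, if_neg hv]
      exact tperm_comm_hmul Γ t (gen_mem_SP (show Γ.Adj t v from hu ▸ huv))
    · rw [if_neg hu, if_pos hv]
      exact (tperm_comm_hmul Γ t (gen_mem_SP (show Γ.Adj t u from hv ▸ huv.symm))).symm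
    · rw [if_neg hu, if_neg hv]
      exact (comm_of_adj huv).map (hmul Γ t))

lemma mach_gen_t : mach Γ t (gen Γ t) = tperm Γ t := by
  rw [mach, liftGens_gen, if_pos rfl]

lemma mach_gen_ne {v : V} (hv : v ≠ t) : mach Γ t (gen Γ v) = hmul Γ t (gen Γ v) := by
  rw [mach, liftGens_gen, if_neg hv]

lemma mach_eq_hmul_of_mem {a : RAAG Γ} (ha : a ∈ Asub Γ t) :
    mach Γ t a = hmul Γ t a := by
  have hsub : SP Γ ({t}ᶜ) ≤ MonoidHom.eqLocus (mach Γ t) (hmul Γ t) := by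
    refine le_trans (SP_le_closure _) ?_
    rw [Subgroup.closure_le]
    rintro y ⟨v, hv, rfl⟩
    show mach Γ t (gen Γ v) = hmul Γ t (gen Γ v)
    exact mach_gen_ne Γ t hv
  exact hsub ha

lemma tperm_pow_not_mem (k : ℕ) (h : RAAG Γ) (hK : h ∉ Ksub Γ t)
    (L : List (ℤ × RAAG Γ)) (x : XS Γ t) (hx : x.1 = (h, L)) :
    ((tperm Γ t ^ (k + 1)) x).1 = (h * (sig Γ t h)⁻¹, (((k : ℤ) + 1), sig Γ t h) :: L) := by
  induction k generalizing x with
  | zero =>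
    rw [pow_one, tperm_apply, hx, raw_not_mem hK]
    norm_num
  | succ k ih =>
    rw [pow_succ', Equiv.Perm.mul_apply, tperm_apply, ih x hx,
      raw_cons_merge (sig_spec Γ t h) (by omega)]
    have : ((k : ℤ) + 1) + 1 = ((k : ℕ) + 1 : ℕ) + 1 := by push_cast; ring
    rw [this]

lemma tperm_invpow_not_mem (k : ℕ) (h : RAAG Γ) (hK : h ∉ Ksub Γ t)
    (L : List (ℤ × RAAG Γ)) (x : XS Γ t) (hx : x.1 = (h, L)) :
    (((tperm Γ t)⁻¹ ^ (k + 1)) x).1 =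
      (h * (sig Γ t h)⁻¹, (-((k : ℤ) + 1), sig Γ t h) :: L) := by
  induction k generalizing x with
  | zero =>
    rw [pow_one, tperm_inv_apply, hx, raw_not_mem hK]
    norm_num
  | succ k ih =>
    rw [pow_succ', Equiv.Perm.mul_apply, tperm_inv_apply, ih x hx,
      raw_cons_merge (sig_spec Γ t h) (by omega)]
    have : -((k : ℤ) + 1) + (-1) = -(((k : ℕ) + 1 : ℕ) + 1 : ℤ) := by push_cast; ring
    rw [this]

lemma tperm_pow_nil_mem (k : ℕ) (h : RAAG Γ) (hK : h ∈ Ksub Γ t)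
    (x : XS Γ t) (hx : x.1 = (h, [])) :
    ((tperm Γ t ^ (k + 1)) x).1 = (h, [(((k : ℤ) + 1), 1)]) := by
  induction k generalizing x with
  | zero => rw [pow_one, tperm_apply, hx, raw_nil_mem hK]; norm_num
  | succ k ih =>
    rw [pow_succ', Equiv.Perm.mul_apply, tperm_apply, ih x hx,
      raw_cons_merge hK (by omega)]
    have : ((k : ℤ) + 1) + 1 = ((k : ℕ) + 1 : ℕ) + 1 := by push_cast; ring
    rw [this]

lemma tperm_invpow_nil_mem (k : ℕ) (h : RAAG Γ) (hK : h ∈ Ksub Γ t)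
    (x : XS Γ t) (hx : x.1 = (h, [])) :
    (((tperm Γ t)⁻¹ ^ (k + 1)) x).1 = (h, [(-((k : ℤ) + 1), 1)]) := by
  induction k generalizing x with
  | zero => rw [pow_one, tperm_inv_apply, hx, raw_nil_mem hK]; norm_num
  | succ k ih =>
    rw [pow_succ', Equiv.Perm.mul_apply, tperm_inv_apply, ih x hx,
      raw_cons_merge hK (by omega)]
    have : -((k : ℤ) + 1) + (-1) = -(((k : ℕ) + 1 : ℕ) + 1 : ℤ) := by push_cast; ring
    rw [this]

lemma mach_zpow_not_mem {n : ℤ} (hn : n ≠ 0) (h : RAAG Γ) (hK : h ∉ Ksub Γ t)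
    (L : List (ℤ × RAAG Γ)) (x : XS Γ t) (hx : x.1 = (h, L)) :
    ((mach Γ t (gen Γ t ^ n)) x).1 = (h * (sig Γ t h)⁻¹, (n, sig Γ t h) :: L) := by
  rw [map_zpow, mach_gen_t]
  rcases n with (_ | k) | k
  · exact absurd rfl hn
  · rw [show (Int.ofNat (k + 1)) = ((k + 1 : ℕ) : ℤ) from rfl, zpow_natCast]
    rw [tperm_pow_not_mem Γ t k h hK L x hx]
    norm_num
  · rw [zpow_negSucc, ← inv_pow]
    rw [tperm_invpow_not_mem Γ t k h hK L x hx, Int.negSucc_eq]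

lemma mach_zpow_nil_mem {n : ℤ} (hn : n ≠ 0) (h : RAAG Γ) (hK : h ∈ Ksub Γ t)
    (x : XS Γ t) (hx : x.1 = (h, [])) :
    ((mach Γ t (gen Γ t ^ n)) x).1 = (h, [(n, 1)]) := by
  rw [map_zpow, mach_gen_t]
  rcases n with (_ | k) | k
  · exact absurd rfl hn
  · rw [show (Int.ofNat (k + 1)) = ((k + 1 : ℕ) : ℤ) from rfl, zpow_natCast]
    rw [tperm_pow_nil_mem Γ t k h hK x hx]
    norm_num
  · rw [zpow_negSucc, ← inv_pow]
    rw [tperm_invpow_nil_mem Γ t k h hK x hx, Int.negSucc_eq]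

/-- base point -/
noncomputable def x0 : XS Γ t := ⟨(1, []), entok_nil Γ t⟩

/-- product of a triple list -/
noncomputable def prodT (trips : List (ℤ × RAAG Γ × RAAG Γ)) : RAAG Γ :=
  (trips.map fun p => gen Γ t ^ p.1 * p.2.1 * p.2.2).prod

lemma mainGLstate (trips : List (ℤ × RAAG Γ × RAAG Γ))
    (hval : ∀ p ∈ trips, p.1 ≠ 0 ∧ p.2.1 ∈ Ksub Γ t ∧ p.2.2 ∈ Asub Γ t)
    (hint : ∀ p ∈ trips.dropLast, p.2.2 ∉ Ksub Γ t) :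
    ∃ (h : RAAG Γ) (L : List (ℤ × RAAG Γ)),
      h ∈ Ksub Γ t ∧ L.length = trips.length ∧
      ((mach Γ t (prodT Γ t trips)) (x0 Γ t)).1 = (h, L) := by
  induction trips with
  | nil =>
    refine ⟨1, [], one_mem _, rfl, ?_⟩
    rw [prodT]
    simp [x0]
    rfl
  | cons p rest ih =>
    obtain ⟨n, k, a⟩ := p
    obtain ⟨hn, hk, ha⟩ := hval _ (List.mem_cons_self)
    have hvr : ∀ p ∈ rest, p.1 ≠ 0 ∧ p.2.1 ∈ Ksub Γ t ∧ p.2.2 ∈ Asub Γ t :=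
      fun p hp => hval p (List.mem_cons_of_mem _ hp)
    have hir : ∀ p ∈ rest.dropLast, p.2.2 ∉ Ksub Γ t := by
      intro p hp
      apply hint
      cases rest with
      | nil => simp at hp
      | cons q rest' => exact List.mem_cons_of_mem _ hp
    obtain ⟨h', L', hh', hlen, hstate⟩ := ih hvr hir
    have hsplit : prodT Γ t ((n, k, a) :: rest) =
        gen Γ t ^ n * (k * (a * prodT Γ t rest)) := by
      rw [prodT, List.map_cons, List.prod_cons, ← prodT]
      group
    rw [hsplit, map_mul, map_mul, map_mul, Equiv.Perm.mul_apply, Equiv.Perm.mul_apply,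
      Equiv.Perm.mul_apply]
    set y := (mach Γ t (prodT Γ t rest)) (x0 Γ t) with hy
    have hy1 : y.1 = (h', L') := hstate
    have hstep1 : ((mach Γ t a) y).1 = (a * h', L') := by
      rw [mach_eq_hmul_of_mem Γ t ha, hmul_apply, hy1]
    have hstep2 : ((mach Γ t k) ((mach Γ t a) y)).1 = (k * (a * h'), L') := by
      rw [mach_eq_hmul_of_mem Γ t (K_le_A Γ t hk), hmul_apply, hstep1]
    cases rest with
    | nil =>
      have hL'nil : L' = [] := by
        have := hlen; simpa using this
      subst hL'nil
      by_cases hKA : k * (a * h') ∈ Ksub Γ t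
      · refine ⟨k * (a * h'), [(n, 1)], hKA, by simp, ?_⟩
        exact mach_zpow_nil_mem Γ t hn _ hKA _ hstep2
      · refine ⟨k * (a * h') * (sig Γ t (k * (a * h')))⁻¹,
          [(n, sig Γ t (k * (a * h')))], sig_spec Γ t _, by simp, ?_⟩
        exact mach_zpow_not_mem Γ t hn _ hKA _ _ hstep2
    | cons q rest' =>
      have hanK : a ∉ Ksub Γ t := hint (n, k, a) (by
        show (n, k, a) ∈ ((n, k, a) :: q :: rest').dropLast
        rw [show ((n, k, a) :: q :: rest').dropLast = (n, k, a) :: (q :: rest').dropLast from rfl]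
        exact List.mem_cons_self)
      have hKA : k * (a * h') ∉ Ksub Γ t := by
        intro hc
        apply hanK
        have h1 : k⁻¹ * (k * (a * h')) * h'⁻¹ ∈ Ksub Γ t :=
          mul_mem (mul_mem (inv_mem hk) hc) (inv_mem hh')
        simpa [mul_assoc] using h1
      refine ⟨k * (a * h') * (sig Γ t (k * (a * h')))⁻¹,
        (n, sig Γ t (k * (a * h'))) :: L', sig_spec Γ t _, by simp [hlen], ?_⟩
      exact mach_zpow_not_mem Γ t hn _ hKA _ _ hstep2

/-- MAIN GENERIC LEMMA: an alternating word is not in the special subgroup avoiding t -/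
lemma mainGL {a0 : RAAG Γ} (ha0 : a0 ∈ Asub Γ t) (trips : List (ℤ × RAAG Γ × RAAG Γ))
    (hne : trips ≠ [])
    (hval : ∀ p ∈ trips, p.1 ≠ 0 ∧ p.2.1 ∈ Ksub Γ t ∧ p.2.2 ∈ Asub Γ t)
    (hint : ∀ p ∈ trips.dropLast, p.2.2 ∉ Ksub Γ t) :
    a0 * prodT Γ t trips ∉ Asub Γ t := by
  intro hmem
  obtain ⟨h, L, hh, hlen, hstate⟩ := mainGLstate Γ t trips hval hint
  have h1 : ((mach Γ t (a0 * prodT Γ t trips)) (x0 Γ t)).1 = (a0 * h, L) := by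
    rw [map_mul, Equiv.Perm.mul_apply, mach_eq_hmul_of_mem Γ t ha0, hmul_apply, hstate]
  have h2 : ((mach Γ t (a0 * prodT Γ t trips)) (x0 Γ t)).1 = (a0 * prodT Γ t trips, []) := by
    rw [mach_eq_hmul_of_mem Γ t hmem, hmul_apply]
    simp [x0]
  rw [h1] at h2
  have : L = [] := (Prod.ext_iff.1 h2).2
  rw [this] at hlen
  simp at hlen
  exact hne (List.length_eq_zero_iff.1 hlen.symm)

end Machine



section Concrete

/-- the big RAAG -/
abbrev Gm (g : ℕ) := RAAG (cycCompl (2*g+1))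

/-- 0-based generator -/
noncomputable def Xg (g : ℕ) (k : ℕ) : Gm g :=
  gen (cycCompl (2*g+1)) ⟨k % (2*g+1), Nat.mod_lt _ (by omega)⟩

lemma Xg_eq (g k : ℕ) (hk : k < 2*g+1) : Xg g k = gen (cycCompl (2*g+1)) ⟨k, hk⟩ := by
  unfold Xg
  congr 1
  exact Fin.ext (Nat.mod_eq_of_lt hk)

lemma adjX {g i j : ℕ} (hi : i < 2*g+1) (hj : j < 2*g+1) (hij : i ≠ j)
    (h1 : i + 1 ≠ j) (h2 : j + 1 ≠ i) (hw1 : i = 2*g → j ≠ 0) (hw2 : j = 2*g → i ≠ 0) :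
    (cycCompl (2*g+1)).Adj ⟨i, hi⟩ ⟨j, hj⟩ := by
  refine ⟨fun h => hij (by simpa [Fin.ext_iff] using h), ?_, ?_⟩
  · show (i + 1) % (2*g+1) ≠ j
    rcases Nat.lt_or_ge (i+1) (2*g+1) with h | h
    · rw [Nat.mod_eq_of_lt h]; exact h1
    · have hieq : i = 2*g := by omega
      have : (i + 1) % (2*g+1) = 0 := by
        rw [hieq, show 2*g+1 = 2*g+1 from rfl]
        simp [Nat.mod_self]
      rw [this]
      exact fun hc => (hw1 hieq) hc.symm
  · show (j + 1) % (2*g+1) ≠ i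
    rcases Nat.lt_or_ge (j+1) (2*g+1) with h | h
    · rw [Nat.mod_eq_of_lt h]; exact h2
    · have hjeq : j = 2*g := by omega
      have : (j + 1) % (2*g+1) = 0 := by
        rw [hjeq]; simp [Nat.mod_self]
      rw [this]
      exact fun hc => (hw2 hjeq) hc.symm

lemma commX {g i j : ℕ} (hi : i < 2*g+1) (hj : j < 2*g+1) (hij : i ≠ j)
    (h1 : i + 1 ≠ j) (h2 : j + 1 ≠ i) (hw1 : i = 2*g → j ≠ 0) (hw2 : j = 2*g → i ≠ 0) :
    Commute (Xg g i) (Xg g j) := by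
  rw [Xg_eq g i hi, Xg_eq g j hj]
  exact comm_of_adj (adjX hi hj hij h1 h2 hw1 hw2)

/-- supports, as subsets of vertices -/
def S01 (g : ℕ) : Set (Fin (2*g+1)) := {v | (v : ℕ) = 0 ∨ (v : ℕ) = 1}
def Sp (g : ℕ) : Set (Fin (2*g+1)) := {v | (v : ℕ) = 0 ∨ (v : ℕ) = 1 ∨ (v : ℕ) = 2*g}
def SQ (g : ℕ) : Set (Fin (2*g+1)) :=
  {v | (v : ℕ) = 0 ∨ (v : ℕ) = 1 ∨ (v : ℕ) = 2 ∨ (v : ℕ) = 2*g}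

/-- a vertex set contains index k -/
def memX (g : ℕ) (W : Set (Fin (2*g+1))) (k : ℕ) : Prop :=
  ∀ hk : k < 2*g+1, (⟨k, hk⟩ : Fin (2*g+1)) ∈ W

lemma Xg_mem_SP {g : ℕ} {W : Set (Fin (2*g+1))} {k : ℕ} (hk : k < 2*g+1)
    (h : memX g W k) : Xg g k ∈ SP (cycCompl (2*g+1)) W := by
  rw [Xg_eq g k hk]
  exact gen_mem_SP (h hk)

/-- commuting with every generator of a support set implies commuting with the subgroup -/
lemma commute_Sp {g : ℕ} {z : Gm g} (h0 : Commute z (Xg g 0)) (h1 : Commute z (Xg g 1))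
    (h2g : Commute z (Xg g (2*g))) {x : Gm g} (hx : x ∈ SP (cycCompl (2*g+1)) (Sp g)) :
    Commute z x := by
  refine commute_SP (fun v hv => ?_) hx
  rcases hv with h | h | h
  · have : v = ⟨0, by omega⟩ := Fin.ext (by simpa using h)
    rw [this]; rw [← Xg_eq g 0 (by omega)]; exact h0
  · have : v = ⟨1, by omega⟩ := Fin.ext (by simpa using h)
    rw [this]; rw [← Xg_eq g 1 (by omega)]; exact h1
  · have : v = ⟨2*g, by omega⟩ := Fin.ext (by simpa using h)
    rw [this]; rw [← Xg_eq g (2*g) (by omega)]; exact h2g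

lemma commute_SQ {g : ℕ} {z : Gm g} (h0 : Commute z (Xg g 0)) (h1 : Commute z (Xg g 1))
    (h2 : Commute z (Xg g 2)) (h2g : Commute z (Xg g (2*g))) {x : Gm g}
    (hx : x ∈ SP (cycCompl (2*g+1)) (SQ g)) : Commute z x := by
  refine commute_SP (fun v hv => ?_) hx
  rcases hv with h | h | h | h
  · have : v = ⟨0, by omega⟩ := Fin.ext (by simpa using h)
    rw [this]; rw [← Xg_eq g 0 (by omega)]; exact h0
  · have : v = ⟨1, by omega⟩ := Fin.ext (by simpa using h)
    rw [this]; rw [← Xg_eq g 1 (by omega)]; exact h1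
  · have : v = ⟨2, by omega⟩ := Fin.ext (by simpa using h)
    rw [this]; rw [← Xg_eq g 2 (by omega)]; exact h2
  · have : v = ⟨2*g, by omega⟩ := Fin.ext (by simpa using h)
    rw [this]; rw [← Xg_eq g (2*g) (by omega)]; exact h2g

/-- the nested word, by depth: `uV g 0 = x_{2g-1}`,
`uV g (d+1) = x_{2g-2-d}⁻¹ · uV g d · x_{2g-2-d}⁻¹` -/
noncomputable def uV (g : ℕ) : ℕ → Gm g
  | 0 => Xg g (2*g-1)
  | (d+1) => (Xg g (2*g-2-d))⁻¹ * uV g d * (Xg g (2*g-2-d))⁻¹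

/-- the word u_j (0-based level j, for 4 ≤ j ≤ 2g-1) -/
noncomputable def uW (g j : ℕ) : Gm g := uV g (2*g-1-j)

lemma uW_top (g : ℕ) : uW g (2*g-1) = Xg g (2*g-1) := by
  unfold uW
  rw [show 2*g-1-(2*g-1) = 0 from by omega]
  rfl

lemma uW_succ {g j : ℕ} (hg : 3 ≤ g) (hj : j ≤ 2*g-2) :
    uW g j = (Xg g j)⁻¹ * uW g (j+1) * (Xg g j)⁻¹ := by
  unfold uW
  rw [show 2*g-1-j = (2*g-1-(j+1))+1 from by omega]
  show (Xg g (2*g-2-(2*g-1-(j+1))))⁻¹ * uV g (2*g-1-(j+1)) * (Xg g (2*g-2-(2*g-1-(j+1))))⁻¹ = _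
  rw [show 2*g-2-(2*g-1-(j+1)) = j from by omega]

/-- alternating chain words at level j -/
noncomputable def chainW (g j : ℕ) (δ : ℤ) : List (Gm g) → Gm g → Gm g
  | [], cap => uW g j ^ δ * cap
  | (y :: ys), cap => uW g j ^ δ * y * chainW g j (-δ) ys cap

lemma uV_mem {g : ℕ} {W : Set (Fin (2*g+1))} (hg : 3 ≤ g) :
    ∀ d, d ≤ 2*g-5 → (∀ i, 2*g-1-d ≤ i → i ≤ 2*g-1 → memX g W i) →
      uV g d ∈ SP (cycCompl (2*g+1)) W := by
  intro d
  induction d with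
  | zero =>
    intro _ h
    exact Xg_mem_SP (by omega) (h (2*g-1) (by omega) (by omega))
  | succ d ih =>
    intro hd h
    show (Xg g (2*g-2-d))⁻¹ * uV g d * (Xg g (2*g-2-d))⁻¹ ∈ _
    have hx : Xg g (2*g-2-d) ∈ SP (cycCompl (2*g+1)) W :=
      Xg_mem_SP (by omega) (h (2*g-2-d) (by omega) (by omega))
    have hu : uV g d ∈ SP (cycCompl (2*g+1)) W :=
      ih (by omega) (fun i h1 h2 => h i (by omega) h2)
    exact mul_mem (mul_mem (inv_mem hx) hu) (inv_mem hx)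

lemma uW_mem {g j : ℕ} {W : Set (Fin (2*g+1))} (hg : 3 ≤ g) (hj4 : 4 ≤ j) (hj : j ≤ 2*g-1)
    (h : ∀ i, j ≤ i → i ≤ 2*g-1 → memX g W i) : uW g j ∈ SP (cycCompl (2*g+1)) W := by
  unfold uW
  exact uV_mem hg (2*g-1-j) (by omega) (fun i h1 h2 => h i (by omega) h2)

lemma chainW_mem {g j : ℕ} {W : Set (Fin (2*g+1))} (hg : 3 ≤ g) (hj4 : 4 ≤ j) (hj : j ≤ 2*g-1)
    (hW : ∀ i, j ≤ i → i ≤ 2*g-1 → memX g W i) :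
    ∀ (ys : List (Gm g)) (cap : Gm g) (δ : ℤ),
      (∀ y ∈ ys, y ∈ SP (cycCompl (2*g+1)) W) → cap ∈ SP (cycCompl (2*g+1)) W →
      chainW g j δ ys cap ∈ SP (cycCompl (2*g+1)) W := by
  intro ys
  induction ys with
  | nil =>
    intro cap δ _ hcap
    exact mul_mem (zpow_mem (uW_mem hg hj4 hj hW) δ) hcap
  | cons y ys ih =>
    intro cap δ hys hcap
    refine mul_mem (mul_mem (zpow_mem (uW_mem hg hj4 hj hW) δ) ?_) ?_
    · exact hys y (List.mem_cons_self)
    · exact ih cap (-δ) (fun z hz => hys z (List.mem_cons_of_mem _ hz)) hcap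

end Concrete


section CCL

/-- total-version vertex -/
def tv (g k : ℕ) : Fin (2*g+1) := ⟨k % (2*g+1), Nat.mod_lt _ (by omega)⟩

lemma Xg_def (g k : ℕ) : Xg g k = gen (cycCompl (2*g+1)) (tv g k) := rfl

lemma tv_val (g k : ℕ) (hk : k < 2*g+1) : (tv g k : ℕ) = k := Nat.mod_eq_of_lt hk

/-- signs -/
def lastSign (δ : ℤ) (r : ℕ) : ℤ := if r % 2 = 0 then δ else -δ

lemma lastSign_pm {δ : ℤ} (h : δ = 1 ∨ δ = -1) (r : ℕ) :
    lastSign δ r = 1 ∨ lastSign δ r = -1 := by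
  unfold lastSign
  rcases h with rfl | rfl <;> split_ifs <;> simp

lemma lastSign_zero (δ : ℤ) : lastSign δ 0 = δ := by simp [lastSign]

lemma lastSign_succ (δ : ℤ) (r : ℕ) : lastSign δ (r+1) = lastSign (-δ) r := by
  unfold lastSign
  rcases Nat.mod_two_eq_zero_or_one r with h | h
  · rw [if_pos h, if_neg (by omega)]
  · rw [if_pos (by omega), if_neg (by omega), neg_neg]

lemma chainW_shift {g j : ℕ} (hg : 3 ≤ g) (hj4 : 4 ≤ j) (hj : j ≤ 2*g-2) :
    ∀ (ys : List (Gm g)) (cap : Gm g) (δ : ℤ), (δ = 1 ∨ δ = -1) →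
    (∀ y ∈ ys, Commute (Xg g j) y) → Commute (Xg g j) cap →
    chainW g j δ ys cap =
      (Xg g j) ^ (-δ) * chainW g (j+1) δ ys cap * (Xg g j) ^ (-(lastSign δ ys.length)) := by
  intro ys
  induction ys with
  | nil =>
    intro cap δ hδ _ hcap
    show uW g j ^ δ * cap = _ * (uW g (j+1) ^ δ * cap) * _
    rw [List.length_nil, lastSign_zero, uW_succ hg hj]
    rcases hδ with rfl | rfl
    · have hc := (hcap.inv_left).eq
      simp only [zpow_one, zpow_neg]
      simp [mul_assoc, hc]
    · have hc := hcap.eq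
      simp only [zpow_neg, zpow_one, neg_neg, mul_inv_rev, inv_inv]
      simp [mul_assoc, hc]
  | cons y ys ih =>
    intro cap δ hδ hys hcap
    have hy : Commute (Xg g j) y := hys y (List.mem_cons_self)
    have hδ' : -δ = 1 ∨ -δ = -1 := by rcases hδ with rfl | rfl <;> simp
    show uW g j ^ δ * y * chainW g j (-δ) ys cap = _ * (uW g (j+1) ^ δ * y * chainW g (j+1) (-δ) ys cap) * _
    rw [ih cap (-δ) hδ' (fun z hz => hys z (List.mem_cons_of_mem _ hz)) hcap,
      uW_succ hg hj, List.length_cons, lastSign_succ, neg_neg]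
    rcases hδ with rfl | rfl
    · have hc := (hy.inv_left).eq
      simp only [zpow_one, zpow_neg]
      simp [mul_assoc, hc]
    · have hc := hy.eq
      simp only [zpow_neg, zpow_one, neg_neg, mul_inv_rev, inv_inv]
      simp [mul_assoc, hc]

/-- commutation of x_j with the support sets -/
lemma commute_Xj_Sp {g j : ℕ} (hg : 3 ≤ g) (hj4 : 4 ≤ j) (hj : j ≤ 2*g-2) {y : Gm g}
    (hy : y ∈ SP (cycCompl (2*g+1)) (Sp g)) : Commute (Xg g j) y := by
  refine commute_Sp ?_ ?_ ?_ hy <;>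
    exact commX (by omega) (by omega) (by omega) (by omega) (by omega)
      (by omega) (by omega)

lemma commute_Xj_SQ {g j : ℕ} (hg : 3 ≤ g) (hj4 : 4 ≤ j) (hj : j ≤ 2*g-2) {y : Gm g}
    (hy : y ∈ SP (cycCompl (2*g+1)) (SQ g)) : Commute (Xg g j) y := by
  refine commute_SQ ?_ ?_ ?_ ?_ hy <;>
    exact commX (by omega) (by omega) (by omega) (by omega) (by omega)
      (by omega) (by omega)

/-- triple lists realizing base chains -/
noncomputable def tripsOf (g : ℕ) (δ : ℤ) : List (Gm g) → Gm g → List (ℤ × Gm g × Gm g)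
  | [], cap => [(δ, 1, cap)]
  | (y :: ys), cap => (δ, 1, y) :: tripsOf g (-δ) ys cap

lemma tripsOf_ne_nil (g : ℕ) (δ : ℤ) (ys : List (Gm g)) (cap : Gm g) :
    tripsOf g δ ys cap ≠ [] := by
  cases ys <;> simp [tripsOf]

lemma tripsOf_val (g : ℕ) : ∀ (ys : List (Gm g)) (δ : ℤ) (cap : Gm g),
    ∀ p ∈ tripsOf g δ ys cap, (p.1 = δ ∨ p.1 = -δ) ∧ p.2.1 = 1 ∧ (p.2.2 ∈ ys ∨ p.2.2 = cap) := by
  intro ys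
  induction ys with
  | nil =>
    intro δ cap p hp
    simp only [tripsOf, List.mem_singleton] at hp
    subst hp
    exact ⟨Or.inl rfl, rfl, Or.inr rfl⟩
  | cons y ys ih =>
    intro δ cap p hp
    rcases List.mem_cons.1 hp with h | h
    · subst h
      exact ⟨Or.inl rfl, rfl, Or.inl (List.mem_cons_self)⟩
    · obtain ⟨h1, h2, h3⟩ := ih (-δ) cap p h
      refine ⟨by rcases h1 with h | h <;> omega, h2, ?_⟩
      rcases h3 with h | h
      · exact Or.inl (List.mem_cons_of_mem _ h)
      · exact Or.inr h

lemma tripsOf_dropLast (g : ℕ) : ∀ (ys : List (Gm g)) (δ : ℤ) (cap : Gm g),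
    ∀ p ∈ (tripsOf g δ ys cap).dropLast, p.2.2 ∈ ys := by
  intro ys
  induction ys with
  | nil =>
    intro δ cap p hp
    simp [tripsOf] at hp
  | cons y ys ih =>
    intro δ cap p hp
    have hne := tripsOf_ne_nil g (-δ) ys cap
    rw [show tripsOf g δ (y :: ys) cap = (δ, 1, y) :: tripsOf g (-δ) ys cap from rfl] at hp
    rw [List.dropLast_cons_of_ne_nil hne] at hp
    rcases List.mem_cons.1 hp with h | h
    · subst h
      exact List.mem_cons_self
    · exact List.mem_cons_of_mem _ (ih (-δ) cap p h)

lemma tripsOf_prod (g : ℕ) (hg : 3 ≤ g) : ∀ (ys : List (Gm g)) (δ : ℤ) (cap : Gm g),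
    prodT (cycCompl (2*g+1)) (tv g (2*g-1)) (tripsOf g δ ys cap) =
      chainW g (2*g-1) δ ys cap := by
  intro ys
  induction ys with
  | nil =>
    intro δ cap
    show ((gen _ (tv g (2*g-1))) ^ δ * 1 * cap) * 1 = uW g (2*g-1) ^ δ * cap
    rw [uW_top, Xg_def]
    group
  | cons y ys ih =>
    intro δ cap
    show ((gen _ (tv g (2*g-1))) ^ δ * 1 * y) * prodT _ _ (tripsOf g (-δ) ys cap) =
      uW g (2*g-1) ^ δ * y * chainW g (2*g-1) (-δ) ys cap
    rw [ih (-δ) cap, uW_top, Xg_def]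
    group

lemma not_adj_succ {g j : ℕ} (hj : j + 1 ≤ 2*g) (hjm : j < 2*g+1) :
    ¬ (cycCompl (2*g+1)).Adj (tv g j) (tv g (j+1)) := by
  intro h
  have h2 := h.2.1
  rw [tv_val g j hjm, tv_val g (j+1) (by omega)] at h2
  exact h2 (Nat.mod_eq_of_lt (by omega))

lemma K_le_A_succ {g j : ℕ} (hj : j + 1 ≤ 2*g) (hjm : j < 2*g+1) :
    Ksub (cycCompl (2*g+1)) (tv g j) ≤ Asub (cycCompl (2*g+1)) (tv g (j+1)) := by
  apply SP_mono
  intro v hv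
  intro hc
  rw [Set.mem_singleton_iff] at hc
  subst hc
  exact not_adj_succ hj hjm hv

end CCL


section CCLmain

lemma Sp_subset_compl {g k : ℕ} (hk : k < 2*g+1) (h0 : k ≠ 0) (h1 : k ≠ 1) (h2g : k ≠ 2*g) :
    Sp g ⊆ ({tv g k}ᶜ : Set (Fin (2*g+1))) := by
  intro v hv hc
  rw [Set.mem_singleton_iff] at hc
  subst hc
  rw [Sp, Set.mem_setOf_eq, tv_val g k hk] at hv
  omega

lemma SQ_subset_compl {g k : ℕ} (hk : k < 2*g+1) (h0 : k ≠ 0) (h1 : k ≠ 1) (h2 : k ≠ 2)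
    (h2g : k ≠ 2*g) : SQ g ⊆ ({tv g k}ᶜ : Set (Fin (2*g+1))) := by
  intro v hv hc
  rw [Set.mem_singleton_iff] at hc
  subst hc
  rw [SQ, Set.mem_setOf_eq, tv_val g k hk] at hv
  omega

lemma memX_compl {g k i : ℕ} (hk : k < 2*g+1) (hik : i ≠ k) :
    memX g ({tv g k}ᶜ : Set (Fin (2*g+1))) i := by
  intro hi hc
  rw [Set.mem_singleton_iff] at hc
  have := congrArg Fin.val hc
  rw [tv_val g k hk] at this
  exact hik this

/-- y-slots do not lie in the link subgroup at the top vertex 2g-1 -/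
lemma ybad_not_in_K {g : ℕ} (hg : 3 ≤ g) {y : Gm g}
    (hy1 : y ∈ SP (cycCompl (2*g+1)) (Sp g)) (hy2 : y ∉ SP (cycCompl (2*g+1)) (S01 g)) :
    y ∉ Ksub (cycCompl (2*g+1)) (tv g (2*g-1)) := by
  intro hk
  apply hy2
  have hint := SP_inter hy1 hk
  refine SP_mono ?_ hint
  rintro v ⟨hv1, hv2⟩
  rw [Sp, Set.mem_setOf_eq] at hv1
  rcases hv1 with h | h | h
  · exact Or.inl h
  · exact Or.inr h
  · exfalso
    have hadj : (cycCompl (2*g+1)).Adj (tv g (2*g-1)) v := hv2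
    have h21 := hadj.2.1
    rw [tv_val g (2*g-1) (by omega)] at h21
    rw [show 2*g-1+1 = 2*g from by omega, Nat.mod_eq_of_lt (by omega)] at h21
    exact h21 h.symm

lemma CCL {g : ℕ} (hg : 3 ≤ g) :
    ∀ d, d ≤ 2*g-5 → ∀ (δ : ℤ), (δ = 1 ∨ δ = -1) → ∀ (ys : List (Gm g)) (cap : Gm g),
    (∀ y ∈ ys, y ∈ SP (cycCompl (2*g+1)) (Sp g) ∧ y ∉ SP (cycCompl (2*g+1)) (S01 g)) →
    cap ∈ SP (cycCompl (2*g+1)) (SQ g) →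
    chainW g (2*g-1-d) δ ys cap ∉ Asub (cycCompl (2*g+1)) (tv g (2*g-1-d)) := by
  intro d
  induction d with
  | zero =>
    intro _ δ hδ ys cap hys hcap
    rw [Nat.sub_zero]
    have hδ0 : δ ≠ 0 := by rcases hδ with rfl | rfl <;> omega
    have hval : ∀ p ∈ tripsOf g δ ys cap,
        p.1 ≠ 0 ∧ p.2.1 ∈ Ksub (cycCompl (2*g+1)) (tv g (2*g-1)) ∧
          p.2.2 ∈ Asub (cycCompl (2*g+1)) (tv g (2*g-1)) := by
      intro p hp
      obtain ⟨h1, h2, h3⟩ := tripsOf_val g ys δ cap p hp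
      refine ⟨by rcases h1 with h | h <;> omega, by rw [h2]; exact one_mem _, ?_⟩
      rcases h3 with h | h
      · exact SP_mono (Sp_subset_compl (by omega) (by omega) (by omega) (by omega))
          (hys _ h).1
      · rw [h]
        exact SP_mono (SQ_subset_compl (by omega) (by omega) (by omega) (by omega)
          (by omega)) hcap
    have hint : ∀ p ∈ (tripsOf g δ ys cap).dropLast,
        p.2.2 ∉ Ksub (cycCompl (2*g+1)) (tv g (2*g-1)) := by
      intro p hp
      have hmem := tripsOf_dropLast g ys δ cap p hp
      exact ybad_not_in_K hg (hys _ hmem).1 (hys _ hmem).2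
    have hGL := mainGL (cycCompl (2*g+1)) (tv g (2*g-1)) (one_mem _)
      (tripsOf g δ ys cap) (tripsOf_ne_nil g δ ys cap) hval hint
    rw [one_mul, tripsOf_prod g hg ys δ cap] at hGL
    exact hGL
  | succ d ih =>
    intro hd δ hδ ys cap hys hcap
    set J := 2*g-1-(d+1) with hJ
    have hJ4 : 4 ≤ J := by omega
    have hJ2 : J ≤ 2*g-2 := by omega
    have hshift := chainW_shift hg hJ4 hJ2 ys cap δ hδ
      (fun y hy => commute_Xj_Sp hg hJ4 hJ2 (hys y hy).1)
      (commute_Xj_SQ hg hJ4 hJ2 hcap)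
    set M := chainW g (J+1) δ ys cap with hM
    set δ' := lastSign δ ys.length with hδ'def
    have hδ'pm := lastSign_pm hδ ys.length
    have hMA : M ∈ Asub (cycCompl (2*g+1)) (tv g J) := by
      refine chainW_mem hg (by omega) (by omega)
        (fun i hi1 hi2 => memX_compl (by omega) (by omega)) ys cap δ ?_ ?_
      · intro y hy
        exact SP_mono (Sp_subset_compl (by omega) (by omega) (by omega) (by omega))
          (hys y hy).1
      · exact SP_mono (SQ_subset_compl (by omega) (by omega) (by omega) (by omega)
          (by omega)) hcap
    have hMK : M ∉ Ksub (cycCompl (2*g+1)) (tv g J) := by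
      intro hk
      have hIH := ih (by omega) δ hδ ys cap hys hcap
      rw [show 2*g-1-d = J+1 from by omega] at hIH
      exact hIH (K_le_A_succ (by omega) (by omega) hk)
    have hval : ∀ p ∈ [((-δ : ℤ), (1 : Gm g), M), ((-δ' : ℤ), (1 : Gm g), (1 : Gm g))],
        p.1 ≠ 0 ∧ p.2.1 ∈ Ksub (cycCompl (2*g+1)) (tv g J) ∧
          p.2.2 ∈ Asub (cycCompl (2*g+1)) (tv g J) := by
      intro p hp
      rcases List.mem_cons.1 hp with h | h
      · subst h
        exact ⟨by rcases hδ with rfl | rfl <;> omega, one_mem _, hMA⟩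
      · rw [List.mem_singleton] at h
        subst h
        exact ⟨by rcases hδ'pm with h | h <;> omega, one_mem _, one_mem _⟩
    have hint : ∀ p ∈ ([((-δ : ℤ), (1 : Gm g), M), ((-δ' : ℤ), (1 : Gm g), (1 : Gm g))]).dropLast,
        p.2.2 ∉ Ksub (cycCompl (2*g+1)) (tv g J) := by
      intro p hp
      rw [show ([((-δ : ℤ), (1 : Gm g), M), ((-δ' : ℤ), (1 : Gm g), (1 : Gm g))]).dropLast
        = [((-δ : ℤ), (1 : Gm g), M)] from rfl, List.mem_singleton] at hp
      subst hp
      exact hMK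
    have hGL := mainGL (cycCompl (2*g+1)) (tv g J) (one_mem _) _ (by simp) hval hint
    rw [one_mul] at hGL
    have hprod : prodT (cycCompl (2*g+1)) (tv g J)
        [((-δ : ℤ), (1 : Gm g), M), ((-δ' : ℤ), (1 : Gm g), (1 : Gm g))]
        = Xg g J ^ (-δ) * M * Xg g J ^ (-δ') := by
      rw [prodT]
      simp only [List.map_cons, List.map_nil, List.prod_cons, List.prod_nil]
      rw [← Xg_def]
      group
    rw [hprod] at hGL
    intro hmem
    rw [hshift] at hmem
    exact hGL hmem

/-- the chain lemma in usable form -/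
lemma CCL' {g j : ℕ} (hg : 3 ≤ g) (hj4 : 4 ≤ j) (hj : j ≤ 2*g-1) {δ : ℤ}
    (hδ : δ = 1 ∨ δ = -1) {ys : List (Gm g)} {cap : Gm g}
    (hys : ∀ y ∈ ys, y ∈ SP (cycCompl (2*g+1)) (Sp g) ∧ y ∉ SP (cycCompl (2*g+1)) (S01 g))
    (hcap : cap ∈ SP (cycCompl (2*g+1)) (SQ g)) :
    chainW g j δ ys cap ∉ Asub (cycCompl (2*g+1)) (tv g j) := by
  have := CCL hg (2*g-1-j) (by omega) δ hδ ys cap hys hcap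
  rwa [show 2*g-1-(2*g-1-j) = j from by omega] at this

end CCLmain


section Pentagon

/-- the pentagon RAAG -/
abbrev P5 := RAAG (cycCompl 5)

/-- pentagon generators, 0-based -/
noncomputable def Yp (k : ℕ) : P5 := gen (cycCompl 5) ⟨k % 5, by omega⟩

lemma Yp_eq (k : ℕ) (hk : k < 5) : Yp k = gen (cycCompl 5) ⟨k, hk⟩ := by
  unfold Yp; congr 1; exact Fin.ext (Nat.mod_eq_of_lt hk)

/-- pentagon adjacency from explicit data -/
lemma adjP {i j : ℕ} (hi : i < 5) (hj : j < 5) (hij : i ≠ j)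
    (h1 : (i+1) % 5 ≠ j) (h2 : (j+1) % 5 ≠ i) :
    (cycCompl 5).Adj ⟨i, hi⟩ ⟨j, hj⟩ :=
  ⟨fun h => hij (by simpa [Fin.ext_iff] using h), h1, h2⟩

lemma commP {i j : ℕ} (hi : i < 5) (hj : j < 5) (hij : i ≠ j)
    (h1 : (i+1) % 5 ≠ j) (h2 : (j+1) % 5 ≠ i) : Commute (Yp i) (Yp j) := by
  rw [Yp_eq i hi, Yp_eq j hj]
  exact comm_of_adj (adjP hi hj hij h1 h2)

/-- pentagon support sets -/
def Cp : Set (Fin 5) := {v | (v : ℕ) = 0 ∨ (v : ℕ) = 1}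
def SQp : Set (Fin 5) := {v | (v : ℕ) = 0 ∨ (v : ℕ) = 1 ∨ (v : ℕ) = 2 ∨ (v : ℕ) = 4}

/-- the pentagon subgroup generated by 0,1,2,4 (fixed points) -/
noncomputable def Qsub : Subgroup P5 := SP (cycCompl 5) SQp
/-- the pentagon subgroup generated by 0,1 -/
noncomputable def Csub : Subgroup P5 := SP (cycCompl 5) Cp

lemma Yp_mem_Qsub {k : ℕ} (h : k = 0 ∨ k = 1 ∨ k = 2 ∨ k = 4) : Yp k ∈ Qsub := by
  have hk : k < 5 := by omega
  rw [Yp_eq k hk]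
  apply gen_mem_SP
  show (k : ℕ) = 0 ∨ _ ∨ _ ∨ _
  simpa using h

/-- x_3 commutes with the subgroup on {0,1} -/
lemma xp_commute_Csub {q : P5} (hq : q ∈ Csub) : Commute (Yp 3) q := by
  refine commute_SP (fun v hv => ?_) hq
  rcases hv with h | h
  · have : v = ⟨0, by omega⟩ := Fin.ext (by simpa using h)
    rw [this, ← Yp_eq 0 (by omega)]
    exact commP (by omega) (by omega) (by omega) (by decide) (by decide)
  · have : v = ⟨1, by omega⟩ := Fin.ext (by simpa using h)
    rw [this, ← Yp_eq 1 (by omega)]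
    exact commP (by omega) (by omega) (by omega) (by decide) (by decide)

/-- source expression data -/
noncomputable def prodSrc (l : List (ℤ × P5)) : P5 :=
  (l.map fun p => Yp 3 ^ p.1 * p.2).prod

def pinchR (p q : ℤ × P5) : Prop := q.1 = -p.1 → p.2 ∉ Csub

def SrcRep (x : P5) : Prop :=
  ∃ (q0 : P5) (l : List (ℤ × P5)), q0 ∈ Qsub ∧
    (∀ p ∈ l, (p.1 = 1 ∨ p.1 = -1) ∧ p.2 ∈ Qsub) ∧
    List.Chain' pinchR l ∧ x = q0 * prodSrc l

lemma srcRep_one : SrcRep 1 := ⟨1, [], one_mem _, by simp, List.isChain_nil, by simp [prodSrc]⟩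

lemma srcRep_q {z x : P5} (hz : z ∈ Qsub) (hx : SrcRep x) : SrcRep (z * x) := by
  obtain ⟨q0, l, h0, h1, h2, h3⟩ := hx
  exact ⟨z * q0, l, mul_mem hz h0, h1, h2, by rw [h3, mul_assoc]⟩

lemma srcRep_x {ε : ℤ} (hε : ε = 1 ∨ ε = -1) {x : P5} (hx : SrcRep x) :
    SrcRep (Yp 3 ^ ε * x) := by
  obtain ⟨q0, l, h0, h1, h2, h3⟩ := hx
  cases l with
  | nil =>
    refine ⟨1, [(ε, q0)], one_mem _, ?_, ?_, ?_⟩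
    · intro p hp
      rw [List.mem_singleton] at hp
      subst hp
      exact ⟨hε, h0⟩
    · exact List.isChain_singleton _
    · rw [h3]
      simp [prodSrc]
  | cons p1 l' =>
    obtain ⟨ε₁, q₁⟩ := p1
    by_cases hq0 : q0 ∈ Csub
    · have hcomm : Yp 3 ^ ε * q0 = q0 * Yp 3 ^ ε := ((xp_commute_Csub hq0).zpow_left ε).eq
      by_cases hsig : ε₁ = -ε
      · -- cancellation
        refine ⟨q0 * q₁, l', mul_mem h0 (h1 _ (List.mem_cons_self)).2,
          fun p hp => h1 p (List.mem_cons_of_mem _ hp), List.IsChain.tail h2, ?_⟩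
        rw [h3]
        rw [show prodSrc ((ε₁, q₁) :: l') = Yp 3 ^ ε₁ * q₁ * prodSrc l' from by
          simp [prodSrc, mul_assoc]]
        rw [hsig]
        calc Yp 3 ^ ε * (q0 * (Yp 3 ^ (-ε) * q₁ * prodSrc l'))
            = q0 * (Yp 3 ^ ε * Yp 3 ^ (-ε)) * q₁ * prodSrc l' := by
              rw [← mul_assoc, hcomm]; group
          _ = q0 * q₁ * prodSrc l' := by
              rw [← zpow_add]; simp
      · -- same sign: insert trivial letter
        refine ⟨q0, (ε, 1) :: (ε₁, q₁) :: l', h0, ?_, ?_, ?_⟩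
        · intro p hp
          rcases List.mem_cons.1 hp with h | h
          · subst h; exact ⟨hε, one_mem _⟩
          · exact h1 p h
        · show List.IsChain _ _; rw [List.isChain_cons_cons]
          exact ⟨fun hc => absurd hc hsig, h2⟩
        · rw [h3]
          rw [show prodSrc ((ε, 1) :: (ε₁, q₁) :: l')
              = Yp 3 ^ ε * 1 * prodSrc ((ε₁, q₁) :: l') from by
            simp [prodSrc, mul_assoc]]
          rw [mul_one, ← mul_assoc, hcomm, mul_assoc]
    · refine ⟨1, (ε, q0) :: (ε₁, q₁) :: l', one_mem _, ?_, ?_, ?_⟩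
      · intro p hp
        rcases List.mem_cons.1 hp with h | h
        · subst h; exact ⟨hε, h0⟩
        · exact h1 p h
      · show List.IsChain _ _; rw [List.isChain_cons_cons]
        exact ⟨fun _ => hq0, h2⟩
      · rw [h3]
        rw [show prodSrc ((ε, q0) :: (ε₁, q₁) :: l')
            = Yp 3 ^ ε * q0 * prodSrc ((ε₁, q₁) :: l') from by
          simp [prodSrc, mul_assoc]]
        group

/-- every element of the pentagon group has a pinch-free expression -/
lemma srcRep_all (x : P5) : SrcRep x := by
  let Sset : Set P5 := {z | ∀ y, SrcRep y → SrcRep (z * y)}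
  have hmulS : ∀ a b, a ∈ Sset → b ∈ Sset → a * b ∈ Sset := by
    intro a b ha hb y hy
    rw [mul_assoc]
    exact ha _ (hb _ hy)
  let H : Subgroup P5 :=
    { carrier := {z | z ∈ Sset ∧ z⁻¹ ∈ Sset}
      one_mem' := ⟨fun y hy => by simpa using hy, fun y hy => by simpa using hy⟩
      mul_mem' := by
        rintro a b ⟨ha1, ha2⟩ ⟨hb1, hb2⟩
        refine ⟨hmulS a b ha1 hb1, ?_⟩
        rw [mul_inv_rev]
        exact hmulS _ _ hb2 ha2
      inv_mem' := by
        rintro a ⟨ha1, ha2⟩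
        exact ⟨ha2, by simpa using ha1⟩ }
  have hgen : ∀ v : Fin 5, gen (cycCompl 5) v ∈ H := by
    intro v
    have hv5 : (v : ℕ) < 5 := v.isLt
    by_cases h3 : (v : ℕ) = 3
    · have hv : gen (cycCompl 5) v = Yp 3 := by
        rw [Yp_eq 3 (by omega)]
        congr 1
        exact Fin.ext (by simp [h3])
      rw [hv]
      constructor
      · intro y hy
        have := srcRep_x (Or.inl rfl) hy
        simpa using this
      · intro y hy
        have := srcRep_x (Or.inr rfl) (x := y) hy
        simpa using this
    · have hv : gen (cycCompl 5) v ∈ Qsub := by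
        apply gen_mem_SP
        show (v : ℕ) = 0 ∨ (v : ℕ) = 1 ∨ (v : ℕ) = 2 ∨ (v : ℕ) = 4
        omega
      exact ⟨fun y hy => srcRep_q hv hy, fun y hy => srcRep_q (inv_mem hv) hy⟩
  have hx : x ∈ H := PresentedGroup.generated_by _ H hgen x
  have := hx.1 1 srcRep_one
  simpa using this

end Pentagon


section Phi

/-- the image word of the contracted generator -/
noncomputable def wWord (g : ℕ) : Gm g := Xg g 3 * uW g 4 * Xg g 3

lemma commute_low_uV {g : ℕ} (hg : 3 ≤ g) {i : ℕ} (hi : i ≤ 2) :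
    ∀ d, d ≤ 2*g-5 → Commute (Xg g i) (uV g d) := by
  intro d
  induction d with
  | zero =>
    intro hd
    show Commute _ (Xg g (2*g-1))
    exact commX (by omega) (by omega) (by omega) (by omega) (by omega) (by omega) (by omega)
  | succ d ih =>
    intro hd
    show Commute _ ((Xg g (2*g-2-d))⁻¹ * uV g d * (Xg g (2*g-2-d))⁻¹)
    have hx : Commute (Xg g i) (Xg g (2*g-2-d)) :=
      commX (by omega) (by omega) (by omega) (by omega) (by omega) (by omega) (by omega)
    exact ((hx.inv_right.mul_right (ih (by omega))).mul_right hx.inv_right)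

lemma commute_low_w {g : ℕ} (hg : 3 ≤ g) {i : ℕ} (hi : i ≤ 1) :
    Commute (Xg g i) (wWord g) := by
  have hx3 : Commute (Xg g i) (Xg g 3) :=
    commX (by omega) (by omega) (by omega) (by omega) (by omega) (by omega) (by omega)
  have hu : Commute (Xg g i) (uW g 4) := commute_low_uV hg (by omega : i ≤ 2) (2*g-1-4) (by omega)
  exact (hx3.mul_right hu).mul_right hx3

/-- generator images -/
noncomputable def fmap (g : ℕ) : Fin 5 → Gm g := fun i =>
  if (i : ℕ) = 0 then Xg g 0 else if (i : ℕ) = 1 then Xg g 1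
  else if (i : ℕ) = 2 then Xg g 2 else if (i : ℕ) = 3 then wWord g else Xg g (2*g)

lemma fmap_0 {g : ℕ} {v : Fin 5} (h : (v:ℕ) = 0) : fmap g v = Xg g 0 := by simp [fmap, h]
lemma fmap_1 {g : ℕ} {v : Fin 5} (h : (v:ℕ) = 1) : fmap g v = Xg g 1 := by simp [fmap, h]
lemma fmap_2 {g : ℕ} {v : Fin 5} (h : (v:ℕ) = 2) : fmap g v = Xg g 2 := by simp [fmap, h]
lemma fmap_3 {g : ℕ} {v : Fin 5} (h : (v:ℕ) = 3) : fmap g v = wWord g := by simp [fmap, h]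
lemma fmap_4 {g : ℕ} {v : Fin 5} (h : (v:ℕ) = 4) : fmap g v = Xg g (2*g) := by simp [fmap, h]

set_option maxHeartbeats 1000000 in
/-- the homomorphism φ -/
noncomputable def phiMap (g : ℕ) (hg : 3 ≤ g) : P5 →* Gm g :=
  liftGens (fmap g) (by
    intro u v huv
    have h1 : (u : ℕ) ≠ (v : ℕ) := fun h => huv.1 (Fin.ext h)
    have ha := huv.2.1
    have hb := huv.2.2
    have hu5 := u.isLt
    have hv5 := v.isLt
    have c02 : Commute (Xg g 0) (Xg g 2) :=
      commX (by omega) (by omega) (by omega) (by omega) (by omega) (by omega) (by omega)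
    have c0w : Commute (Xg g 0) (wWord g) := commute_low_w hg (by omega)
    have c1w : Commute (Xg g 1) (wWord g) := commute_low_w hg (by omega)
    have c1t : Commute (Xg g 1) (Xg g (2*g)) :=
      commX (by omega) (by omega) (by omega) (by omega) (by omega) (by omega) (by omega)
    have c2t : Commute (Xg g 2) (Xg g (2*g)) :=
      commX (by omega) (by omega) (by omega) (by omega) (by omega) (by omega) (by omega)
    have hc : ((u:ℕ) = 0 ∧ (v:ℕ) = 2) ∨ ((u:ℕ) = 2 ∧ (v:ℕ) = 0) ∨
        ((u:ℕ) = 0 ∧ (v:ℕ) = 3) ∨ ((u:ℕ) = 3 ∧ (v:ℕ) = 0) ∨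
        ((u:ℕ) = 1 ∧ (v:ℕ) = 3) ∨ ((u:ℕ) = 3 ∧ (v:ℕ) = 1) ∨
        ((u:ℕ) = 1 ∧ (v:ℕ) = 4) ∨ ((u:ℕ) = 4 ∧ (v:ℕ) = 1) ∨
        ((u:ℕ) = 2 ∧ (v:ℕ) = 4) ∨ ((u:ℕ) = 4 ∧ (v:ℕ) = 2) := by
      omega
    rcases hc with ⟨h', h''⟩ | ⟨h', h''⟩ | ⟨h', h''⟩ | ⟨h', h''⟩ | ⟨h', h''⟩ |
      ⟨h', h''⟩ | ⟨h', h''⟩ | ⟨h', h''⟩ | ⟨h', h''⟩ | ⟨h', h''⟩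
    · rw [fmap_0 h', fmap_2 h'']; exact c02
    · rw [fmap_2 h', fmap_0 h'']; exact c02.symm
    · rw [fmap_0 h', fmap_3 h'']; exact c0w
    · rw [fmap_3 h', fmap_0 h'']; exact c0w.symm
    · rw [fmap_1 h', fmap_3 h'']; exact c1w
    · rw [fmap_3 h', fmap_1 h'']; exact c1w.symm
    · rw [fmap_1 h', fmap_4 h'']; exact c1t
    · rw [fmap_4 h', fmap_1 h'']; exact c1t.symm
    · rw [fmap_2 h', fmap_4 h'']; exact c2t
    · rw [fmap_4 h', fmap_2 h'']; exact c2t.symm)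

lemma phiMap_gen (g : ℕ) (hg : 3 ≤ g) (v : Fin 5) :
    phiMap g hg (gen (cycCompl 5) v) = fmap g v := by
  rw [phiMap, liftGens_gen]

lemma phiMap_Yp0 (g : ℕ) (hg : 3 ≤ g) : phiMap g hg (Yp 0) = Xg g 0 := by
  rw [Yp_eq 0 (by omega), phiMap_gen]; exact fmap_0 rfl
lemma phiMap_Yp1 (g : ℕ) (hg : 3 ≤ g) : phiMap g hg (Yp 1) = Xg g 1 := by
  rw [Yp_eq 1 (by omega), phiMap_gen]; exact fmap_1 rfl
lemma phiMap_Yp2 (g : ℕ) (hg : 3 ≤ g) : phiMap g hg (Yp 2) = Xg g 2 := by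
  rw [Yp_eq 2 (by omega), phiMap_gen]; exact fmap_2 rfl
lemma phiMap_Yp3 (g : ℕ) (hg : 3 ≤ g) : phiMap g hg (Yp 3) = wWord g := by
  rw [Yp_eq 3 (by omega), phiMap_gen]; exact fmap_3 rfl
lemma phiMap_Yp4 (g : ℕ) (hg : 3 ≤ g) : phiMap g hg (Yp 4) = Xg g (2*g) := by
  rw [Yp_eq 4 (by omega), phiMap_gen]; exact fmap_4 rfl

/-- generator images for the retraction β -/
noncomputable def bmap (g : ℕ) : Fin (2*g+1) → P5 := fun v =>
  if (v : ℕ) = 0 then Yp 0 else if (v : ℕ) = 1 then Yp 1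
  else if (v : ℕ) = 2 then Yp 2 else if (v : ℕ) = 2*g then Yp 4 else 1

lemma bmap_0 {g : ℕ} {v : Fin (2*g+1)} (h : (v:ℕ) = 0) : bmap g v = Yp 0 := by
  simp [bmap, h]
lemma bmap_1 {g : ℕ} {v : Fin (2*g+1)} (h : (v:ℕ) = 1) : bmap g v = Yp 1 := by
  simp [bmap, h]
lemma bmap_2 {g : ℕ} {v : Fin (2*g+1)} (h : (v:ℕ) = 2) : bmap g v = Yp 2 := by
  simp [bmap, h]
lemma bmap_2g {g : ℕ} (hg : 3 ≤ g) {v : Fin (2*g+1)} (h : (v:ℕ) = 2*g) :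
    bmap g v = Yp 4 := by
  rw [show bmap g v = if (v : ℕ) = 0 then Yp 0 else if (v : ℕ) = 1 then Yp 1
    else if (v : ℕ) = 2 then Yp 2 else if (v : ℕ) = 2*g then Yp 4 else 1 from rfl,
    if_neg (by omega), if_neg (by omega), if_neg (by omega), if_pos h]
lemma bmap_other {g : ℕ} {v : Fin (2*g+1)} (h0 : (v:ℕ) ≠ 0) (h1 : (v:ℕ) ≠ 1)
    (h2 : (v:ℕ) ≠ 2) (h2g : (v:ℕ) ≠ 2*g) : bmap g v = 1 := by
  simp [bmap, h0, h1, h2, h2g]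

set_option maxHeartbeats 1000000 in
/-- the retraction β -/
noncomputable def betaMap (g : ℕ) (hg : 3 ≤ g) : Gm g →* P5 :=
  liftGens (bmap g) (by
    intro u v huv
    have h1 : (u : ℕ) ≠ (v : ℕ) := fun h => huv.1 (Fin.ext h)
    have ha := huv.2.1
    have hb := huv.2.2
    have hum := u.isLt
    have hvm := v.isLt
    have c02 : Commute (Yp 0) (Yp 2) :=
      commP (by omega) (by omega) (by omega) (by decide) (by decide)
    have c14 : Commute (Yp 1) (Yp 4) :=
      commP (by omega) (by omega) (by omega) (by decide) (by decide)
    have c24 : Commute (Yp 2) (Yp 4) :=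
      commP (by omega) (by omega) (by omega) (by decide) (by decide)
    by_cases hA : (u:ℕ) = 0 ∨ (u:ℕ) = 1 ∨ (u:ℕ) = 2 ∨ (u:ℕ) = 2*g
    · by_cases hB : (v:ℕ) = 0 ∨ (v:ℕ) = 1 ∨ (v:ℕ) = 2 ∨ (v:ℕ) = 2*g
      · rcases hA with h | h | h | h <;> rcases hB with h' | h' | h' | h'
        · omega
        · exact absurd (by rw [h, h']; exact Nat.mod_eq_of_lt (by omega)) ha
        · rw [bmap_0 h, bmap_2 h']; exact c02
        · exact absurd (by rw [h', h]; exact Nat.mod_self _) hb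
        · exact absurd (by rw [h, h']; exact Nat.mod_eq_of_lt (by omega)) hb
        · omega
        · exact absurd (by rw [h, h']; exact Nat.mod_eq_of_lt (by omega)) ha
        · rw [bmap_1 h, bmap_2g hg h']; exact c14
        · rw [bmap_2 h, bmap_0 h']; exact c02.symm
        · exact absurd (by rw [h', h]; exact Nat.mod_eq_of_lt (by omega)) hb
        · omega
        · rw [bmap_2 h, bmap_2g hg h']; exact c24
        · exact absurd (by rw [h, h']; exact Nat.mod_self _) ha
        · rw [bmap_2g hg h, bmap_1 h']; exact c14.symm
        · rw [bmap_2g hg h, bmap_2 h']; exact c24.symm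
        · omega
      · push_neg at hB
        rw [bmap_other hB.1 hB.2.1 hB.2.2.1 hB.2.2.2]
        exact Commute.one_right _
    · push_neg at hA
      rw [bmap_other hA.1 hA.2.1 hA.2.2.1 hA.2.2.2]
      exact Commute.one_left _)

lemma betaMap_X (g : ℕ) (hg : 3 ≤ g) (k : ℕ) :
    betaMap g hg (Xg g k) = bmap g (tv g k) := by
  rw [Xg_def, betaMap, liftGens_gen]

end Phi



section Transfer

variable (g : ℕ) (hg : 3 ≤ g)

lemma betaMap_uV : ∀ d, d ≤ 2*g-5 → betaMap g hg (uV g d) = 1 := by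
  intro d
  induction d with
  | zero =>
    intro hd
    show betaMap g hg (Xg g (2*g-1)) = 1
    rw [betaMap_X]
    exact bmap_other (by rw [tv_val g _ (by omega)]; omega)
      (by rw [tv_val g _ (by omega)]; omega) (by rw [tv_val g _ (by omega)]; omega)
      (by rw [tv_val g _ (by omega)]; omega)
  | succ d ih =>
    intro hd
    show betaMap g hg ((Xg g (2*g-2-d))⁻¹ * uV g d * (Xg g (2*g-2-d))⁻¹) = 1
    rw [map_mul, map_mul, map_inv, betaMap_X, ih (by omega),
      bmap_other (by rw [tv_val g _ (by omega)]; omega) (by rw [tv_val g _ (by omega)]; omega)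
        (by rw [tv_val g _ (by omega)]; omega) (by rw [tv_val g _ (by omega)]; omega)]
    simp

lemma betaMap_X3 : betaMap g hg (Xg g 3) = 1 := by
  rw [betaMap_X]
  exact bmap_other (by rw [tv_val g _ (by omega)]; omega)
    (by rw [tv_val g _ (by omega)]; omega) (by rw [tv_val g _ (by omega)]; omega)
    (by rw [tv_val g _ (by omega)]; omega)

lemma betaMap_w : betaMap g hg (wWord g) = 1 := by
  rw [wWord, map_mul, map_mul, betaMap_X3,
    show uW g 4 = uV g (2*g-1-4) from rfl, betaMap_uV g hg (2*g-1-4) (by omega)]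
  simp

lemma beta_phi_eq : (betaMap g hg).comp (phiMap g hg) = pi (cycCompl 5) SQp := by
  apply PresentedGroup.ext
  intro v
  show betaMap g hg (phiMap g hg (gen (cycCompl 5) v)) = pi (cycCompl 5) SQp (gen (cycCompl 5) v)
  rw [phiMap_gen, pi_gen]
  have hv5 := v.isLt
  have hc : (v:ℕ) = 0 ∨ (v:ℕ) = 1 ∨ (v:ℕ) = 2 ∨ (v:ℕ) = 3 ∨ (v:ℕ) = 4 := by omega
  rcases hc with h | h | h | h | h
  · rw [fmap_0 h, betaMap_X, bmap_0 (by rw [tv_val g _ (by omega)]),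
      if_pos (show v ∈ SQp from Or.inl h), Yp_eq 0 (by omega)]
    congr 1
    exact Fin.ext h.symm
  · rw [fmap_1 h, betaMap_X, bmap_1 (by rw [tv_val g _ (by omega)]),
      if_pos (show v ∈ SQp from Or.inr (Or.inl h)), Yp_eq 1 (by omega)]
    congr 1
    exact Fin.ext h.symm
  · rw [fmap_2 h, betaMap_X, bmap_2 (by rw [tv_val g _ (by omega)]),
      if_pos (show v ∈ SQp from Or.inr (Or.inr (Or.inl h))), Yp_eq 2 (by omega)]
    congr 1
    exact Fin.ext h.symm
  · rw [fmap_3 h, betaMap_w, if_neg (show v ∉ SQp from by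
      intro hc
      rcases hc with h' | h' | h' | h' <;> omega)]
  · rw [fmap_4 h, betaMap_X, bmap_2g hg (by rw [tv_val g _ (by omega)]),
      if_pos (show v ∈ SQp from Or.inr (Or.inr (Or.inr h))), Yp_eq 4 (by omega)]
    congr 1
    exact Fin.ext h.symm

lemma beta_phi (q : P5) (hq : q ∈ Qsub) : betaMap g hg (phiMap g hg q) = q := by
  have h1 : betaMap g hg (phiMap g hg q) = pi (cycCompl 5) SQp q :=
    DFunLike.congr_fun (beta_phi_eq g hg) q
  rw [h1]
  exact hq

lemma phi_inj_Q {q : P5} (hq : q ∈ Qsub) (h : phiMap g hg q = 1) : q = 1 := by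
  have := beta_phi g hg q hq
  rw [h, map_one] at this
  exact this.symm

lemma phi_mem_SQ {q : P5} (hq : q ∈ Qsub) :
    phiMap g hg q ∈ SP (cycCompl (2*g+1)) (SQ g) := by
  have hcomp : (pi (cycCompl (2*g+1)) (SQ g)).comp ((phiMap g hg).comp (pi (cycCompl 5) SQp))
      = (phiMap g hg).comp (pi (cycCompl 5) SQp) := by
    apply PresentedGroup.ext
    intro v
    show pi _ (SQ g) (phiMap g hg (pi _ SQp (gen (cycCompl 5) v)))
      = phiMap g hg (pi _ SQp (gen (cycCompl 5) v))
    rw [pi_gen]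
    have hv5 := v.isLt
    by_cases hv : v ∈ SQp
    · rw [if_pos hv, phiMap_gen]
      rcases hv with h | h | h | h
      · rw [fmap_0 h, Xg_eq g 0 (by omega), pi_gen, if_pos (show _ ∈ SQ g from Or.inl rfl)]
      · rw [fmap_1 h, Xg_eq g 1 (by omega), pi_gen,
          if_pos (show _ ∈ SQ g from Or.inr (Or.inl rfl))]
      · rw [fmap_2 h, Xg_eq g 2 (by omega), pi_gen,
          if_pos (show _ ∈ SQ g from Or.inr (Or.inr (Or.inl rfl)))]
      · rw [fmap_4 h, Xg_eq g (2*g) (by omega), pi_gen,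
          if_pos (show _ ∈ SQ g from Or.inr (Or.inr (Or.inr rfl)))]
    · rw [if_neg hv]
      simp
  have h1 : phiMap g hg q = phiMap g hg (pi (cycCompl 5) SQp q) := by rw [hq]
  rw [mem_SP_iff, h1]
  exact DFunLike.congr_fun hcomp q

lemma phi_S01_transfer {q : P5} (hq : q ∈ Qsub)
    (h : phiMap g hg q ∈ SP (cycCompl (2*g+1)) (S01 g)) : q ∈ Csub := by
  have hcomp : (pi (cycCompl 5) Cp).comp ((betaMap g hg).comp (pi (cycCompl (2*g+1)) (S01 g)))
      = (betaMap g hg).comp (pi (cycCompl (2*g+1)) (S01 g)) := by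
    apply PresentedGroup.ext
    intro v
    show pi _ Cp (betaMap g hg (pi _ (S01 g) (gen (cycCompl (2*g+1)) v)))
      = betaMap g hg (pi _ (S01 g) (gen (cycCompl (2*g+1)) v))
    rw [pi_gen]
    by_cases hv : v ∈ S01 g
    · rw [if_pos hv]
      rcases hv with h' | h'
      · rw [show gen (cycCompl (2*g+1)) v = Xg g 0 from by
          rw [Xg_eq g 0 (by omega)]; congr 1; exact Fin.ext h', betaMap_X,
          bmap_0 (by rw [tv_val g _ (by omega)]), Yp_eq 0 (by omega), pi_gen,
          if_pos (show _ ∈ Cp from Or.inl rfl)]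
      · rw [show gen (cycCompl (2*g+1)) v = Xg g 1 from by
          rw [Xg_eq g 1 (by omega)]; congr 1; exact Fin.ext h', betaMap_X,
          bmap_1 (by rw [tv_val g _ (by omega)]), Yp_eq 1 (by omega), pi_gen,
          if_pos (show _ ∈ Cp from Or.inr rfl)]
    · rw [if_neg hv]
      simp
  have key := DFunLike.congr_fun hcomp (phiMap g hg q)
  have h2' : pi (cycCompl (2*g+1)) (S01 g) (phiMap g hg q) = phiMap g hg q := h
  show pi (cycCompl 5) Cp q = q
  rw [show (pi (cycCompl 5) Cp) q
      = pi (cycCompl 5) Cp (betaMap g hg (phiMap g hg q)) from by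
    rw [beta_phi g hg q hq]]
  conv_rhs => rw [← beta_phi g hg q hq]
  rw [← h2']
  exact key

end Transfer


section Top

variable (g : ℕ) (hg : 3 ≤ g)

include hg

lemma T_commute_K4 {k : Gm g} (hk : k ∈ Ksub (cycCompl (2*g+1)) (tv g 3)) :
    Commute (Xg g 3) k := by
  rw [Xg_def]
  exact gen_t_commute_K _ _ hk

lemma K4_le_A5 : Ksub (cycCompl (2*g+1)) (tv g 3) ≤ SP (cycCompl (2*g+1)) ({tv g 4}ᶜ) :=
  K_le_A_succ (by omega) (by omega)

lemma expv4_uV : ∀ d, d ≤ 2*g-6 → expv (cycCompl (2*g+1)) (tv g 4) (uV g d) = 1 := by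
  intro d
  induction d with
  | zero =>
    intro hd
    show expv _ (tv g 4) (Xg g (2*g-1)) = 1
    rw [Xg_def, expv_gen, if_neg]
    intro hc
    have := congrArg Fin.val hc
    rw [tv_val g _ (by omega), tv_val g _ (by omega)] at this
    omega
  | succ d ih =>
    intro hd
    show expv _ (tv g 4) ((Xg g (2*g-2-d))⁻¹ * uV g d * (Xg g (2*g-2-d))⁻¹) = 1
    rw [map_mul, map_mul, map_inv, ih (by omega), Xg_def, expv_gen, if_neg]
    · simp
    · intro hc
      have := congrArg Fin.val hc
      rw [tv_val g _ (by omega), tv_val g _ (by omega)] at this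
      omega

lemma u4_not_K4 : uW g 4 ∉ Ksub (cycCompl (2*g+1)) (tv g 3) := by
  intro hk
  have hexp : expv (cycCompl (2*g+1)) (tv g 4) (uW g 4) = Multiplicative.ofAdd (-2 : ℤ) := by
    rw [show uW g 4 = uV g (2*g-1-4) from rfl, show 2*g-1-4 = (2*g-6)+1 from by omega]
    show expv _ (tv g 4) ((Xg g (2*g-2-(2*g-6)))⁻¹ * uV g (2*g-6) * (Xg g (2*g-2-(2*g-6)))⁻¹) = _
    rw [show 2*g-2-(2*g-6) = 4 from by omega, map_mul, map_mul, map_inv,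
      expv4_uV g hg (2*g-6) le_rfl, Xg_def, expv_gen, if_pos rfl]
    rw [mul_one]
    rw [← ofAdd_neg, ← ofAdd_add]
    norm_num
  have h1 : expv (cycCompl (2*g+1)) (tv g 4) (uW g 4) = 1 := by
    refine expv_eq_one_of_mem_SP (S := ({tv g 4}ᶜ : Set (Fin (2*g+1)))) (by simp) ?_
    exact K4_le_A5 g hg hk
  rw [h1] at hexp
  have := congrArg Multiplicative.toAdd hexp
  simp at this

lemma u4pow_not_K4 {ε : ℤ} (hε : ε = 1 ∨ ε = -1) :
    uW g 4 ^ ε ∉ Ksub (cycCompl (2*g+1)) (tv g 3) := by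
  rcases hε with rfl | rfl
  · rw [zpow_one]; exact u4_not_K4 g hg
  · rw [zpow_neg, zpow_one]
    intro hc
    exact u4_not_K4 g hg (by simpa using inv_mem hc)

lemma chain4_not_K4 {δ : ℤ} (hδ : δ = 1 ∨ δ = -1) {ys : List (Gm g)} {cap : Gm g}
    (hys : ∀ y ∈ ys, y ∈ SP (cycCompl (2*g+1)) (Sp g) ∧ y ∉ SP (cycCompl (2*g+1)) (S01 g))
    (hcap : cap ∈ SP (cycCompl (2*g+1)) (SQ g)) :
    chainW g 4 δ ys cap ∉ Ksub (cycCompl (2*g+1)) (tv g 3) := by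
  intro hk
  exact CCL' hg (by omega) (by omega) hδ hys hcap (K4_le_A5 g hg hk)

lemma chain4_mem_A4 {δ : ℤ} {ys : List (Gm g)} {cap : Gm g}
    (hys : ∀ y ∈ ys, y ∈ SP (cycCompl (2*g+1)) (Sp g))
    (hcap : cap ∈ SP (cycCompl (2*g+1)) (SQ g)) :
    chainW g 4 δ ys cap ∈ Asub (cycCompl (2*g+1)) (tv g 3) := by
  refine chainW_mem hg (by omega) (by omega)
    (fun i h1 h2 => memX_compl (by omega) (by omega)) ys cap δ ?_ ?_
  · intro y hy
    exact SP_mono (Sp_subset_compl (by omega) (by omega) (by omega) (by omega)) (hys y hy)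
  · exact SP_mono (SQ_subset_compl (by omega) (by omega) (by omega) (by omega) (by omega)) hcap

lemma SQ_meet_K4 {x : Gm g} (h1 : x ∈ SP (cycCompl (2*g+1)) (SQ g))
    (h2 : x ∈ Ksub (cycCompl (2*g+1)) (tv g 3)) : x ∈ SP (cycCompl (2*g+1)) (Sp g) := by
  have hi := SP_inter h1 h2
  refine SP_mono ?_ hi
  rintro v ⟨hv1, hv2⟩
  have hadj : (cycCompl (2*g+1)).Adj (tv g 3) v := hv2
  rcases hv1 with h | h | h | h
  · exact Or.inl h
  · exact Or.inr (Or.inl h)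
  · exfalso
    have h22 := hadj.2.2
    rw [tv_val g 3 (by omega), h] at h22
    exact h22 (Nat.mod_eq_of_lt (by omega))
  · exact Or.inr (Or.inr h)

lemma wpow {ε : ℤ} (hε : ε = 1 ∨ ε = -1) :
    wWord g ^ ε = Xg g 3 ^ ε * uW g 4 ^ ε * Xg g 3 ^ ε := by
  rcases hε with rfl | rfl
  · simp [wWord]
  · simp only [zpow_neg, zpow_one, wWord, mul_inv_rev]
    group

/-- image products -/
noncomputable def prodIm (l : List (ℤ × P5)) : Gm g :=
  (l.map fun p => wWord g ^ p.1 * phiMap g hg p.2).prod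

lemma phi_prodSrc : ∀ l : List (ℤ × P5), phiMap g hg (prodSrc l) = prodIm g hg l := by
  intro l
  induction l with
  | nil => simp [prodSrc, prodIm]
  | cons p l ih =>
    obtain ⟨ε, q⟩ := p
    show phiMap g hg ((Yp 3 ^ ε * q) * prodSrc l) = _
    rw [map_mul, map_mul, map_zpow, phiMap_Yp3, ih]
    show _ = (wWord g ^ ε * phiMap g hg q) * prodIm g hg l
    rw [prodIm]

end Top


section Alg

variable {H : Type*} [Group H]

lemma prodT_cons (Γ' : SimpleGraph V) (t : V) (p : ℤ × RAAG Γ' × RAAG Γ')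
    (rest : List (ℤ × RAAG Γ' × RAAG Γ')) :
    prodT Γ' t (p :: rest) = (gen Γ' t ^ p.1 * p.2.1 * p.2.2) * prodT Γ' t rest := by
  rw [prodT, List.map_cons, List.prod_cons, ← prodT]

lemma alg_merge (T u Y C P : H) (ε : ℤ) (hc : Commute T Y) :
    (T^ε * 1 * (u * Y * C)) * P = (T^ε * u * T^ε * Y) * ((T^(-ε) * 1 * C) * P) := by
  have h := (hc.zpow_left ε).eq
  simp only [mul_one, one_mul]
  rw [mul_assoc (T^ε * u) (T^ε) Y, h]
  group

lemma alg_grow (T u Y C P : H) (ε ε₁ : ℤ) (hc : Commute T Y) :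
    (T^ε * 1 * (u * 1)) * ((T^(ε+ε₁) * Y * C) * P)
      = (T^ε * u * T^ε * Y) * ((T^ε₁ * 1 * C) * P) := by
  have h1 := (hc.zpow_left (ε+ε₁)).eq
  have h2 := (hc.zpow_left ε).eq
  simp only [mul_one, one_mul]
  rw [h1, mul_assoc (T^ε * u) (T^ε) Y, h2]
  group

lemma alg_sep (T u Y P : H) (ε : ℤ) :
    (T^ε * 1 * (u * 1)) * ((T^ε * 1 * Y) * P) = (T^ε * u * T^ε * Y) * P := by
  simp only [mul_one, one_mul]
  group

lemma alg_base1 (T u Y : H) (ε : ℤ) :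
    (T^ε * 1 * (u * 1)) * ((T^ε * Y * 1) * 1) = T^ε * u * T^ε * Y := by
  simp only [mul_one, one_mul]
  group

lemma alg_base2 (T u Y : H) (ε : ℤ) :
    (T^ε * 1 * (u * 1)) * ((T^ε * 1 * Y) * 1) = T^ε * u * T^ε * Y := by
  simp only [mul_one, one_mul]
  group

end Alg

section Grand

variable (g : ℕ) (hg : 3 ≤ g)

lemma prodIm_cons (p : ℤ × P5) (l : List (ℤ × P5)) :
    prodIm g hg (p :: l) = (wWord g ^ p.1 * phiMap g hg p.2) * prodIm g hg l := by
  rw [prodIm, List.map_cons, List.prod_cons, ← prodIm]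

lemma prodIm_single (p : ℤ × P5) :
    prodIm g hg [p] = wWord g ^ p.1 * phiMap g hg p.2 := by
  rw [prodIm_cons, prodIm]
  simp

include hg

lemma Y_mem_A4 {q : P5} (hq : q ∈ Qsub) :
    phiMap g hg q ∈ Asub (cycCompl (2*g+1)) (tv g 3) :=
  SP_mono (SQ_subset_compl (by omega) (by omega) (by omega) (by omega) (by omega))
    (phi_mem_SQ g hg hq)

lemma Fmain : ∀ (l' : List (ℤ × P5)) (ε : ℤ) (q : P5),
    (ε = 1 ∨ ε = -1) → q ∈ Qsub →
    (∀ p ∈ l', (p.1 = 1 ∨ p.1 = -1) ∧ p.2 ∈ Qsub) →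
    List.Chain' pinchR ((ε, q) :: l') →
    ∃ (trips rest : List (ℤ × Gm g × Gm g)) (ys : List (Gm g)) (cap : Gm g),
      trips = (ε, 1, chainW g 4 ε ys cap) :: rest ∧
      (∀ y ∈ ys, y ∈ SP (cycCompl (2*g+1)) (Sp g) ∧ y ∉ SP (cycCompl (2*g+1)) (S01 g)) ∧
      cap ∈ SP (cycCompl (2*g+1)) (SQ g) ∧
      (∀ p ∈ trips, p.1 ≠ 0 ∧ p.2.1 ∈ Ksub (cycCompl (2*g+1)) (tv g 3) ∧
        p.2.2 ∈ Asub (cycCompl (2*g+1)) (tv g 3)) ∧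
      (∀ p ∈ trips.dropLast, p.2.2 ∉ Ksub (cycCompl (2*g+1)) (tv g 3)) ∧
      prodT (cycCompl (2*g+1)) (tv g 3) trips = prodIm g hg ((ε, q) :: l') := by
  intro l'
  induction l' with
  | nil =>
    intro ε q hε hq _ _
    have hε0 : ε ≠ 0 := by rcases hε with rfl | rfl <;> omega
    have hchA : chainW g 4 ε [] 1 ∈ Asub (cycCompl (2*g+1)) (tv g 3) :=
      chain4_mem_A4 g hg (by simp) (one_mem _)
    have hchK : chainW g 4 ε [] 1 ∉ Ksub (cycCompl (2*g+1)) (tv g 3) :=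
      chain4_not_K4 g hg hε (by simp) (one_mem _)
    by_cases hK : phiMap g hg q ∈ Ksub (cycCompl (2*g+1)) (tv g 3)
    · refine ⟨[(ε, 1, chainW g 4 ε [] 1), (ε, phiMap g hg q, 1)],
        [(ε, phiMap g hg q, 1)], [], 1, rfl, by simp, one_mem _, ?_, ?_, ?_⟩
      · intro p hp
        rcases List.mem_cons.1 hp with h | h
        · subst h
          exact ⟨hε0, one_mem _, hchA⟩
        · rw [List.mem_singleton] at h
          subst h
          exact ⟨hε0, hK, one_mem _⟩
      · intro p hp
        rw [show ([(ε, 1, chainW g 4 ε [] 1), ((ε : ℤ), phiMap g hg q, (1 : Gm g))]).dropLast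
          = [(ε, 1, chainW g 4 ε [] 1)] from rfl, List.mem_singleton] at hp
        subst hp
        exact hchK
      · rw [prodT_cons, prodT_cons, prodT, List.map_nil, List.prod_nil,
          prodIm_single, wpow g hg hε, ← Xg_def]
        exact alg_base1 _ _ _ ε
    · refine ⟨[(ε, 1, chainW g 4 ε [] 1), (ε, 1, phiMap g hg q)],
        [(ε, 1, phiMap g hg q)], [], 1, rfl, by simp, one_mem _, ?_, ?_, ?_⟩
      · intro p hp
        rcases List.mem_cons.1 hp with h | h
        · subst h
          exact ⟨hε0, one_mem _, hchA⟩
        · rw [List.mem_singleton] at h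
          subst h
          exact ⟨hε0, one_mem _, Y_mem_A4 g hg hq⟩
      · intro p hp
        rw [show ([(ε, 1, chainW g 4 ε [] 1), ((ε : ℤ), (1 : Gm g), phiMap g hg q)]).dropLast
          = [(ε, 1, chainW g 4 ε [] 1)] from rfl, List.mem_singleton] at hp
        subst hp
        exact hchK
      · rw [prodT_cons, prodT_cons, prodT, List.map_nil, List.prod_nil,
          prodIm_single, wpow g hg hε, ← Xg_def]
        exact alg_base2 _ _ _ ε
  | cons p1 l'' ih =>
    obtain ⟨ε₁, q₁⟩ := p1
    intro ε q hε hq hents hchain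
    have hε0 : ε ≠ 0 := by rcases hε with rfl | rfl <;> omega
    have hent1 := hents _ (List.mem_cons_self)
    have hents'' : ∀ p ∈ l'', (p.1 = 1 ∨ p.1 = -1) ∧ p.2 ∈ Qsub :=
      fun p hp => hents p (List.mem_cons_of_mem _ hp)
    have hchain' : List.Chain' pinchR ((ε₁, q₁) :: l'') := List.IsChain.tail hchain
    have hpinch : ε₁ = -ε → q ∉ Csub := (List.isChain_cons_cons.1 hchain).1
    obtain ⟨trips', rest', ys, cap, htrips', hys, hcap, hval', hint', hprod'⟩ :=
      ih ε₁ q₁ hent1.1 hent1.2 hents'' hchain'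
    have hchA : chainW g 4 ε [] 1 ∈ Asub (cycCompl (2*g+1)) (tv g 3) :=
      chain4_mem_A4 g hg (by simp) (one_mem _)
    have hchK : chainW g 4 ε [] 1 ∉ Ksub (cycCompl (2*g+1)) (tv g 3) :=
      chain4_not_K4 g hg hε (by simp) (one_mem _)
    have hchOldK : chainW g 4 ε₁ ys cap ∉ Ksub (cycCompl (2*g+1)) (tv g 3) :=
      chain4_not_K4 g hg hent1.1 hys hcap
    have hvrest : ∀ p ∈ rest', p.1 ≠ 0 ∧ p.2.1 ∈ Ksub (cycCompl (2*g+1)) (tv g 3) ∧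
        p.2.2 ∈ Asub (cycCompl (2*g+1)) (tv g 3) := by
      intro p hp
      exact hval' p (by rw [htrips']; exact List.mem_cons_of_mem _ hp)
    by_cases hK : phiMap g hg q ∈ Ksub (cycCompl (2*g+1)) (tv g 3)
    · have hYSp : phiMap g hg q ∈ SP (cycCompl (2*g+1)) (Sp g) :=
        SQ_meet_K4 g hg (phi_mem_SQ g hg hq) hK
      have hcm : Commute (Xg g 3) (phiMap g hg q) := T_commute_K4 g hg hK
      by_cases hsig : ε₁ = -ε
      · -- merge into chain
        have hqC : q ∉ Csub := hpinch hsig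
        have hYS01 : phiMap g hg q ∉ SP (cycCompl (2*g+1)) (S01 g) := by
          intro hS
          exact hqC (phi_S01_transfer g hg hq hS)
        have hysnew : ∀ y ∈ (phiMap g hg q :: ys), y ∈ SP (cycCompl (2*g+1)) (Sp g) ∧
            y ∉ SP (cycCompl (2*g+1)) (S01 g) := by
          intro y hy
          rcases List.mem_cons.1 hy with h | h
          · subst h; exact ⟨hYSp, hYS01⟩
          · exact hys y h
        have hchNewA : chainW g 4 ε (phiMap g hg q :: ys) cap ∈
            Asub (cycCompl (2*g+1)) (tv g 3) :=
          chain4_mem_A4 g hg (fun y hy => (hysnew y hy).1) hcap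
        have hchNewK : chainW g 4 ε (phiMap g hg q :: ys) cap ∉
            Ksub (cycCompl (2*g+1)) (tv g 3) :=
          chain4_not_K4 g hg hε hysnew hcap
        refine ⟨(ε, 1, chainW g 4 ε (phiMap g hg q :: ys) cap) :: rest', rest',
          phiMap g hg q :: ys, cap, rfl, hysnew, hcap, ?_, ?_, ?_⟩
        · intro p hp
          rcases List.mem_cons.1 hp with h | h
          · subst h
            exact ⟨hε0, one_mem _, hchNewA⟩
          · exact hvrest p h
        · intro p hp
          cases rest' with
          | nil => simp at hp
          | cons r rs =>
            rw [List.dropLast_cons_of_ne_nil (by simp)] at hp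
            rcases List.mem_cons.1 hp with h | h
            · subst h
              exact hchNewK
            · refine hint' p ?_
              rw [htrips', List.dropLast_cons_of_ne_nil (by simp)]
              exact List.mem_cons_of_mem _ h
        · rw [prodT_cons, prodIm_cons, ← hprod', htrips', prodT_cons, wpow g hg hε,
            hsig, ← Xg_def]
          exact alg_merge (Xg g 3) (uW g 4 ^ ε) (phiMap g hg q)
            (chainW g 4 (-ε) ys cap) (prodT (cycCompl (2*g+1)) (tv g 3) rest') ε hcm
      · -- same-sign: grow the exponent
        have hsum : ε + ε₁ ≠ 0 := by
          rcases hε with rfl | rfl <;> rcases hent1.1 with h | h <;> omega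
        have hchOldA : chainW g 4 ε₁ ys cap ∈ Asub (cycCompl (2*g+1)) (tv g 3) :=
          chain4_mem_A4 g hg (fun y hy => (hys y hy).1) hcap
        refine ⟨(ε, 1, chainW g 4 ε [] 1) :: (ε + ε₁, phiMap g hg q, chainW g 4 ε₁ ys cap)
          :: rest', _, [], 1, rfl, by simp, one_mem _, ?_, ?_, ?_⟩
        · intro p hp
          rcases List.mem_cons.1 hp with h | h
          · subst h; exact ⟨hε0, one_mem _, hchA⟩
          rcases List.mem_cons.1 h with h' | h'
          · subst h'; exact ⟨hsum, hK, hchOldA⟩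
          · exact hvrest p h'
        · intro p hp
          rw [List.dropLast_cons_of_ne_nil (by simp)] at hp
          rcases List.mem_cons.1 hp with h | h
          · subst h; exact hchK
          cases rest' with
          | nil => simp at h
          | cons r rs =>
            rw [List.dropLast_cons_of_ne_nil (by simp)] at h
            rcases List.mem_cons.1 h with h' | h'
            · subst h'; exact hchOldK
            · refine hint' p ?_
              rw [htrips', List.dropLast_cons_of_ne_nil (by simp)]
              exact List.mem_cons_of_mem _ h'
        · rw [prodT_cons, prodT_cons, prodIm_cons, ← hprod', htrips', prodT_cons,
            wpow g hg hε, ← Xg_def]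
          rw [show chainW g 4 ε ([] : List (Gm g)) 1 = uW g 4 ^ ε * 1 from rfl]
          exact alg_grow (Xg g 3) (uW g 4 ^ ε) (phiMap g hg q)
            (chainW g 4 ε₁ ys cap) (prodT (cycCompl (2*g+1)) (tv g 3) rest') ε ε₁ hcm
    · -- q-image survives as its own letter
      have hYK : phiMap g hg q ∉ Ksub (cycCompl (2*g+1)) (tv g 3) := hK
      refine ⟨(ε, 1, chainW g 4 ε [] 1) :: (ε, 1, phiMap g hg q) :: trips', _, [], 1,
        rfl, by simp, one_mem _, ?_, ?_, ?_⟩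
      · intro p hp
        rcases List.mem_cons.1 hp with h | h
        · subst h; exact ⟨hε0, one_mem _, hchA⟩
        rcases List.mem_cons.1 h with h' | h'
        · subst h'; exact ⟨hε0, one_mem _, Y_mem_A4 g hg hq⟩
        · exact hval' p h'
      · intro p hp
        have htne : trips' ≠ [] := by rw [htrips']; simp
        rw [List.dropLast_cons_of_ne_nil (by simp)] at hp
        rcases List.mem_cons.1 hp with h | h
        · subst h; exact hchK
        rw [List.dropLast_cons_of_ne_nil htne] at h
        rcases List.mem_cons.1 h with h' | h'
        · subst h'; exact hYK
        · exact hint' p h'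
      · rw [prodT_cons, prodT_cons, prodIm_cons, ← hprod', wpow g hg hε, ← Xg_def]
        rw [show chainW g 4 ε ([] : List (Gm g)) 1 = uW g 4 ^ ε * 1 from rfl]
        exact alg_sep (Xg g 3) (uW g 4 ^ ε) (phiMap g hg q)
          (prodT (cycCompl (2*g+1)) (tv g 3) trips') ε

end Grand


section Final

variable (g : ℕ) (hg : 3 ≤ g)

include hg

lemma phi_injective : Function.Injective (phiMap g hg) := by
  rw [injective_iff_map_eq_one]
  intro x hx
  obtain ⟨q0, l, h0, h1, h2, h3⟩ := srcRep_all x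
  cases l with
  | nil =>
    have hx0 : x = q0 := by rw [h3, prodSrc]; simp
    subst hx0
    exact phi_inj_Q g hg h0 hx
  | cons p1 l' =>
    obtain ⟨ε₁, q₁⟩ := p1
    have hent1 := h1 _ (List.mem_cons_self)
    obtain ⟨trips, rest, ys, cap, htr, hys, hcap, hval, hint, hprod⟩ :=
      Fmain g hg l' ε₁ q₁ hent1.1 hent1.2
        (fun p hp => h1 p (List.mem_cons_of_mem _ hp)) h2
    have hxe : phiMap g hg x = phiMap g hg q0 * prodT (cycCompl (2*g+1)) (tv g 3) trips := by
      rw [h3, map_mul, phi_prodSrc, hprod]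
    have hne : trips ≠ [] := by rw [htr]; simp
    have hnot := mainGL (cycCompl (2*g+1)) (tv g 3) (Y_mem_A4 g hg h0) trips hne hval hint
    rw [← hxe, hx] at hnot
    exact absurd (one_mem _) hnot

lemma uV_prod_form : ∀ d, d ≤ 2*g-5 →
    uV g d = ((List.range d).map fun t => (Xg g (2*g-1-d+t))⁻¹).prod * Xg g (2*g-1) *
      ((List.range d).map fun t => (Xg g (2*g-2-t))⁻¹).prod := by
  intro d
  induction d with
  | zero =>
    intro _
    show Xg g (2*g-1) = _
    simp
  | succ d ih =>
    intro hd
    show (Xg g (2*g-2-d))⁻¹ * uV g d * (Xg g (2*g-2-d))⁻¹ = _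
    rw [ih (by omega)]
    have hfirst : ((List.range (d+1)).map fun t => (Xg g (2*g-1-(d+1)+t))⁻¹).prod
        = (Xg g (2*g-2-d))⁻¹ * ((List.range d).map fun t => (Xg g (2*g-1-d+t))⁻¹).prod := by
      rw [List.range_succ_eq_map, List.map_cons, List.prod_cons, List.map_map]
      congr 1
      · show (Xg g (2*g-1-(d+1)+0))⁻¹ = (Xg g (2*g-2-d))⁻¹
        rw [show 2*g-1-(d+1)+0 = 2*g-2-d from by omega]
      · congr 1
        apply List.map_congr_left
        intro t _
        show (Xg g (2*g-1-(d+1)+(t+1)))⁻¹ = (Xg g (2*g-1-d+t))⁻¹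
        rw [show 2*g-1-(d+1)+(t+1) = 2*g-1-d+t from by omega]
    have hsecond : ((List.range (d+1)).map fun t => (Xg g (2*g-2-t))⁻¹).prod
        = ((List.range d).map fun t => (Xg g (2*g-2-t))⁻¹).prod * (Xg g (2*g-2-d))⁻¹ := by
      rw [List.range_succ, List.map_append, List.prod_append]
      simp
    rw [hfirst, hsecond]
    group

end Final

end Raag

open Raag

/-- For g ≥ 3, with w = v_4 (v_5⁻¹ v_6⁻¹ ⋯ v_{2g-1}⁻¹) v_{2g} (v_{2g-1}⁻¹ ⋯ v_6⁻¹ v_5⁻¹) v_4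
in A(C̄_{2g+1}), the map v_1 ↦ v_1, v_2 ↦ v_2, v_3 ↦ v_3, v_4 ↦ w, v_5 ↦ v_{2g+1} defines an
injective homomorphism A(C̄_5) → A(C̄_{2g+1}). -/
theorem raag_C5bar_embeds (g : ℕ) (hg : 3 ≤ g) :
    ∃ φ : RAAG (cycCompl 5) →* RAAG (cycCompl (2 * g + 1)),
      Function.Injective φ ∧
      φ (vgen 5 1) = vgen (2 * g + 1) 1 ∧
      φ (vgen 5 2) = vgen (2 * g + 1) 2 ∧
      φ (vgen 5 3) = vgen (2 * g + 1) 3 ∧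
      φ (vgen 5 4) =
        vgen (2 * g + 1) 4 *
          (((List.range (2 * g - 5)).map fun t => (vgen (2 * g + 1) (5 + t))⁻¹).prod) *
          vgen (2 * g + 1) (2 * g) *
          (((List.range (2 * g - 5)).map fun t => (vgen (2 * g + 1) (2 * g - 1 - t))⁻¹).prod) *
          vgen (2 * g + 1) 4 ∧
      φ (vgen 5 5) = vgen (2 * g + 1) (2 * g + 1) := by
  have hv51 : vgen 5 1 = Yp 0 := by
    rw [Yp_eq 0 (by omega)]
    simp only [vgen]
    rw [dif_pos (show 1-1 < 5 by omega)]
    rfl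
  have hv52 : vgen 5 2 = Yp 1 := by
    rw [Yp_eq 1 (by omega)]
    simp only [vgen]
    rw [dif_pos (show 2-1 < 5 by omega)]
    rfl
  have hv53 : vgen 5 3 = Yp 2 := by
    rw [Yp_eq 2 (by omega)]
    simp only [vgen]
    rw [dif_pos (show 3-1 < 5 by omega)]
    rfl
  have hv54 : vgen 5 4 = Yp 3 := by
    rw [Yp_eq 3 (by omega)]
    simp only [vgen]
    rw [dif_pos (show 4-1 < 5 by omega)]
    rfl
  have hv55 : vgen 5 5 = Yp 4 := by
    rw [Yp_eq 4 (by omega)]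
    simp only [vgen]
    rw [dif_pos (show 5-1 < 5 by omega)]
    rfl
  have hg1 : vgen (2*g+1) 1 = Xg g 0 := by
    rw [Xg_eq g 0 (by omega)]
    simp only [vgen]
    rw [dif_pos (show 1-1 < 2*g+1 by omega)]
    rfl
  have hg2 : vgen (2*g+1) 2 = Xg g 1 := by
    rw [Xg_eq g 1 (by omega)]
    simp only [vgen]
    rw [dif_pos (show 2-1 < 2*g+1 by omega)]
    rfl
  have hg3 : vgen (2*g+1) 3 = Xg g 2 := by
    rw [Xg_eq g 2 (by omega)]
    simp only [vgen]
    rw [dif_pos (show 3-1 < 2*g+1 by omega)]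
    rfl
  have hg4 : vgen (2*g+1) 4 = Xg g 3 := by
    rw [Xg_eq g 3 (by omega)]
    simp only [vgen]
    rw [dif_pos (show 4-1 < 2*g+1 by omega)]
    rfl
  have hg2g : vgen (2*g+1) (2*g) = Xg g (2*g-1) := by
    rw [Xg_eq g (2*g-1) (by omega)]
    simp only [vgen]
    rw [dif_pos (show 2*g-1 < 2*g+1 by omega)]
    rfl
  have hg2g1 : vgen (2*g+1) (2*g+1) = Xg g (2*g) := by
    rw [Xg_eq g (2*g) (by omega)]
    simp only [vgen]
    rw [dif_pos (show 2*g+1-1 < 2*g+1 by omega)]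
    show PresentedGroup.of _ = PresentedGroup.of _
    congr 1
    all_goals exact Fin.ext (show 2*g+1-1 = 2*g by omega)
  refine ⟨phiMap g hg, phi_injective g hg, ?_, ?_, ?_, ?_, ?_⟩
  · rw [hv51, phiMap_Yp0, hg1]
  · rw [hv52, phiMap_Yp1, hg2]
  · rw [hv53, phiMap_Yp2, hg3]
  · rw [hv54, phiMap_Yp3]
    have hP1 : ((List.range (2*g-5)).map fun t => (vgen (2*g+1) (5+t))⁻¹)
        = ((List.range (2*g-5)).map fun t => (Xg g (4+t))⁻¹) := by
      apply List.map_congr_left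
      intro t ht
      rw [List.mem_range] at ht
      congr 1
      rw [Xg_eq g (4+t) (by omega)]
      simp only [vgen]
      rw [dif_pos (show 5+t-1 < 2*g+1 by omega)]
      show PresentedGroup.of _ = PresentedGroup.of _
      congr 1
      exact Fin.ext (show 5+t-1 = 4+t by omega)
    have hP2 : ((List.range (2*g-5)).map fun t => (vgen (2*g+1) (2*g-1-t))⁻¹)
        = ((List.range (2*g-5)).map fun t => (Xg g (2*g-2-t))⁻¹) := by
      apply List.map_congr_left
      intro t ht
      rw [List.mem_range] at ht
      congr 1
      rw [Xg_eq g (2*g-2-t) (by omega)]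
      simp only [vgen]
      rw [dif_pos (show 2*g-1-t-1 < 2*g+1 by omega)]
      show PresentedGroup.of _ = PresentedGroup.of _
      congr 1
      exact Fin.ext (show 2*g-1-t-1 = 2*g-2-t by omega)
    rw [hg4, hg2g, hP1, hP2, wWord]
    have huw : uW g 4 = ((List.range (2*g-5)).map fun t => (Xg g (4+t))⁻¹).prod *
        Xg g (2*g-1) * ((List.range (2*g-5)).map fun t => (Xg g (2*g-2-t))⁻¹).prod := by
      rw [show uW g 4 = uV g (2*g-1-4) from rfl, show 2*g-1-4 = 2*g-5 from by omega,
        uV_prod_form g hg (2*g-5) le_rfl]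
      congr 2
      congr 1
      apply List.map_congr_left
      intro t ht
      congr 2
      omega
    rw [huw]
    group
  · rw [hv55, phiMap_Yp4, hg2g1]
end

section
/- For every g ≥ 2, the genus-g surface group Π_g has trivial center. -/
open scoped commutatorElement

/-- The single surface-group relator [a_1,b_1]⋯[a_h,b_h], with a_i = inl i and b_i = inr i. -/
def surfaceRels (h : ℕ) : Set (FreeGroup (Fin h ⊕ Fin h)) :=
  {(List.ofFn fun i : Fin h =>
      ⁅(FreeGroup.of (Sum.inl i) : FreeGroup (Fin h ⊕ Fin h)), FreeGroup.of (Sum.inr i)⁆).prod}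

/-- The genus-h surface group Π_h. -/
abbrev SurfaceGroup (h : ℕ) : Type _ := PresentedGroup (surfaceRels h)

namespace SGAux

/-- shift automorphism of `ℤ → ℤ` -/
def shiftAdd : (ℤ → ℤ) ≃+ (ℤ → ℤ) where
  toFun f := fun k => f (k + 1)
  invFun f := fun k => f (k - 1)
  left_inv f := funext fun k => by norm_num
  right_inv f := funext fun k => by norm_num
  map_add' _ _ := rfl

abbrev LN := Multiplicative (ℤ → ℤ)

def σ : MulAut LN := AddEquiv.toMultiplicative shiftAdd

def Lact : Multiplicative ℤ →* MulAut LN := zpowersHom _ σ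

abbrev Lamp := SemidirectProduct LN (Multiplicative ℤ) Lact

def LX : Lamp := SemidirectProduct.inr (Multiplicative.ofAdd 1)

def δ : ℤ → ℤ := fun k => if k = 0 then 1 else 0

def LY : Lamp := SemidirectProduct.inl (Multiplicative.ofAdd δ)

lemma Lact_one : Lact (Multiplicative.ofAdd 1) = σ := by
  simp [Lact]

lemma comm_LX_LY : ⁅LX, LY⁆ = SemidirectProduct.inl
    (Multiplicative.ofAdd (fun k => δ (k + 1) - δ k)) := by
  rw [commutatorElement_def]
  rw [show LX * LY * LX⁻¹ = SemidirectProduct.inl (Lact (Multiplicative.ofAdd 1)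
        (Multiplicative.ofAdd δ)) from (SemidirectProduct.inl_aut _ _).symm]
  rw [Lact_one]
  rw [show LY⁻¹ = SemidirectProduct.inl (Multiplicative.ofAdd δ)⁻¹ from (map_inv _ _).symm]
  rw [← map_mul]
  rfl

lemma comm_pow (n : ℤ) : ⁅LX, LY⁆ ^ n = SemidirectProduct.inl
    (Multiplicative.ofAdd (fun k => n * (δ (k + 1) - δ k))) := by
  rw [comm_LX_LY, ← map_zpow, ← ofAdd_zsmul]
  rfl

lemma comm_pow_eq_one {n : ℤ} (h : ⁅LX, LY⁆ ^ n = 1) : n = 0 := by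
  rw [comm_pow] at h
  have h2 := congrArg SemidirectProduct.left h
  simp only [SemidirectProduct.left_inl, show SemidirectProduct.left (1 : Lamp) = 1 from rfl] at h2
  have := congrFun (congrArg Multiplicative.toAdd h2) (-1)
  simp [δ] at this
  exact this

lemma comm_pow_comm {n : ℤ} (h : ⁅LX, LY⁆ ^ n * LX = LX * ⁅LX, LY⁆ ^ n) : n = 0 := by
  have h' : LX * ⁅LX, LY⁆ ^ n * LX⁻¹ = ⁅LX, LY⁆ ^ n := by
    rw [← h]; group
  rw [comm_pow] at h'
  rw [show LX * SemidirectProduct.inl (Multiplicative.ofAdd fun k => n * (δ (k + 1) - δ k)) * LX⁻¹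
      = SemidirectProduct.inl (Lact (Multiplicative.ofAdd 1)
        (Multiplicative.ofAdd fun k => n * (δ (k + 1) - δ k))) from
    (SemidirectProduct.inl_aut _ _).symm] at h'
  have h2 := congrArg SemidirectProduct.left h'
  simp only [SemidirectProduct.left_inl] at h2
  have := congrFun (congrArg Multiplicative.toAdd h2) (-2)
  rw [Lact_one] at this
  simp [σ, shiftAdd, δ] at this
  exact this

end SGAux

namespace SGAux
open Multiplicative

abbrev A : Type := FreeGroup Bool

def cA : A := ⁅FreeGroup.of true, FreeGroup.of false⁆

def LA : A →* Lamp := FreeGroup.lift (fun b => cond b LX LY)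

lemma LA_cA : LA cA = ⁅LX, LY⁆ := by
  rw [cA, map_commutatorElement]
  simp [LA]

lemma cA_pow_eq_one {n : ℤ} (h : cA ^ n = 1) : n = 0 := by
  apply comm_pow_eq_one (n := n)
  rw [← LA_cA, ← map_zpow, h, map_one]

lemma cA_pow_comm {n : ℤ} (h : cA ^ n * FreeGroup.of true = FreeGroup.of true * cA ^ n) :
    n = 0 := by
  apply comm_pow_comm (n := n)
  have := congrArg LA h
  rw [map_mul, map_mul, map_zpow] at this
  rw [LA_cA] at this
  simpa [LA] using this

variable (k : ℕ)

abbrev B : Type := FreeGroup (Fin (k+1) ⊕ Fin (k+1))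

def cB : B k :=
  ((List.ofFn fun i : Fin (k+1) =>
    ⁅(FreeGroup.of (Sum.inl i) : B k), FreeGroup.of (Sum.inr i)⁆).prod)⁻¹

def LB : B k →* Lamp :=
  FreeGroup.lift (Sum.elim (fun i => if i = 0 then LX else 1) (fun i => if i = 0 then LY else 1))

lemma LB_cB : LB k (cB k) = ⁅LX, LY⁆⁻¹ := by
  rw [cB, map_inv]
  congr 1
  rw [map_list_prod, List.map_ofFn, List.ofFn_succ]
  simp only [Function.comp]
  rw [List.prod_cons]
  have h1 : ∀ x ∈ (List.ofFn fun i : Fin k =>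
      (LB k) ⁅(FreeGroup.of (Sum.inl i.succ) : B k), FreeGroup.of (Sum.inr i.succ)⁆), x = 1 := by
    intro x hx
    rw [List.mem_ofFn] at hx
    obtain ⟨i, rfl⟩ := hx
    show (LB k) ⁅_, _⁆ = 1
    rw [map_commutatorElement]
    simp [LB, Fin.succ_ne_zero]
  rw [List.prod_eq_one h1, mul_one, map_commutatorElement]
  simp [LB]

lemma cB_pow_eq_one {n : ℤ} (h : (cB k) ^ n = 1) : n = 0 := by
  have : (⁅LX, LY⁆⁻¹) ^ n = 1 := by
    rw [← LB_cB, ← map_zpow, h, map_one]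
  rw [inv_zpow, ← zpow_neg] at this
  have := comm_pow_eq_one this
  omega

def abA : A →* Multiplicative ℤ := FreeGroup.lift (fun b => ofAdd (cond b 1 2 : ℤ))

def abB : B k →* Multiplicative ℤ :=
  FreeGroup.lift (Sum.elim (fun _ => ofAdd (1:ℤ)) (fun _ => ofAdd (2:ℤ)))

lemma abA_cA : abA cA = 1 := by
  rw [cA, map_commutatorElement]
  exact commutatorElement_eq_one_iff_commute.mpr (Commute.all _ _)

lemma abB_cB : abB k (cB k) = 1 := by
  rw [cB, map_inv, inv_eq_one, map_list_prod]
  apply List.prod_eq_one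
  intro x hx
  rw [List.map_ofFn, List.mem_ofFn] at hx
  obtain ⟨i, rfl⟩ := hx
  show (abB k) ⁅_, _⁆ = 1
  rw [map_commutatorElement]
  exact commutatorElement_eq_one_iff_commute.mpr (Commute.all _ _)

end SGAux

namespace SGAux
open Multiplicative Monoid Monoid.PushoutI Monoid.PushoutI.NormalWord Monoid.CoprodI Function

variable (k : ℕ)

abbrev Gf : Bool → Type := fun b => cond b A (B k)

instance instGf : ∀ b, Group (Gf k b) := fun b => by cases b <;> exact FreeGroup.instGroup

def cc : ∀ b, Gf k b
  | true => cA
  | false => cB k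

def ab : ∀ b, Gf k b →* Multiplicative ℤ
  | true => abA
  | false => abB k

def xx : ∀ b, Gf k b
  | true => FreeGroup.of true
  | false => FreeGroup.of (Sum.inl 0)

def yy : ∀ b, Gf k b
  | true => FreeGroup.of false
  | false => FreeGroup.of (Sum.inr 0)

lemma ab_cc (b : Bool) : ab k b (cc k b) = 1 := by
  cases b
  · exact abB_cB k
  · exact abA_cA

lemma ab_xx (b : Bool) : ab k b (xx k b) = ofAdd 1 := by
  cases b <;> simp [ab, xx, abA, abB]

lemma ab_yy (b : Bool) : ab k b (yy k b) = ofAdd 2 := by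
  cases b <;> simp [ab, yy, abA, abB]

lemma cc_pow_eq_one {b : Bool} {n : ℤ} (h : cc k b ^ n = 1) : n = 0 := by
  cases b
  · exact cB_pow_eq_one k h
  · exact cA_pow_eq_one h

def φf : ∀ b, Multiplicative ℤ →* Gf k b := fun b => zpowersHom _ (cc k b)

lemma hinj : ∀ b, Injective (φf k b) := by
  intro b m m' h
  simp only [φf, zpowersHom_apply] at h
  have h2 : cc k b ^ (m.toAdd - m'.toAdd) = 1 := by
    rw [zpow_sub, h, mul_inv_cancel]
  have h3 := cc_pow_eq_one k h2
  have : m.toAdd = m'.toAdd := by omega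
  exact toAdd.injective this

abbrev P := PushoutI (φf k)

lemma mem_range_ab {b : Bool} {w : Gf k b} (hw : w ∈ (φf k b).range) : ab k b w = 1 := by
  obtain ⟨m, rfl⟩ := hw
  simp only [φf, zpowersHom_apply, map_zpow, ab_cc, one_zpow]

lemma not_mem_range {b : Bool} {w : Gf k b} (hw : ab k b w ≠ 1) : w ∉ (φf k b).range :=
  fun h => hw (mem_range_ab k h)

lemma ne_one_of_ab {b : Bool} {w : Gf k b} (hw : ab k b w ≠ 1) : w ≠ 1 := by
  rintro rfl
  exact hw (map_one _)

/-- product of a list of letters in the pushout -/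
def pp (l : List (Σ b, Gf k b)) : P k := (l.map fun p => of (φ := φf k) p.1 p.2).prod

lemma ofCoprodI_eq_pp (u : Word (Gf k)) : ofCoprodI u.prod = pp k u.toList := by
  rw [Word.prod, map_list_prod, List.map_map, pp]
  exact congrArg (fun f => (List.map f u.toList).prod) (funext fun q => ofCoprodI_of q.1 q.2)

lemma pp_cons (x : Σ b, Gf k b) (l : List (Σ b, Gf k b)) :
    pp k (x :: l) = of (φ := φf k) x.1 x.2 * pp k l := by
  simp [pp]

lemma pp_append (l l' : List (Σ b, Gf k b)) :
    pp k (l ++ l') = pp k l * pp k l' := by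
  simp [pp]

lemma pp_nil : pp k [] = 1 := rfl

lemma pp_singleton (x : Σ b, Gf k b) : pp k [x] = of (φ := φf k) x.1 x.2 := by
  simp [pp]

lemma idx_unique {h₁ h₂ : Multiplicative ℤ} {u₁ u₂ : Word (Gf k)}
    (hr₁ : Reduced (φf k) u₁) (hr₂ : Reduced (φf k) u₂)
    (heq : base (φf k) h₁ * ofCoprodI u₁.prod = base (φf k) h₂ * ofCoprodI u₂.prod) :
    u₁.toList.map Sigma.fst = u₂.toList.map Sigma.fst := by
  classical
  obtain ⟨d⟩ := transversal_nonempty (φf k) (hinj k)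
  obtain ⟨w₁, hw₁, hm₁⟩ := hr₁.exists_normalWord_prod_eq d
  obtain ⟨w₂, hw₂, hm₂⟩ := hr₂.exists_normalWord_prod_eq d
  have hsm : (h₁ • w₁) = (h₂ • w₂) := by
    apply prod_injective
    rw [prod_base_smul, prod_base_smul, hw₁, hw₂]
    exact heq
  have hl : w₁.toWord = w₂.toWord := by
    have := congrArg (fun w : NormalWord d => w.toWord) hsm
    simpa [base_smul_def'] using this
  rw [← hm₁, ← hm₂, hl]

lemma set_inter {d : Transversal (φf k)} {b : Bool} {t : Gf k b}
    (hset : t ∈ d.set b) (hrange : t ∈ (φf k b).range) : t = 1 := by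
  have h := (d.compl b).existsUnique t
  have h1 := h.unique (y₁ := (⟨⟨t, hrange⟩, ⟨1, d.one_mem b⟩⟩ : (φf k b).range × d.set b))
    (y₂ := (⟨⟨1, Subgroup.one_mem _⟩, ⟨t, hset⟩⟩ : (φf k b).range × d.set b))
    (by simp) (by simp)
  have := congrArg (fun p => (p.1 : Gf k b)) h1
  simpa using this

lemma exists_rep (z : P k) : ∃ (h : Multiplicative ℤ) (u : Word (Gf k)),
    Reduced (φf k) u ∧ z = base (φf k) h * ofCoprodI u.prod := by
  classical
  obtain ⟨d⟩ := transversal_nonempty (φf k) (hinj k)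
  set w : NormalWord d := equiv z with hw
  have h2 : w.prod = z := (equiv (d := d)).symm_apply_apply z
  refine ⟨w.head, w.toWord, ?_, h2.symm.trans rfl⟩
  rintro ⟨b, t⟩ hmem hrange
  have hset := w.normalized b t hmem
  exact w.toWord.ne_one _ hmem (set_inter k hset hrange)


lemma mZ_ne_one {m : Multiplicative ℤ} (hm : m.toAdd ≠ 0) : m ≠ 1 := by
  intro h
  rw [h] at hm
  exact hm rfl

lemma rep_extend {z : P k} (hz : ∀ t : P k, t * z = z * t)
    {h : Multiplicative ℤ} {u : Word (Gf k)} (hred : Reduced (φf k) u)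
    (hrep : z = base (φf k) h * ofCoprodI u.prod)
    (w' : Word (Gf k)) (hred' : Reduced (φf k) w')
    {j : Bool} (g : Gf k j)
    (hprod : pp k w'.toList = of (φ := φf k) j g * z * (of (φ := φf k) j g)⁻¹)
    (hlen : w'.toList.length ≠ u.toList.length) : False := by
  have hc : of (φ := φf k) j g * z * (of (φ := φf k) j g)⁻¹ = z := by
    rw [hz (of (φ := φf k) j g), mul_inv_cancel_right]
  have h1 : base (φf k) 1 * ofCoprodI w'.prod = base (φf k) h * ofCoprodI u.prod := by
    rw [map_one, one_mul, ofCoprodI_eq_pp, hprod, hc, hrep]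
  have h2 := idx_unique k hred' hred h1
  have h3 := congrArg List.length h2
  simp only [List.length_map] at h3
  exact hlen h3

lemma center_triv (z : P k) (hz : z ∈ Subgroup.center (P k)) : z = 1 := by
  have hzc : ∀ t : P k, t * z = z * t := fun t => (Subgroup.mem_center_iff.mp hz) t
  obtain ⟨h, u, hred, hrep⟩ := exists_rep k z
  rcases hL : u.toList with _ | ⟨p, l'⟩
  · -- empty word : z = base h
    have hz1 : z = base (φf k) h := by
      rw [hrep, Word.prod, hL]
      simp
    have hcomm := hzc (of (φ := φf k) true (xx k true))
    rw [hz1, ← of_apply_eq_base (φf k) true h, ← map_mul, ← map_mul] at hcomm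
    have h2 := of_injective (hinj k) true hcomm
    have h3 : cA ^ h.toAdd * FreeGroup.of true = FreeGroup.of true * cA ^ h.toAdd := by
      have : φf k true h = cA ^ h.toAdd := by
        simp only [φf, zpowersHom_apply]; rfl
      rw [this] at h2
      exact h2.symm
    have h4 := cA_pow_comm h3
    have h5 : h = 1 := by
      apply toAdd.injective
      simpa using h4
    rw [hz1, h5, map_one]
  · -- nonempty word : contradiction
    exfalso
    have hne : u.toList ≠ [] := by rw [hL]; simp
    set last := u.toList.getLast hne with hlast
    by_cases hj : p.1 = last.1
    · -- conjugate by a letter in the other factor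
      set j := !p.1 with hjdef
      have hj1 : j ≠ p.1 := Bool.not_ne_self p.1
      have hj2 : j ≠ last.1 := by rw [← hj]; exact hj1
      set g : Gf k j := xx k j with hgdef
      have habg : ab k j g = ofAdd 1 := ab_xx k j
      set g' : Gf k j := g * φf k j h with hg'def
      have habg' : ab k j g' = ofAdd 1 := by
        rw [hg'def, map_mul, habg, mem_range_ab k ⟨h, rfl⟩, mul_one]
      have hg'r : g' ∉ (φf k j).range := not_mem_range k (by rw [habg']; exact mZ_ne_one (by simp))
      have hgr : g ∉ (φf k j).range := not_mem_range k (by rw [habg]; exact mZ_ne_one (by simp))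
      have hg'1 : g' ≠ 1 := ne_one_of_ab k (by rw [habg']; exact mZ_ne_one (by simp))
      have hg1 : g ≠ 1 := ne_one_of_ab k (by rw [habg]; exact mZ_ne_one (by simp))
      set nl : List (Σ b, Gf k b) := ⟨j, g'⟩ :: (u.toList ++ [⟨j, g⁻¹⟩]) with hnl
      have hw'chain : nl.IsChain (fun l l' => l.1 ≠ l'.1) := by
        rw [hnl, List.isChain_cons]
        constructor
        · intro q hq
          rw [hL] at hq
          simp only [List.cons_append, List.head?_cons, Option.mem_some_iff] at hq
          subst hq
          exact hj1
        · rw [List.isChain_append]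
          refine ⟨u.chain_ne, List.isChain_singleton _, ?_⟩
          intro x hx y hy
          rw [List.getLast?_eq_getLast hne, Option.mem_some_iff] at hx
          simp only [List.head?_cons, Option.mem_some_iff] at hy
          subst hx; subst hy
          rw [← hlast]
          exact fun hc => hj2 hc.symm
      have hw'ne : ∀ l ∈ nl, Sigma.snd l ≠ 1 := by
        intro q hq
        rw [hnl] at hq
        rcases List.mem_cons.mp hq with rfl | hq
        · exact hg'1
        · rcases List.mem_append.mp hq with hq | hq
          · exact u.ne_one q hq
          · simp only [List.mem_singleton] at hq
            subst hq
            simpa using hg1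
      set w' : Word (Gf k) := ⟨nl, hw'ne, hw'chain⟩ with hw'
      have hred' : Reduced (φf k) w' := by
        intro q hq
        rcases List.mem_cons.mp hq with rfl | hq
        · exact hg'r
        · rcases List.mem_append.mp hq with hq | hq
          · exact hred q hq
          · simp only [List.mem_singleton] at hq
            subst hq
            simpa using hgr
      refine rep_extend k hzc hred hrep w' hred' g ?_ ?_
      · show pp k nl = _
        rw [hnl, pp_cons, pp_append, pp_singleton]
        show of (φ := φf k) j g' * (pp k u.toList * of (φ := φf k) j g⁻¹) = _
        rw [hg'def, map_mul, of_apply_eq_base (φf k) j h, map_inv, hrep, ofCoprodI_eq_pp]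
        simp [mul_assoc]
      · show nl.length ≠ u.toList.length
        rw [hnl]
        simp only [List.length_cons, List.length_append, List.length_singleton]
        omega
    · -- conjugate by a letter in the same factor as the first letter
      set j := p.1 with hjdef
      have hlq : u.toList.getLast? = some last := List.getLast?_eq_getLast hne
      rcases hl' : l' with _ | ⟨p₂, l''⟩
      · exfalso
        apply hj
        rw [hL, hl'] at hlq
        simp only [List.getLast?_singleton, Option.some.injEq] at hlq
        rw [← hlq]
      have hLL : u.toList = p :: p₂ :: l'' := by rw [hL, hl']
      have hlq2 : (p₂ :: l'').getLast? = some last := by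
        rw [hLL] at hlq
        rwa [List.getLast?_cons_cons] at hlq
      have hchain := u.chain_ne
      rw [hLL, List.isChain_cons_cons] at hchain
      obtain ⟨g, hg1, hg2⟩ : ∃ g : Gf k j, ab k j g ≠ 1 ∧ ab k j g * ab k j p.2 ≠ 1 := by
        by_cases hc : (1 : ℤ) + (ab k j p.2).toAdd = 0
        · refine ⟨yy k j, ?_, ?_⟩
          · rw [ab_yy]; exact mZ_ne_one (by simp)
          · rw [ab_yy]
            apply mZ_ne_one
            simp only [toAdd_mul, toAdd_ofAdd]
            omega
        · refine ⟨xx k j, ?_, ?_⟩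
          · rw [ab_xx]; exact mZ_ne_one (by simp)
          · rw [ab_xx]
            apply mZ_ne_one
            simp only [toAdd_mul, toAdd_ofAdd]
            omega
      set g'' : Gf k j := g * φf k j h * p.2 with hg''def
      have habg'' : ab k j g'' ≠ 1 := by
        rw [hg''def, map_mul, map_mul, mem_range_ab k ⟨h, rfl⟩, mul_one]
        exact hg2
      have hg''r : g'' ∉ (φf k j).range := not_mem_range k habg''
      have hg''1 : g'' ≠ 1 := ne_one_of_ab k habg''
      have hgr : g ∉ (φf k j).range := not_mem_range k hg1
      have hgne1 : g ≠ 1 := ne_one_of_ab k hg1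
      set nl : List (Σ b, Gf k b) := ⟨j, g''⟩ :: ((p₂ :: l'') ++ [⟨j, g⁻¹⟩]) with hnl
      have hw'chain : nl.IsChain (fun l l' => l.1 ≠ l'.1) := by
        rw [hnl, List.isChain_cons]
        constructor
        · intro q hq
          simp only [List.cons_append, List.head?_cons, Option.mem_some_iff] at hq
          subst hq
          exact fun hc => hchain.1 hc
        · rw [List.isChain_append]
          refine ⟨hchain.2, List.isChain_singleton _, ?_⟩
          intro x hx y hy
          rw [Option.mem_def, hlq2, Option.some.injEq] at hx
          simp only [List.head?_cons, Option.mem_some_iff] at hy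
          subst hx; subst hy
          exact fun hc => hj hc.symm
      have hmem_tail : ∀ q ∈ (p₂ :: l''), q ∈ u.toList := by
        intro q hq
        rw [hLL]
        exact List.mem_cons_of_mem _ hq
      have hw'ne : ∀ l ∈ nl, Sigma.snd l ≠ 1 := by
        intro q hq
        rcases List.mem_cons.mp hq with rfl | hq
        · exact hg''1
        · rcases List.mem_append.mp hq with hq | hq
          · exact u.ne_one q (hmem_tail q hq)
          · simp only [List.mem_singleton] at hq
            subst hq
            simpa using hgne1
      set w' : Word (Gf k) := ⟨nl, hw'ne, hw'chain⟩ with hw'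
      have hred' : Reduced (φf k) w' := by
        intro q hq
        rcases List.mem_cons.mp hq with rfl | hq
        · exact hg''r
        · rcases List.mem_append.mp hq with hq | hq
          · exact hred q (hmem_tail q hq)
          · simp only [List.mem_singleton] at hq
            subst hq
            simpa using hgr
      refine rep_extend k hzc hred hrep w' hred' g ?_ ?_
      · show pp k nl = _
        rw [hnl, pp_cons, pp_append, pp_singleton]
        show of (φ := φf k) j g'' * (pp k (p₂ :: l'') * of (φ := φf k) j g⁻¹) = _
        rw [hg''def, map_mul, map_mul, of_apply_eq_base (φf k) j h, map_inv, hrep,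
          ofCoprodI_eq_pp, hLL]
        simp [pp, mul_assoc]
        rfl
      · show nl.length ≠ u.toList.length
        rw [hnl, hLL]
        simp


def aGen (i : Fin (k+2)) : SurfaceGroup (k+2) := PresentedGroup.of (Sum.inl i)

def bGen (i : Fin (k+2)) : SurfaceGroup (k+2) := PresentedGroup.of (Sum.inr i)

def F : Fin (k+2) ⊕ Fin (k+2) → P k :=
  Sum.elim
    (fun i => Fin.cases (of (φ := φf k) true (FreeGroup.of true))
       (fun i' => of (φ := φf k) false (FreeGroup.of (Sum.inl i'))) i)
    (fun i => Fin.cases (of (φ := φf k) true (FreeGroup.of false))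
       (fun i' => of (φ := φf k) false (FreeGroup.of (Sum.inr i'))) i)

lemma of_true_cA : of (φ := φf k) true cA = base (φf k) (ofAdd 1) := by
  have h : φf k true (ofAdd 1) = cA := by
    simp only [φf, zpowersHom_apply, toAdd_ofAdd, zpow_one]
    rfl
  rw [← of_apply_eq_base (φf k) true, h]

lemma of_false_cB : of (φ := φf k) false (cB k) = base (φf k) (ofAdd 1) := by
  have h : φf k false (ofAdd 1) = cB k := by
    simp only [φf, zpowersHom_apply, toAdd_ofAdd, zpow_one]
    rfl
  rw [← of_apply_eq_base (φf k) false, h]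

lemma lift_F_rel : ∀ r ∈ surfaceRels (k+2), FreeGroup.lift (F k) r = 1 := by
  intro r hr
  rw [surfaceRels, Set.mem_singleton_iff] at hr
  subst hr
  rw [map_list_prod, List.map_ofFn]
  have h1 : (⇑(FreeGroup.lift (F k)) ∘ fun i : Fin (k+2) =>
      ⁅(FreeGroup.of (Sum.inl i) : FreeGroup (Fin (k+2) ⊕ Fin (k+2))), FreeGroup.of (Sum.inr i)⁆)
      = fun i : Fin (k+2) => ⁅F k (Sum.inl i), F k (Sum.inr i)⁆ := by
    funext i
    show FreeGroup.lift (F k) ⁅_, _⁆ = _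
    rw [map_commutatorElement]
    simp only [FreeGroup.lift_apply_of]
  rw [h1, List.ofFn_succ, List.prod_cons]
  have h2 : ⁅F k (Sum.inl 0), F k (Sum.inr 0)⁆ = base (φf k) (ofAdd 1) := by
    show ⁅of (φ := φf k) true (FreeGroup.of true), of (φ := φf k) true (FreeGroup.of false)⁆ = _
    rw [← map_commutatorElement]
    exact of_true_cA k
  have h3 : (List.ofFn fun i : Fin (k+1) => ⁅F k (Sum.inl i.succ), F k (Sum.inr i.succ)⁆).prod
      = (base (φf k) (ofAdd 1))⁻¹ := by
    have h4 : of (φ := φf k) false ((cB k)⁻¹)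
        = (List.ofFn fun i : Fin (k+1) => ⁅F k (Sum.inl i.succ), F k (Sum.inr i.succ)⁆).prod := by
      rw [cB, inv_inv, map_list_prod, List.map_ofFn]
      refine congrArg List.prod (congrArg List.ofFn (funext fun i => ?_))
      show PushoutI.of (φ := φf k) false ((⁅FreeGroup.of (Sum.inl i), FreeGroup.of (Sum.inr i)⁆ : B k)) = _
      rw [map_commutatorElement]
      simp [F]
    rw [← h4, map_inv, of_false_cB]
  rw [h2, h3, mul_inv_cancel]

def Φ : SurfaceGroup (k+2) →* P k := PresentedGroup.toGroup (lift_F_rel k)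

def fT : A →* SurfaceGroup (k+2) :=
  FreeGroup.lift (fun b => cond b (aGen k 0) (bGen k 0))

def fF : B k →* SurfaceGroup (k+2) :=
  FreeGroup.lift (Sum.elim (fun i => aGen k i.succ) (fun i => bGen k i.succ))

def fhom : ∀ b, Gf k b →* SurfaceGroup (k+2)
  | true => fT k
  | false => fF k

lemma rel_SG : (List.ofFn fun i : Fin (k+2) => ⁅aGen k i, bGen k i⁆).prod = 1 := by
  have hmem : (List.ofFn fun i : Fin (k+2) =>
      ⁅(FreeGroup.of (Sum.inl i) : FreeGroup (Fin (k+2) ⊕ Fin (k+2))), FreeGroup.of (Sum.inr i)⁆).prod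
      ∈ Subgroup.normalClosure (surfaceRels (k+2)) :=
    Subgroup.subset_normalClosure rfl
  have h0 : PresentedGroup.mk (surfaceRels (k+2)) (List.ofFn fun i : Fin (k+2) =>
      ⁅(FreeGroup.of (Sum.inl i) : FreeGroup (Fin (k+2) ⊕ Fin (k+2))), FreeGroup.of (Sum.inr i)⁆).prod
      = 1 := (QuotientGroup.eq_one_iff _).mpr hmem
  rw [map_list_prod, List.map_ofFn] at h0
  have h1 : (⇑(PresentedGroup.mk (surfaceRels (k+2))) ∘ fun i : Fin (k+2) =>
      ⁅(FreeGroup.of (Sum.inl i) : FreeGroup (Fin (k+2) ⊕ Fin (k+2))), FreeGroup.of (Sum.inr i)⁆)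
      = fun i : Fin (k+2) => ⁅aGen k i, bGen k i⁆ := by
    funext i
    show PresentedGroup.mk _ ⁅_, _⁆ = _
    rw [map_commutatorElement]
    rfl
  rwa [h1] at h0

lemma key_rel :
    ((List.ofFn fun i : Fin (k+1) => ⁅aGen k i.succ, bGen k i.succ⁆).prod)⁻¹
      = ⁅aGen k 0, bGen k 0⁆ := by
  have h := rel_SG k
  rw [List.ofFn_succ, List.prod_cons] at h
  exact inv_eq_of_mul_eq_one_left h

lemma comp_rel : ∀ b, (fhom k b).comp (φf k b) = zpowersHom _ ⁅aGen k 0, bGen k 0⁆ := by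
  intro b
  apply MonoidHom.ext_mint
  rw [MonoidHom.comp_apply]
  have hφ1 : φf k b (ofAdd 1) = cc k b := by
    simp only [φf, zpowersHom_apply, toAdd_ofAdd, zpow_one]
  rw [hφ1]
  have hz1 : zpowersHom (SurfaceGroup (k+2)) ⁅aGen k 0, bGen k 0⁆ (ofAdd 1)
      = ⁅aGen k 0, bGen k 0⁆ := by
    simp only [zpowersHom_apply, toAdd_ofAdd, zpow_one]
  rw [hz1]
  cases b
  · show fF k (cB k) = _
    rw [cB, map_inv, map_list_prod, List.map_ofFn]
    have h1 : (⇑(fF k) ∘ fun i : Fin (k+1) =>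
        ⁅(FreeGroup.of (Sum.inl i) : B k), FreeGroup.of (Sum.inr i)⁆)
        = fun i : Fin (k+1) => ⁅aGen k i.succ, bGen k i.succ⁆ := by
      funext i
      show fF k ⁅_, _⁆ = _
      rw [map_commutatorElement]
      simp [fF]
    rw [h1]
    exact key_rel k
  · show fT k cA = _
    rw [cA, map_commutatorElement]
    simp [fT]

def Ψ : P k →* SurfaceGroup (k+2) :=
  PushoutI.lift (fhom k) (zpowersHom _ ⁅aGen k 0, bGen k 0⁆) (comp_rel k)

lemma Psi_of (b : Bool) (w : Gf k b) :
    Ψ k (of (φ := φf k) b w) = fhom k b w := by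
  rw [Ψ, PushoutI.lift_of]

lemma Phi_of (x : Fin (k+2) ⊕ Fin (k+2)) :
    Φ k (PresentedGroup.of x) = F k x := PresentedGroup.toGroup.of _

lemma PhiPsi : (Φ k).comp (Ψ k) = MonoidHom.id (P k) := by
  apply hom_ext_nonempty
  intro b
  cases b
  · apply FreeGroup.ext_hom
    rintro (i | i) <;>
    · simp only [MonoidHom.comp_apply, MonoidHom.id_apply]
      refine (congrArg (Φ k) (Psi_of k _ _)).trans ?_
      show Φ k (FreeGroup.lift _ (FreeGroup.of _)) = _
      rw [FreeGroup.lift_apply_of]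
      simp only [Sum.elim_inl, Sum.elim_inr]
      first
      | rw [aGen, Phi_of]
      | rw [bGen, Phi_of]
      simp [F]
  · apply FreeGroup.ext_hom
    intro a
    cases a <;>
    · simp only [MonoidHom.comp_apply, MonoidHom.id_apply]
      refine (congrArg (Φ k) (Psi_of k _ _)).trans ?_
      show Φ k (FreeGroup.lift _ (FreeGroup.of _)) = _
      rw [FreeGroup.lift_apply_of]
      simp only [cond_true, cond_false]
      first
      | rw [aGen, Phi_of]
      | rw [bGen, Phi_of]
      simp [F]

lemma PsiPhi : (Ψ k).comp (Φ k) = MonoidHom.id (SurfaceGroup (k+2)) := by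
  apply PresentedGroup.ext
  rintro (i | i) <;>
  · simp only [MonoidHom.comp_apply, MonoidHom.id_apply]
    rw [Phi_of]
    induction i using Fin.cases with
    | zero =>
        first
        | (rw [show F k (Sum.inl 0)
              = of (φ := φf k) true (FreeGroup.of true) by simp [F], Psi_of]
           show fT k (FreeGroup.of true) = _
           rw [fT, FreeGroup.lift_apply_of]
           rfl)
        | (rw [show F k (Sum.inr 0)
              = of (φ := φf k) true (FreeGroup.of false) by simp [F], Psi_of]
           show fT k (FreeGroup.of false) = _
           rw [fT, FreeGroup.lift_apply_of]
           rfl)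
    | succ i' =>
        first
        | (rw [show F k (Sum.inl i'.succ)
              = of (φ := φf k) false (FreeGroup.of (Sum.inl i')) by simp [F], Psi_of]
           show fF k (FreeGroup.of (Sum.inl i')) = _
           rw [fF, FreeGroup.lift_apply_of]
           rfl)
        | (rw [show F k (Sum.inr i'.succ)
              = of (φ := φf k) false (FreeGroup.of (Sum.inr i')) by simp [F], Psi_of]
           show fF k (FreeGroup.of (Sum.inr i')) = _
           rw [fF, FreeGroup.lift_apply_of]
           rfl)

end SGAux

/-- For every g ≥ 2, the genus-g surface group has trivial center. -/
theorem surfaceGroup_center_trivial (g : ℕ) (hg : 2 ≤ g) :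
    Subgroup.center (SurfaceGroup g) = ⊥ := by
  obtain ⟨k, rfl⟩ : ∃ k, g = k + 2 := ⟨g - 2, by omega⟩
  rw [eq_bot_iff]
  intro z hz
  have hsur : Function.Surjective (SGAux.Φ k) := fun p =>
    ⟨SGAux.Ψ k p, DFunLike.congr_fun (SGAux.PhiPsi k) p⟩
  have hcen : SGAux.Φ k z ∈ Subgroup.center (SGAux.P k) := by
    rw [Subgroup.mem_center_iff]
    intro t
    obtain ⟨q, rfl⟩ := hsur t
    rw [← map_mul, ← map_mul, (Subgroup.mem_center_iff.mp hz q)]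
  have h1 : SGAux.Φ k z = 1 := SGAux.center_triv k _ hcen
  have h2 : z = 1 := by
    have hid := SGAux.PsiPhi k
    calc z = (SGAux.Ψ k).comp (SGAux.Φ k) z := by rw [hid]; rfl
    _ = SGAux.Ψ k (SGAux.Φ k z) := rfl
    _ = 1 := by rw [h1, map_one]
  simp [h2, Subgroup.mem_bot]
end

section
/- For every h ≥ 2, there exists an injective group homomorphism from the genus-h surface group Π_h into the genus-2 surface group Π_2 whose image is a subgroup of index h − 1 in Π_2. -/
open scoped commutatorElement

namespace SurfaceEmbed

open Fin.NatCast

lemma ofFnProd_succ {G : Type*} [Monoid G] (f : ℕ → G) (k : ℕ) :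
    (List.ofFn fun i : Fin (k+1) => f i.val).prod
      = f 0 * (List.ofFn fun i : Fin k => f (i.val+1)).prod := by
  rw [List.ofFn_succ]
  simp [Fin.val_succ]

lemma ofFnProd_concat {G : Type*} [Monoid G] (f : ℕ → G) (k : ℕ) :
    (List.ofFn fun i : Fin (k+1) => f i.val).prod
      = (List.ofFn fun i : Fin k => f i.val).prod * f k := by
  induction k generalizing f with
  | zero => simp
  | succ k ih =>
      rw [ofFnProd_succ f, ofFnProd_succ (fun j => f j), ih (fun j => f (j+1)), mul_assoc]

lemma ofFnProd_conj {G : Type*} [Group G] (f : ℕ → G) (g : G) (k : ℕ) :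
    (List.ofFn fun i : Fin k => g * f i.val * g⁻¹).prod
      = g * (List.ofFn fun i : Fin k => f i.val).prod * g⁻¹ := by
  induction k generalizing f with
  | zero => simp
  | succ k ih =>
      rw [ofFnProd_succ (fun j => g * f j * g⁻¹), ofFnProd_succ f,
        ih (fun j => f (j+1))]
      group

/-- generator a_i of the genus n+1 surface group, indexed by ℕ -/
def gA (n i : ℕ) : SurfaceGroup (n+1) := PresentedGroup.of (Sum.inl (i : Fin (n+1)))

def gB (n i : ℕ) : SurfaceGroup (n+1) := PresentedGroup.of (Sum.inr (i : Fin (n+1)))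

lemma relation (n : ℕ) :
    (List.ofFn fun i : Fin (n+1) => ⁅gA n i.val, gB n i.val⁆).prod = 1 := by
  have h1 : (List.ofFn fun i : Fin (n+1) => ⁅gA n i.val, gB n i.val⁆).prod
      = PresentedGroup.mk (surfaceRels (n+1)) (List.ofFn fun i : Fin (n+1) =>
          ⁅(FreeGroup.of (Sum.inl i) : FreeGroup (Fin (n+1) ⊕ Fin (n+1))),
            FreeGroup.of (Sum.inr i)⁆).prod := by
    rw [map_list_prod, List.map_ofFn]
    have hfe : (fun i : Fin (n+1) => ⁅gA n i.val, gB n i.val⁆)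
        = ⇑(PresentedGroup.mk (surfaceRels (n+1))) ∘ (fun i : Fin (n+1) =>
          ⁅(FreeGroup.of (Sum.inl i) : FreeGroup (Fin (n+1) ⊕ Fin (n+1))),
            FreeGroup.of (Sum.inr i)⁆) := by
      funext i
      simp only [Function.comp, map_commutatorElement]
      rw [gA, gB, Fin.cast_val_eq_self]
      rfl
    rw [hfe]
  rw [h1]
  exact (QuotientGroup.eq_one_iff _).mpr (Subgroup.subset_normalClosure rfl)

def a : SurfaceGroup 2 := gA 1 0
def b : SurfaceGroup 2 := gB 1 0
def c : SurfaceGroup 2 := gA 1 1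
def d : SurfaceGroup 2 := gB 1 1

lemma rel2 : ⁅a, b⁆ * ⁅c, d⁆ = 1 := by
  have := relation 1
  rw [ofFnProd_succ (fun j => ⁅gA 1 j, gB 1 j⁆) 1,
    ofFnProd_succ (fun j => ⁅gA 1 (j+1), gB 1 (j+1)⁆) 0] at this
  simpa [a, b, c, d] using this


/-- images in Π₂ of the generators of Π_{n+1} -/
def φf (n : ℕ) : Fin (n+1) ⊕ Fin (n+1) → SurfaceGroup 2
  | Sum.inl i => if i.val = 0 then a ^ n else a ^ (i.val - 1) * c * (a ^ (i.val - 1))⁻¹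
  | Sum.inr i => if i.val = 0 then b else a ^ (i.val - 1) * d * (a ^ (i.val - 1))⁻¹

/-- key identity in Π₂ -/
lemma keyIdentity (k : ℕ) :
    ⁅a ^ k, b⁆ = ((List.ofFn fun i : Fin k =>
      ⁅a ^ i.val * c * (a ^ i.val)⁻¹, a ^ i.val * d * (a ^ i.val)⁻¹⁆).prod)⁻¹ := by
  induction k with
  | zero => simp
  | succ k ih =>
      have hT : ∀ j : ℕ, ⁅a ^ (j+1) * c * (a ^ (j+1))⁻¹, a ^ (j+1) * d * (a ^ (j+1))⁻¹⁆
          = a * ⁅a ^ j * c * (a ^ j)⁻¹, a ^ j * d * (a ^ j)⁻¹⁆ * a⁻¹ := by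
        intro j
        simp only [commutatorElement_def, pow_succ']
        group
      rw [ofFnProd_succ (fun j => ⁅a ^ j * c * (a ^ j)⁻¹, a ^ j * d * (a ^ j)⁻¹⁆) k]
      simp only [hT]
      rw [ofFnProd_conj (fun j => ⁅a ^ j * c * (a ^ j)⁻¹, a ^ j * d * (a ^ j)⁻¹⁆) a k]
      have ih' : (List.ofFn fun i : Fin k =>
          ⁅a ^ i.val * c * (a ^ i.val)⁻¹, a ^ i.val * d * (a ^ i.val)⁻¹⁆).prod
          = ⁅a ^ k, b⁆⁻¹ := by rw [ih]; group
      rw [ih']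
      have hab : ⁅a, b⁆ = ⁅c, d⁆⁻¹ := mul_eq_one_iff_eq_inv.mp rel2
      have hsplit : ⁅a ^ (k+1), b⁆ = a * ⁅a ^ k, b⁆ * a⁻¹ * ⁅a, b⁆ := by
        simp only [commutatorElement_def, pow_succ']
        group
      rw [hsplit, hab]
      simp only [commutatorElement_def, pow_zero]
      group

lemma lift_relator {G : Type*} [Group G] (n : ℕ) (f : Fin (n+1) ⊕ Fin (n+1) → G)
    (r : FreeGroup (Fin (n+1) ⊕ Fin (n+1))) (hr : r ∈ surfaceRels (n+1)) :
    FreeGroup.lift f r = (List.ofFn fun i : Fin (n+1) =>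
      (fun v : ℕ => ⁅f (Sum.inl (v : Fin (n+1))), f (Sum.inr (v : Fin (n+1)))⁆) i.val).prod := by
  have hrr : r = (List.ofFn fun i : Fin (n+1) =>
      ⁅(FreeGroup.of (Sum.inl i) : FreeGroup (Fin (n+1) ⊕ Fin (n+1))),
        FreeGroup.of (Sum.inr i)⁆).prod := hr
  subst hrr
  rw [map_list_prod, List.map_ofFn]
  refine congrArg List.prod (congrArg List.ofFn (funext fun i => ?_))
  simp only [Function.comp, map_commutatorElement, FreeGroup.lift_apply_of, Fin.cast_val_eq_self]

lemma φcheck (n : ℕ) : ∀ r ∈ surfaceRels (n+1), FreeGroup.lift (φf n) r = 1 := by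
  intro r hr
  rw [lift_relator n (φf n) r hr]
  rw [ofFnProd_succ (fun v : ℕ =>
    ⁅φf n (Sum.inl (v : Fin (n+1))), φf n (Sum.inr (v : Fin (n+1)))⁆) n]
  have hv0 : ((0 : ℕ) : Fin (n+1)).val = 0 := by simp
  have hterm : ∀ i : Fin n,
      (fun v : ℕ => ⁅φf n (Sum.inl (v : Fin (n+1))), φf n (Sum.inr (v : Fin (n+1)))⁆) (i.val + 1)
      = ⁅a ^ i.val * c * (a ^ i.val)⁻¹, a ^ i.val * d * (a ^ i.val)⁻¹⁆ := by
    intro i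
    have hv : ((i.val + 1 : ℕ) : Fin (n+1)).val = i.val + 1 :=
      Fin.val_cast_of_lt (by omega)
    simp [φf, hv]
  rw [congrArg List.prod (congrArg List.ofFn (funext hterm))]
  have hz : φf n (Sum.inl ((0:ℕ) : Fin (n+1))) = a ^ n := by simp [φf, hv0]
  have hz' : φf n (Sum.inr ((0:ℕ) : Fin (n+1))) = b := by simp [φf, hv0]
  rw [hz, hz', keyIdentity n]
  group

/-- The homomorphism Π_{n+1} → Π₂. -/
def φhom (n : ℕ) : SurfaceGroup (n+1) →* SurfaceGroup 2 := PresentedGroup.toGroup (φcheck n)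

lemma φhom_of (n : ℕ) (x : Fin (n+1) ⊕ Fin (n+1)) :
    φhom n (PresentedGroup.of x) = φf n x := PresentedGroup.toGroup.of _

lemma φhom_A (n j : ℕ) (hj : j ≤ n) :
    φhom n (gA n j) = if j = 0 then a ^ n else a ^ (j-1) * c * (a ^ (j-1))⁻¹ := by
  rw [gA, φhom_of]
  simp [φf, Fin.val_cast_of_lt (by omega : j < n+1)]

lemma φhom_B (n j : ℕ) (hj : j ≤ n) :
    φhom n (gB n j) = if j = 0 then b else a ^ (j-1) * d * (a ^ (j-1))⁻¹ := by
  rw [gB, φhom_of]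
  simp [φf, Fin.val_cast_of_lt (by omega : j < n+1)]

lemma φA0 (n : ℕ) : φhom n (gA n 0) = a ^ n := by
  rw [φhom_A n 0 (by omega)]; simp

lemma φB0 (n : ℕ) : φhom n (gB n 0) = b := by
  rw [φhom_B n 0 (by omega)]; simp

lemma φAj (n j : ℕ) (h1 : 1 ≤ j) (hj : j ≤ n) :
    φhom n (gA n j) = a ^ (j-1) * c * (a ^ (j-1))⁻¹ := by
  rw [φhom_A n j hj, if_neg (by omega : ¬ j = 0)]

lemma φBj (n j : ℕ) (h1 : 1 ≤ j) (hj : j ≤ n) :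
    φhom n (gB n j) = a ^ (j-1) * d * (a ^ (j-1))⁻¹ := by
  rw [φhom_B n j hj, if_neg (by omega : ¬ j = 0)]

/-- images of generators under the deck automorphism α of Π_{m+2} -/
def αf (m : ℕ) : Fin (m+2) ⊕ Fin (m+2) → SurfaceGroup (m+2)
  | Sum.inl i => if i.val = 0 then gA (m+1) 0 else
      if i.val = m+1 then gA (m+1) 0 * gA (m+1) 1 * (gA (m+1) 0)⁻¹ else gA (m+1) (i.val + 1)
  | Sum.inr i => if i.val = 0 then ⁅gA (m+1) 1, gB (m+1) 1⁆⁻¹ * gB (m+1) 0 else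
      if i.val = m+1 then gA (m+1) 0 * gB (m+1) 1 * (gA (m+1) 0)⁻¹ else gB (m+1) (i.val + 1)

lemma relation_split (m : ℕ) :
    ⁅gA (m+1) 0, gB (m+1) 0⁆ * (⁅gA (m+1) 1, gB (m+1) 1⁆ *
      (List.ofFn fun i : Fin m => ⁅gA (m+1) (i.val+2), gB (m+1) (i.val+2)⁆).prod) = 1 := by
  have h := relation (m+1)
  rw [ofFnProd_succ (fun v : ℕ => ⁅gA (m+1) v, gB (m+1) v⁆) (m+1),
    ofFnProd_succ (fun v : ℕ => ⁅gA (m+1) (v+1), gB (m+1) (v+1)⁆) m] at h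
  exact h

lemma αcheck (m : ℕ) : ∀ r ∈ surfaceRels (m+2), FreeGroup.lift (αf m) r = 1 := by
  intro r hr
  rw [lift_relator (m+1) (αf m) r hr]
  rw [ofFnProd_succ (fun v : ℕ =>
      ⁅αf m (Sum.inl (v : Fin (m+2))), αf m (Sum.inr (v : Fin (m+2)))⁆) (m+1),
    ofFnProd_concat (fun v : ℕ =>
      ⁅αf m (Sum.inl ((v+1 : ℕ) : Fin (m+2))), αf m (Sum.inr ((v+1 : ℕ) : Fin (m+2)))⁆) m]
  have hv : ∀ j : ℕ, j ≤ m + 1 → ((j : ℕ) : Fin (m+2)).val = j := fun j hj =>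
    Fin.val_cast_of_lt (by omega)
  have hterm : ∀ i : Fin m,
      (fun v : ℕ => ⁅αf m (Sum.inl ((v+1 : ℕ) : Fin (m+2))),
        αf m (Sum.inr ((v+1 : ℕ) : Fin (m+2)))⁆) i.val
      = ⁅gA (m+1) (i.val+2), gB (m+1) (i.val+2)⁆ := by
    intro i
    have h1 : ((i.val + 1 : ℕ) : Fin (m+2)).val = i.val + 1 := hv _ (by omega)
    have h2 : i.val + 1 ≠ 0 := by omega
    have h3 : i.val + 1 ≠ m + 1 := by omega
    show ⁅αf m (Sum.inl ((i.val + 1 : ℕ) : Fin (m+2))),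
        αf m (Sum.inr ((i.val + 1 : ℕ) : Fin (m+2)))⁆ = _
    simp only [αf]
    rw [h1]
    rw [if_neg h2, if_neg h3, if_neg h2, if_neg h3]
  rw [congrArg List.prod (congrArg List.ofFn (funext hterm))]
  have hz : αf m (Sum.inl ((0:ℕ) : Fin (m+2))) = gA (m+1) 0 := by
    simp only [αf]
    rw [hv 0 (by omega)]
    simp
  have hz' : αf m (Sum.inr ((0:ℕ) : Fin (m+2)))
      = ⁅gA (m+1) 1, gB (m+1) 1⁆⁻¹ * gB (m+1) 0 := by
    simp only [αf]
    rw [hv 0 (by omega)]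
    simp
  have hl : αf m (Sum.inl (((m+1) : ℕ) : Fin (m+2)))
      = gA (m+1) 0 * gA (m+1) 1 * (gA (m+1) 0)⁻¹ := by
    simp only [αf]
    rw [hv (m+1) (le_refl _)]
    simp
  have hl' : αf m (Sum.inr (((m+1) : ℕ) : Fin (m+2)))
      = gA (m+1) 0 * gB (m+1) 1 * (gA (m+1) 0)⁻¹ := by
    simp only [αf]
    rw [hv (m+1) (le_refl _)]
    simp
  have haddv : ((m : ℕ) + 1 : ℕ) = ((m+1 : ℕ) : ℕ) := rfl
  rw [hz, hz']
  rw [hl, hl']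
  have hrel := relation_split m
  set P := (List.ofFn fun i : Fin m => ⁅gA (m+1) (i.val+2), gB (m+1) (i.val+2)⁆).prod with hP
  have hPeq : P = ⁅gA (m+1) 1, gB (m+1) 1⁆⁻¹ * ⁅gA (m+1) 0, gB (m+1) 0⁆⁻¹ := by
    have h' := hrel
    rw [← mul_assoc] at h'
    have h2 := mul_eq_one_iff_inv_eq.mp h'
    rw [mul_inv_rev] at h2
    exact h2.symm
  rw [hPeq]
  group


/-- the deck transformation α as an endomorphism of Π_{m+2} -/
def αhom (m : ℕ) : Monoid.End (SurfaceGroup (m+2)) :=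
  (PresentedGroup.toGroup (αcheck m) : SurfaceGroup (m+2) →* SurfaceGroup (m+2))

lemma end_pow_succ {M : Type*} [Monoid M] (f : Monoid.End M) (k : ℕ) (x : M) :
    (f ^ (k+1)) x = (f ^ k) (f x) := by rw [pow_succ]; rfl

lemma end_pow_add {M : Type*} [Monoid M] (f : Monoid.End M) (a b : ℕ) (x : M) :
    (f ^ (a+b)) x = (f ^ a) ((f ^ b) x) := by rw [pow_add]; rfl

lemma αhom_of (m : ℕ) (x : Fin (m+2) ⊕ Fin (m+2)) :
    αhom m (PresentedGroup.of x) = αf m x := PresentedGroup.toGroup.of _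

lemma fin_val (m j : ℕ) (hj : j ≤ m + 1) : ((j : ℕ) : Fin (m+2)).val = j :=
  Fin.val_cast_of_lt (by omega)

lemma αA0 (m : ℕ) : αhom m (gA (m+1) 0) = gA (m+1) 0 := by
  rw [gA, αhom_of]
  simp only [αf]
  rw [fin_val m 0 (by omega)]
  simp [gA]

lemma αB0 (m : ℕ) : αhom m (gB (m+1) 0) = ⁅gA (m+1) 1, gB (m+1) 1⁆⁻¹ * gB (m+1) 0 := by
  rw [gB, αhom_of]
  simp only [αf]
  rw [fin_val m 0 (by omega)]
  simp [gA, gB]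

lemma αA_mid (m j : ℕ) (h1 : 1 ≤ j) (h2 : j ≤ m) :
    αhom m (gA (m+1) j) = gA (m+1) (j+1) := by
  rw [gA, αhom_of]
  simp only [αf]
  rw [fin_val m j (by omega)]
  rw [if_neg (by omega : ¬ j = 0), if_neg (by omega : ¬ j = m + 1)]

lemma αB_mid (m j : ℕ) (h1 : 1 ≤ j) (h2 : j ≤ m) :
    αhom m (gB (m+1) j) = gB (m+1) (j+1) := by
  rw [gB, αhom_of]
  simp only [αf]
  rw [fin_val m j (by omega)]
  rw [if_neg (by omega : ¬ j = 0), if_neg (by omega : ¬ j = m + 1)]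

lemma αA_last (m : ℕ) :
    αhom m (gA (m+1) (m+1)) = gA (m+1) 0 * gA (m+1) 1 * (gA (m+1) 0)⁻¹ := by
  rw [gA, αhom_of]
  simp only [αf]
  rw [fin_val m (m+1) (le_refl _)]
  simp

lemma αB_last (m : ℕ) :
    αhom m (gB (m+1) (m+1)) = gA (m+1) 0 * gB (m+1) 1 * (gA (m+1) 0)⁻¹ := by
  rw [gB, αhom_of]
  simp only [αf]
  rw [fin_val m (m+1) (le_refl _)]
  simp

lemma powA0 (m k : ℕ) : ((αhom m) ^ k) (gA (m+1) 0) = gA (m+1) 0 := by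
  induction k with
  | zero => rfl
  | succ k ih => rw [end_pow_succ, αA0, ih]

lemma powA (m : ℕ) : ∀ k j : ℕ, 1 ≤ j → j + k ≤ m + 1 →
    ((αhom m) ^ k) (gA (m+1) j) = gA (m+1) (j+k) := by
  intro k
  induction k with
  | zero => intro j _ _; rfl
  | succ k ih =>
      intro j h1 h2
      rw [end_pow_succ, αA_mid m j h1 (by omega), ih (j+1) (by omega) (by omega)]
      congr 1
      omega

lemma powB (m : ℕ) : ∀ k j : ℕ, 1 ≤ j → j + k ≤ m + 1 →
    ((αhom m) ^ k) (gB (m+1) j) = gB (m+1) (j+k) := by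
  intro k
  induction k with
  | zero => intro j _ _; rfl
  | succ k ih =>
      intro j h1 h2
      rw [end_pow_succ, αB_mid m j h1 (by omega), ih (j+1) (by omega) (by omega)]
      congr 1
      omega

/-- the word B_k -/
def wseq (m : ℕ) : ℕ → SurfaceGroup (m+2)
  | 0 => gB (m+1) 0
  | (k+1) => ⁅gA (m+1) (k+1), gB (m+1) (k+1)⁆⁻¹ * wseq m k

lemma powW (m : ℕ) : ∀ k : ℕ, k ≤ m + 1 →
    ((αhom m) ^ k) (gB (m+1) 0) = wseq m k := by
  intro k
  induction k with
  | zero => intro _; rfl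
  | succ k ih =>
      intro hk
      rw [end_pow_succ, αB0, map_mul, map_inv, map_commutatorElement,
        powA m k 1 (by omega) (by omega), powB m k 1 (by omega) (by omega), ih (by omega)]
      show _ = ⁅gA (m+1) (k+1), gB (m+1) (k+1)⁆⁻¹ * wseq m k
      rw [Nat.add_comm 1 k]

lemma w_eq (m : ℕ) : ∀ k : ℕ, wseq m k =
    ((List.ofFn fun i : Fin k => ⁅gA (m+1) (i.val+1), gB (m+1) (i.val+1)⁆).prod)⁻¹
      * gB (m+1) 0 := by
  intro k
  induction k with
  | zero => simp [wseq]
  | succ k ih =>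
      show ⁅gA (m+1) (k+1), gB (m+1) (k+1)⁆⁻¹ * wseq m k = _
      rw [ih, ofFnProd_concat (fun v : ℕ => ⁅gA (m+1) (v+1), gB (m+1) (v+1)⁆) k]
      group

lemma w_last (m : ℕ) : wseq m (m+1) = gA (m+1) 0 * gB (m+1) 0 * (gA (m+1) 0)⁻¹ := by
  have h := relation (m+1)
  rw [ofFnProd_succ (fun v : ℕ => ⁅gA (m+1) v, gB (m+1) v⁆) (m+1)] at h
  have hprod : (List.ofFn fun i : Fin (m+1) =>
      ⁅gA (m+1) (i.val+1), gB (m+1) (i.val+1)⁆).prod = ⁅gA (m+1) 0, gB (m+1) 0⁆⁻¹ := by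
    have h2 := mul_eq_one_iff_inv_eq.mp h
    exact h2.symm
  rw [w_eq m (m+1), hprod]
  group

/-- The key identity: α^(m+1) is conjugation by a₀. -/
lemma keyPt (m : ℕ) : ∀ x : SurfaceGroup (m+2),
    ((αhom m) ^ (m+1)) x = gA (m+1) 0 * x * (gA (m+1) 0)⁻¹ := by
  have : (((αhom m) ^ (m+1) : Monoid.End _) : SurfaceGroup (m+2) →* SurfaceGroup (m+2))
      = (MulAut.conj (gA (m+1) 0)).toMonoidHom := by
    apply PresentedGroup.ext
    intro x
    show ((αhom m) ^ (m+1)) (PresentedGroup.of x)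
      = (MulAut.conj (gA (m+1) 0)).toMonoidHom (PresentedGroup.of x)
    have conj_apply : ∀ y : SurfaceGroup (m+2),
        (MulAut.conj (gA (m+1) 0)).toMonoidHom y = gA (m+1) 0 * y * (gA (m+1) 0)⁻¹ := by
      intro y; rfl
    cases x with
    | inl i =>
        have hi : (PresentedGroup.of (Sum.inl i) : SurfaceGroup (m+2)) = gA (m+1) i.val := by
          rw [gA, Fin.cast_val_eq_self]
        rw [hi, conj_apply]
        have hlt : i.val < m + 2 := i.isLt
        rcases Nat.eq_zero_or_pos i.val with h0 | hpos
        · rw [h0, powA0]; group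
        · have hle : i.val ≤ m + 1 := by omega
          have e1 := end_pow_add (αhom m) i.val (m+1-i.val) (gA (m+1) i.val)
          rw [show i.val + (m+1-i.val) = m+1 from by omega] at e1
          rw [e1, powA m (m+1-i.val) i.val hpos (by omega)]
          rw [show i.val + (m+1-i.val) = m+1 from by omega]
          have e2 := end_pow_succ (αhom m) (i.val - 1) (gA (m+1) (m+1))
          rw [show i.val - 1 + 1 = i.val from by omega] at e2
          rw [e2, αA_last, map_mul, map_mul, map_inv, powA0,
            powA m (i.val-1) 1 (by omega) (by omega)]
          rw [show 1 + (i.val - 1) = i.val from by omega]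
    | inr i =>
        have hi : (PresentedGroup.of (Sum.inr i) : SurfaceGroup (m+2)) = gB (m+1) i.val := by
          rw [gB, Fin.cast_val_eq_self]
        rw [hi, conj_apply]
        have hlt : i.val < m + 2 := i.isLt
        rcases Nat.eq_zero_or_pos i.val with h0 | hpos
        · rw [h0, powW m (m+1) (le_refl _), w_last]
        · have hle : i.val ≤ m + 1 := by omega
          have e1 := end_pow_add (αhom m) i.val (m+1-i.val) (gB (m+1) i.val)
          rw [show i.val + (m+1-i.val) = m+1 from by omega] at e1
          rw [e1, powB m (m+1-i.val) i.val hpos (by omega)]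
          rw [show i.val + (m+1-i.val) = m+1 from by omega]
          have e2 := end_pow_succ (αhom m) (i.val - 1) (gB (m+1) (m+1))
          rw [show i.val - 1 + 1 = i.val from by omega] at e2
          rw [e2, αB_last, map_mul, map_mul, map_inv, powA0,
            powB m (i.val-1) 1 (by omega) (by omega)]
          rw [show 1 + (i.val - 1) = i.val from by omega]
  intro x
  exact DFunLike.congr_fun this x


lemma end_pow_succ' {M : Type*} [Monoid M] (f : Monoid.End M) (k : ℕ) (x : M) :
    (f ^ (k+1)) x = f ((f ^ k) x) := by rw [pow_succ']; rfl

/-- α as an automorphism -/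
def αequiv (m : ℕ) : SurfaceGroup (m+2) ≃* SurfaceGroup (m+2) where
  toFun := αhom m
  invFun := fun x => ((αhom m) ^ m) ((gA (m+1) 0)⁻¹ * x * gA (m+1) 0)
  left_inv := by
    intro x
    show ((αhom m) ^ m) ((gA (m+1) 0)⁻¹ * αhom m x * gA (m+1) 0) = x
    have h1 : (gA (m+1) 0)⁻¹ * αhom m x * gA (m+1) 0
        = αhom m ((gA (m+1) 0)⁻¹ * x * gA (m+1) 0) := by
      rw [map_mul, map_mul, map_inv, αA0]
    rw [h1, ← end_pow_succ, keyPt]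
    group
  right_inv := by
    intro x
    show αhom m (((αhom m) ^ m) ((gA (m+1) 0)⁻¹ * x * gA (m+1) 0)) = x
    rw [← end_pow_succ', keyPt]
    group
  map_mul' := map_mul _

lemma equiv_pow_apply (m k : ℕ) (x : SurfaceGroup (m+2)) :
    ((αequiv m) ^ k : SurfaceGroup (m+2) ≃* SurfaceGroup (m+2)) x = ((αhom m) ^ k) x := by
  induction k generalizing x with
  | zero => rfl
  | succ k ih =>
      rw [pow_succ, MulAut.mul_apply, end_pow_succ]
      exact ih (αhom m x)

/-- the ℤ-action on Π_{m+2} generated by α -/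
def φact (m : ℕ) : Multiplicative ℤ →* MulAut (SurfaceGroup (m+2)) :=
  zpowersHom _ (αequiv m)

/-- The auxiliary group Π_{m+2} ⋊ ℤ. -/
abbrev Gm (m : ℕ) := SemidirectProduct (SurfaceGroup (m+2)) (Multiplicative ℤ) (φact m)

lemma φact_nat (m k : ℕ) (x : SurfaceGroup (m+2)) :
    (φact m (Multiplicative.ofAdd (k : ℤ))) x = ((αhom m) ^ k) x := by
  rw [φact, zpowersHom_apply, toAdd_ofAdd, zpow_natCast]
  exact equiv_pow_apply m k x

lemma φact_fixA0 (m : ℕ) (u : Multiplicative ℤ) :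
    (φact m u) (gA (m+1) 0) = gA (m+1) 0 := by
  rw [φact, zpowersHom_apply]
  induction u.toAdd using Int.induction_on with
  | zero => rfl
  | succ k ih =>
      rw [zpow_add_one, MulAut.mul_apply]
      have : (αequiv m) (gA (m+1) 0) = gA (m+1) 0 := αA0 m
      rw [this] at *
      exact ih
  | pred k ih =>
      rw [zpow_sub_one, MulAut.mul_apply]
      have hinv : (αequiv m)⁻¹ (gA (m+1) 0) = gA (m+1) 0 := by
        rw [MulAut.inv_def]
        exact (MulEquiv.symm_apply_eq _).mpr (αA0 m).symm
      rw [hinv]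
      exact ih

lemma φact_conj (m : ℕ) (x : SurfaceGroup (m+2)) :
    (φact m (Multiplicative.ofAdd ((m : ℤ) + 1))) x
      = gA (m+1) 0 * x * (gA (m+1) 0)⁻¹ := by
  have : ((m : ℤ) + 1) = ((m + 1 : ℕ) : ℤ) := by push_cast; ring
  rw [this, φact_nat, keyPt]

/-- The central element (a₀⁻¹, m+1). -/
def zc (m : ℕ) : Gm m :=
  SemidirectProduct.inl (gA (m+1) 0)⁻¹ *
    SemidirectProduct.inr (Multiplicative.ofAdd ((m : ℤ) + 1))

lemma zc_left (m : ℕ) : (zc m).left = (gA (m+1) 0)⁻¹ := by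
  simp [zc, SemidirectProduct.mul_left]

lemma zc_right (m : ℕ) : (zc m).right = Multiplicative.ofAdd ((m : ℤ) + 1) := by
  simp [zc, SemidirectProduct.mul_right]

lemma zc_comm (m : ℕ) (g : Gm m) : zc m * g = g * zc m := by
  ext
  · rw [SemidirectProduct.mul_left, SemidirectProduct.mul_left, zc_left, zc_right]
    rw [φact_conj, map_inv, φact_fixA0]
    group
  · rw [SemidirectProduct.mul_right, SemidirectProduct.mul_right, zc_right]
    exact mul_comm (Multiplicative.ofAdd ((m : ℤ) + 1)) _

/-- The cyclic central subgroup generated by zc. -/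
def Zs (m : ℕ) : Subgroup (Gm m) := Subgroup.zpowers (zc m)

lemma zc_pow_comm (m : ℕ) (k : ℤ) (y : Gm m) : zc m ^ k * y = y * zc m ^ k := by
  induction k using Int.induction_on with
  | zero => rw [zpow_zero, one_mul, mul_one]
  | succ k ih =>
      rw [zpow_add_one, mul_assoc, zc_comm m y, ← mul_assoc, ih, mul_assoc]
  | pred k ih =>
      have h3 : (zc m)⁻¹ * y = y * (zc m)⁻¹ := by
        simpa [mul_inv_rev] using (congrArg Inv.inv (zc_comm m y⁻¹)).symm
      rw [zpow_sub_one, mul_assoc, h3, ← mul_assoc, ih, mul_assoc]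

instance Zs_normal (m : ℕ) : (Zs m).Normal := by
  constructor
  intro x hx g
  obtain ⟨k, rfl⟩ := Subgroup.mem_zpowers_iff.mp hx
  have hc : g * zc m ^ k * g⁻¹ = zc m ^ k := by
    rw [← zc_pow_comm m k g, mul_assoc, mul_inv_cancel, mul_one]
  rw [hc]
  exact Subgroup.mem_zpowers_iff.mpr ⟨k, rfl⟩

lemma αequiv_apply (m : ℕ) (x : SurfaceGroup (m+2)) : αequiv m x = αhom m x := rfl

lemma C1 (m : ℕ) (x : SurfaceGroup (m+2)) :
    φhom (m+1) (αhom m x) = a * φhom (m+1) x * a⁻¹ := by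
  have key : (φhom (m+1)).comp (αhom m : SurfaceGroup (m+2) →* SurfaceGroup (m+2))
      = ((MulAut.conj a).toMonoidHom).comp (φhom (m+1)) := by
    apply PresentedGroup.ext
    intro x
    show φhom (m+1) (αhom m (PresentedGroup.of x))
      = (MulAut.conj a).toMonoidHom (φhom (m+1) (PresentedGroup.of x))
    have conj_apply : ∀ y : SurfaceGroup 2,
        (MulAut.conj a).toMonoidHom y = a * y * a⁻¹ := fun y => rfl
    cases x with
    | inl i =>
        have hi : (PresentedGroup.of (Sum.inl i) : SurfaceGroup (m+2)) = gA (m+1) i.val := by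
          rw [gA, Fin.cast_val_eq_self]
        have hlt : i.val < m + 2 := i.isLt
        simp only [MonoidHom.comp_apply, hi, conj_apply]
        rcases Nat.eq_zero_or_pos i.val with h0 | hpos
        · rw [h0, αA0, φA0]
          group
        · obtain ⟨e, he⟩ : ∃ e, i.val = e + 1 := ⟨i.val - 1, by omega⟩
          rw [he]
          rcases Nat.lt_or_ge e m with hem | hem
          · rw [αA_mid m (e+1) (by omega) (by omega), φAj (m+1) (e+2) (by omega) (by omega),
              φAj (m+1) (e+1) (by omega) (by omega)]
            rw [show e + 2 - 1 = e + 1 from by omega, show e + 1 - 1 = e from by omega]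
            rw [pow_succ']
            group
          · have hee : e = m := by omega
            rw [hee, αA_last, map_mul, map_mul, map_inv,
              φA0, φAj (m+1) 1 (by omega) (by omega), φAj (m+1) (m+1) (by omega) (by omega)]
            rw [show (1:ℕ) - 1 = 0 from rfl, show m + 1 - 1 = m from by omega]
            rw [pow_succ']
            group
    | inr i =>
        have hi : (PresentedGroup.of (Sum.inr i) : SurfaceGroup (m+2)) = gB (m+1) i.val := by
          rw [gB, Fin.cast_val_eq_self]
        have hlt : i.val < m + 2 := i.isLt
        simp only [MonoidHom.comp_apply, hi, conj_apply]
        rcases Nat.eq_zero_or_pos i.val with h0 | hpos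
        · rw [h0, αB0, map_mul, map_inv, map_commutatorElement,
            φAj (m+1) 1 (by omega) (by omega), φBj (m+1) 1 (by omega) (by omega), φB0]
          rw [show (1:ℕ) - 1 = 0 from rfl]
          have hab : ⁅a, b⁆ = ⁅c, d⁆⁻¹ := mul_eq_one_iff_eq_inv.mp rel2
          simp only [pow_zero, one_mul, inv_one, mul_one]
          rw [show a * b * a⁻¹ = ⁅a, b⁆ * b from by group, hab]
        · obtain ⟨e, he⟩ : ∃ e, i.val = e + 1 := ⟨i.val - 1, by omega⟩
          rw [he]
          rcases Nat.lt_or_ge e m with hem | hem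
          · rw [αB_mid m (e+1) (by omega) (by omega), φBj (m+1) (e+2) (by omega) (by omega),
              φBj (m+1) (e+1) (by omega) (by omega)]
            rw [show e + 2 - 1 = e + 1 from by omega, show e + 1 - 1 = e from by omega]
            rw [pow_succ']
            group
          · have hee : e = m := by omega
            rw [hee, αB_last, map_mul, map_mul, map_inv,
              φA0, φBj (m+1) 1 (by omega) (by omega), φBj (m+1) (m+1) (by omega) (by omega)]
            rw [show (1:ℕ) - 1 = 0 from rfl, show m + 1 - 1 = m from by omega]
            rw [pow_succ']
            group
  exact DFunLike.congr_fun key x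

lemma Czy (m : ℕ) (k : ℤ) (x : SurfaceGroup (m+2)) :
    φhom (m+1) ((αequiv m ^ k) x) = a ^ k * φhom (m+1) x * a ^ (-k) := by
  induction k using Int.induction_on generalizing x with
  | zero => simp
  | succ k ih =>
      rw [zpow_add_one, MulAut.mul_apply, ih (αequiv m x), αequiv_apply, C1]
      group
  | pred k ih =>
      rw [zpow_sub_one, MulAut.mul_apply]
      have hsymm : φhom (m+1) ((αequiv m)⁻¹ x) = a⁻¹ * φhom (m+1) x * a := by
        have h := C1 m (((αequiv m)⁻¹) x)
        rw [show αhom m (((αequiv m)⁻¹) x) = x from by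
          rw [MulAut.inv_def, ← αequiv_apply, MulEquiv.apply_symm_apply]] at h
        rw [h]
        group
      rw [ih (((αequiv m)⁻¹) x), hsymm]
      group

lemma hcompat (m : ℕ) : ∀ u : Multiplicative ℤ,
    (φhom (m+1)).comp ((φact m u).toMonoidHom)
      = (MulAut.conj ((zpowersHom (SurfaceGroup 2) a) u)).toMonoidHom.comp (φhom (m+1)) := by
  intro u
  apply MonoidHom.ext
  intro x
  show φhom (m+1) ((φact m u) x) = MulAut.conj ((zpowersHom (SurfaceGroup 2) a) u) (φhom (m+1) x)
  rw [φact, zpowersHom_apply, zpowersHom_apply, Czy, MulAut.conj_apply, zpow_neg]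

/-- The homomorphism G = Π_{m+2} ⋊ ℤ → Π₂. -/
def Θ (m : ℕ) : Gm m →* SurfaceGroup 2 :=
  SemidirectProduct.lift (φhom (m+1)) (zpowersHom (SurfaceGroup 2) a) (hcompat m)

lemma Θz (m : ℕ) : Θ m (zc m) = 1 := by
  unfold Θ
  rw [zc, map_mul, SemidirectProduct.lift_inl, SemidirectProduct.lift_inr, map_inv,
    φA0, zpowersHom_apply, toAdd_ofAdd,
    show ((m:ℤ)+1) = ((m+1 : ℕ) : ℤ) from by push_cast; ring, zpow_natCast]
  simp

/-- The quotient Q = G/⟨zc⟩, isomorphic to Π₂. -/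
abbrev Qm (m : ℕ) := Gm m ⧸ Zs m

def ΘQ (m : ℕ) : Qm m →* SurfaceGroup 2 :=
  QuotientGroup.lift (Zs m) (Θ m) (by
    intro g hg
    obtain ⟨k, rfl⟩ := Subgroup.mem_zpowers_iff.mp hg
    rw [MonoidHom.mem_ker, map_zpow, Θz, one_zpow])

def mkQ (m : ℕ) : Gm m →* Qm m := QuotientGroup.mk' (Zs m)

lemma mkQ_zc (m : ℕ) : mkQ m (zc m) = 1 :=
  (QuotientGroup.eq_one_iff _).mpr (Subgroup.mem_zpowers _)

/-- images in Q of the generators of Π₂ -/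
def ψf (m : ℕ) : Fin 2 ⊕ Fin 2 → Qm m
  | Sum.inl i => if i.val = 0 then mkQ m (SemidirectProduct.inr (Multiplicative.ofAdd (1:ℤ)))
      else mkQ m (SemidirectProduct.inl (gA (m+1) 1))
  | Sum.inr i => if i.val = 0 then mkQ m (SemidirectProduct.inl (gB (m+1) 0))
      else mkQ m (SemidirectProduct.inl (gB (m+1) 1))

lemma φact_one (m : ℕ) (x : SurfaceGroup (m+2)) :
    (φact m (Multiplicative.ofAdd (1:ℤ))) x = αhom m x := by
  rw [show (1:ℤ) = ((1:ℕ):ℤ) from rfl, φact_nat, pow_one]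

lemma relG (m : ℕ) :
    ⁅(SemidirectProduct.inr (Multiplicative.ofAdd (1:ℤ)) : Gm m),
      (SemidirectProduct.inl (gB (m+1) 0) : Gm m)⁆ *
    ⁅(SemidirectProduct.inl (gA (m+1) 1) : Gm m),
      (SemidirectProduct.inl (gB (m+1) 1) : Gm m)⁆ = 1 := by
  rw [commutatorElement_def]
  have h1 : (SemidirectProduct.inr (Multiplicative.ofAdd (1:ℤ)) : Gm m) *
      SemidirectProduct.inl (gB (m+1) 0) *
      (SemidirectProduct.inr (Multiplicative.ofAdd (1:ℤ)))⁻¹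
      = SemidirectProduct.inl ((φact m (Multiplicative.ofAdd (1:ℤ))) (gB (m+1) 0)) := by
    rw [← map_inv]
    exact (SemidirectProduct.inl_aut _ _).symm
  rw [h1]
  rw [φact_one, αB0, ← map_commutatorElement, ← map_inv, ← map_mul, ← map_mul]
  rw [show ⁅gA (m+1) 1, gB (m+1) 1⁆⁻¹ * gB (m+1) 0 * (gB (m+1) 0)⁻¹ *
      ⁅gA (m+1) 1, gB (m+1) 1⁆ = 1 from by group, map_one]

lemma ψcheck (m : ℕ) : ∀ r ∈ surfaceRels 2, FreeGroup.lift (ψf m) r = 1 := by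
  intro r hr
  rw [lift_relator 1 (ψf m) r hr]
  rw [ofFnProd_succ (fun v : ℕ =>
      ⁅ψf m (Sum.inl (v : Fin 2)), ψf m (Sum.inr (v : Fin 2))⁆) 1,
    ofFnProd_succ (fun v : ℕ =>
      ⁅ψf m (Sum.inl ((v+1 : ℕ) : Fin 2)), ψf m (Sum.inr ((v+1 : ℕ) : Fin 2))⁆) 0]
  simp only [List.ofFn_zero, List.prod_nil, mul_one]
  have h0 : ((0:ℕ) : Fin 2).val = 0 := fin_val 0 0 (by omega)
  have h1 : ((0+1:ℕ) : Fin 2).val = 1 := fin_val 0 1 (by omega)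
  simp only [ψf, h0, h1]
  norm_num
  rw [← map_commutatorElement, ← map_commutatorElement, ← map_mul]
  rw [relG, map_one]

/-- The homomorphism Π₂ → Q. -/
def Ψ (m : ℕ) : SurfaceGroup 2 →* Qm m := PresentedGroup.toGroup (ψcheck m)

lemma Ψa (m : ℕ) : Ψ m a = mkQ m (SemidirectProduct.inr (Multiplicative.ofAdd (1:ℤ))) := by
  show Ψ m (PresentedGroup.of (Sum.inl ((0:ℕ) : Fin 2))) = _
  rw [Ψ, PresentedGroup.toGroup.of]
  simp only [ψf, fin_val 0 0 (by omega)]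
  norm_num

lemma Ψb (m : ℕ) : Ψ m b = mkQ m (SemidirectProduct.inl (gB (m+1) 0)) := by
  show Ψ m (PresentedGroup.of (Sum.inr ((0:ℕ) : Fin 2))) = _
  rw [Ψ, PresentedGroup.toGroup.of]
  simp only [ψf, fin_val 0 0 (by omega)]
  norm_num

lemma Ψc (m : ℕ) : Ψ m c = mkQ m (SemidirectProduct.inl (gA (m+1) 1)) := by
  show Ψ m (PresentedGroup.of (Sum.inl ((1:ℕ) : Fin 2))) = _
  rw [Ψ, PresentedGroup.toGroup.of]
  simp only [ψf, fin_val 0 1 (by omega)]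
  norm_num

lemma Ψd (m : ℕ) : Ψ m d = mkQ m (SemidirectProduct.inl (gB (m+1) 1)) := by
  show Ψ m (PresentedGroup.of (Sum.inr ((1:ℕ) : Fin 2))) = _
  rw [Ψ, PresentedGroup.toGroup.of]
  simp only [ψf, fin_val 0 1 (by omega)]
  norm_num

lemma Θ_inl (m : ℕ) (x : SurfaceGroup (m+2)) :
    Θ m (SemidirectProduct.inl x) = φhom (m+1) x := by
  unfold Θ
  exact SemidirectProduct.lift_inl _ _ _ _

lemma Θ_inr (m : ℕ) (u : Multiplicative ℤ) :
    Θ m (SemidirectProduct.inr u) = a ^ u.toAdd := by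
  unfold Θ
  rw [SemidirectProduct.lift_inr, zpowersHom_apply]

lemma ΘQ_mk (m : ℕ) (x : Gm m) : ΘQ m (mkQ m x) = Θ m x := rfl

lemma E1 (m : ℕ) : (ΘQ m).comp (Ψ m) = MonoidHom.id (SurfaceGroup 2) := by
  apply PresentedGroup.ext
  intro x
  cases x with
  | inl i =>
      have hlt : i.val < 2 := i.isLt
      have hi : (PresentedGroup.of (Sum.inl i) : SurfaceGroup 2) = gA 1 i.val := by
        rw [gA, Fin.cast_val_eq_self]
      simp only [MonoidHom.comp_apply, MonoidHom.id_apply, hi]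
      rcases Nat.eq_zero_or_pos i.val with h0 | hpos
      · rw [h0]
        show ΘQ m (Ψ m a) = a
        rw [Ψa, ΘQ_mk, Θ_inr]
        simp
      · have h1 : i.val = 1 := by omega
        rw [h1]
        show ΘQ m (Ψ m c) = c
        rw [Ψc, ΘQ_mk, Θ_inl, φAj (m+1) 1 (by omega) (by omega)]
        simp
  | inr i =>
      have hlt : i.val < 2 := i.isLt
      have hi : (PresentedGroup.of (Sum.inr i) : SurfaceGroup 2) = gB 1 i.val := by
        rw [gB, Fin.cast_val_eq_self]
      simp only [MonoidHom.comp_apply, MonoidHom.id_apply, hi]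
      rcases Nat.eq_zero_or_pos i.val with h0 | hpos
      · rw [h0]
        show ΘQ m (Ψ m b) = b
        rw [Ψb, ΘQ_mk, Θ_inl, φB0]
      · have h1 : i.val = 1 := by omega
        rw [h1]
        show ΘQ m (Ψ m d) = d
        rw [Ψd, ΘQ_mk, Θ_inl, φBj (m+1) 1 (by omega) (by omega)]
        simp

lemma mkQ_inr_pow (m k : ℕ) :
    mkQ m (SemidirectProduct.inr (Multiplicative.ofAdd ((k:ℤ))))
      = (mkQ m (SemidirectProduct.inr (Multiplicative.ofAdd (1:ℤ)))) ^ k := by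
  rw [← map_pow, ← map_pow]
  congr 1
  rw [← ofAdd_nsmul]
  congr 1
  simp

lemma mkQ_inr_A0 (m : ℕ) :
    mkQ m (SemidirectProduct.inr (Multiplicative.ofAdd (((m:ℤ))+1)))
      = mkQ m (SemidirectProduct.inl (gA (m+1) 0)) := by
  have h : (SemidirectProduct.inr (Multiplicative.ofAdd (((m:ℤ))+1)) : Gm m)
      = SemidirectProduct.inl (gA (m+1) 0) * zc m := by
    rw [zc, ← mul_assoc, ← map_mul, mul_inv_cancel, map_one, one_mul]
  rw [h, map_mul, mkQ_zc, mul_one]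

lemma E2 (m : ℕ) : (Ψ m).comp (ΘQ m) = MonoidHom.id (Qm m) := by
  apply QuotientGroup.monoidHom_ext
  apply SemidirectProduct.hom_ext
  · apply PresentedGroup.ext
    intro x
    show Ψ m (ΘQ m (mkQ m (SemidirectProduct.inl (PresentedGroup.of x))))
        = mkQ m (SemidirectProduct.inl (PresentedGroup.of x))
    rw [ΘQ_mk, Θ_inl]
    cases x with
    | inl i =>
        have hlt : i.val < m + 2 := i.isLt
        have hi : (PresentedGroup.of (Sum.inl i) : SurfaceGroup (m+2)) = gA (m+1) i.val := by
          rw [gA, Fin.cast_val_eq_self]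
        rw [hi]
        rcases Nat.eq_zero_or_pos i.val with h0 | hpos
        · rw [h0, φA0, map_pow, Ψa, ← mkQ_inr_pow]
          rw [show ((m+1 : ℕ) : ℤ) = (m:ℤ)+1 from by push_cast; ring, mkQ_inr_A0]
        · obtain ⟨e, he⟩ : ∃ e, i.val = e + 1 := ⟨i.val - 1, by omega⟩
          rw [he, φAj (m+1) (e+1) (by omega) (by omega)]
          rw [show e + 1 - 1 = e from by omega]
          rw [map_mul, map_mul, map_inv, map_pow, Ψa, Ψc, ← mkQ_inr_pow, ← map_inv, ← map_mul,
            ← map_mul]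
          congr 1
          have haut : (SemidirectProduct.inr (Multiplicative.ofAdd ((e:ℤ))) : Gm m) *
              SemidirectProduct.inl (gA (m+1) 1) *
              (SemidirectProduct.inr (Multiplicative.ofAdd ((e:ℤ))))⁻¹
              = SemidirectProduct.inl ((φact m (Multiplicative.ofAdd ((e:ℤ)))) (gA (m+1) 1)) := by
            rw [← map_inv]
            exact (SemidirectProduct.inl_aut _ _).symm
          rw [haut, φact_nat, powA m e 1 (by omega) (by omega), Nat.add_comm 1 e]
    | inr i =>
        have hlt : i.val < m + 2 := i.isLt
        have hi : (PresentedGroup.of (Sum.inr i) : SurfaceGroup (m+2)) = gB (m+1) i.val := by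
          rw [gB, Fin.cast_val_eq_self]
        rw [hi]
        rcases Nat.eq_zero_or_pos i.val with h0 | hpos
        · rw [h0, φB0, Ψb]
        · obtain ⟨e, he⟩ : ∃ e, i.val = e + 1 := ⟨i.val - 1, by omega⟩
          rw [he, φBj (m+1) (e+1) (by omega) (by omega)]
          rw [show e + 1 - 1 = e from by omega]
          rw [map_mul, map_mul, map_inv, map_pow, Ψa, Ψd, ← mkQ_inr_pow, ← map_inv, ← map_mul,
            ← map_mul]
          congr 1
          have haut : (SemidirectProduct.inr (Multiplicative.ofAdd ((e:ℤ))) : Gm m) *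
              SemidirectProduct.inl (gB (m+1) 1) *
              (SemidirectProduct.inr (Multiplicative.ofAdd ((e:ℤ))))⁻¹
              = SemidirectProduct.inl ((φact m (Multiplicative.ofAdd ((e:ℤ)))) (gB (m+1) 1)) := by
            rw [← map_inv]
            exact (SemidirectProduct.inl_aut _ _).symm
          rw [haut, φact_nat, powB m e 1 (by omega) (by omega), Nat.add_comm 1 e]
  · apply MonoidHom.ext_mint
    show Ψ m (ΘQ m (mkQ m (SemidirectProduct.inr (Multiplicative.ofAdd (1:ℤ)))))
        = mkQ m (SemidirectProduct.inr (Multiplicative.ofAdd (1:ℤ)))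
    rw [ΘQ_mk, Θ_inr]
    simp only [toAdd_ofAdd, zpow_one]
    exact Ψa m

lemma ΘQ_inj (m : ℕ) : Function.Injective (ΘQ m) := by
  intro x y hxy
  have hx := DFunLike.congr_fun (E2 m) x
  have hy := DFunLike.congr_fun (E2 m) y
  simp only [MonoidHom.comp_apply, MonoidHom.id_apply] at hx hy
  rw [← hx, ← hy, hxy]

lemma rightHom_zc (m : ℕ) :
    SemidirectProduct.rightHom (zc m) = Multiplicative.ofAdd ((m:ℤ)+1) := by
  rw [zc, map_mul, SemidirectProduct.rightHom_inl, SemidirectProduct.rightHom_inr, one_mul]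

lemma ι_inj (m : ℕ) : Function.Injective
    (fun g : SurfaceGroup (m+2) => mkQ m (SemidirectProduct.inl g)) := by
  have h1 : ∀ g : SurfaceGroup (m+2), mkQ m (SemidirectProduct.inl g) = 1 → g = 1 := by
    intro g hg
    have hmem : (SemidirectProduct.inl g : Gm m) ∈ Zs m :=
      (QuotientGroup.eq_one_iff _).mp hg
    obtain ⟨k, hk⟩ := Subgroup.mem_zpowers_iff.mp hmem
    have hr := congrArg SemidirectProduct.rightHom hk
    rw [map_zpow, rightHom_zc, SemidirectProduct.rightHom_inl] at hr
    have hk0 : k = 0 := by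
      have h2 := congrArg Multiplicative.toAdd hr
      simp only [toAdd_zpow, toAdd_ofAdd, toAdd_one, smul_eq_mul] at h2
      rcases mul_eq_zero.mp h2 with h | h
      · exact h
      · exfalso; omega
    rw [hk0, zpow_zero] at hk
    have := hk.symm
    rwa [show (1 : Gm m) = SemidirectProduct.inl 1 from (map_one _).symm,
      SemidirectProduct.inl_inj] at this
  intro x y hxy
  have : mkQ m (SemidirectProduct.inl (x * y⁻¹)) = 1 := by
    rw [map_mul, map_mul, map_inv, map_inv]
    simp only at hxy
    rw [hxy]
    group
  have := h1 _ this
  rw [mul_inv_eq_one] at this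
  exact this

lemma φhom_eq_comp (m : ℕ) (g : SurfaceGroup (m+2)) :
    φhom (m+1) g = ΘQ m (mkQ m (SemidirectProduct.inl g)) := by
  rw [ΘQ_mk, Θ_inl]

lemma φhom_inj (m : ℕ) : Function.Injective (φhom (m+1)) := by
  intro x y hxy
  rw [φhom_eq_comp, φhom_eq_comp] at hxy
  exact ι_inj m (ΘQ_inj m hxy)

/-- the degree homomorphism Π₂ → ZMod (m+1) -/
def πf (m : ℕ) : Fin 2 ⊕ Fin 2 → Multiplicative (ZMod (m+1))
  | Sum.inl i => if i.val = 0 then Multiplicative.ofAdd (1 : ZMod (m+1)) else 1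
  | Sum.inr _ => 1

lemma πcheck (m : ℕ) : ∀ r ∈ surfaceRels 2, FreeGroup.lift (πf m) r = 1 := by
  intro r hr
  rw [lift_relator 1 (πf m) r hr]
  have hcomm : ∀ x y : Multiplicative (ZMod (m+1)), ⁅x, y⁆ = 1 := fun x y =>
    commutatorElement_eq_one_iff_commute.mpr (mul_comm x y)
  simp [hcomm]

def π (m : ℕ) : SurfaceGroup 2 →* Multiplicative (ZMod (m+1)) :=
  PresentedGroup.toGroup (πcheck m)

lemma πa (m : ℕ) : π m a = Multiplicative.ofAdd (1 : ZMod (m+1)) := by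
  show π m (PresentedGroup.of (Sum.inl ((0:ℕ) : Fin 2))) = _
  rw [π, PresentedGroup.toGroup.of]
  simp only [πf, fin_val 0 0 (by omega)]
  norm_num

lemma πb (m : ℕ) : π m b = 1 := by
  show π m (PresentedGroup.of (Sum.inr ((0:ℕ) : Fin 2))) = _
  rw [π, PresentedGroup.toGroup.of]
  simp [πf]

lemma πc (m : ℕ) : π m c = 1 := by
  show π m (PresentedGroup.of (Sum.inl ((1:ℕ) : Fin 2))) = _
  rw [π, PresentedGroup.toGroup.of]
  simp only [πf, fin_val 0 1 (by omega)]
  norm_num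

lemma πd (m : ℕ) : π m d = 1 := by
  show π m (PresentedGroup.of (Sum.inr ((1:ℕ) : Fin 2))) = _
  rw [π, PresentedGroup.toGroup.of]
  simp [πf]

lemma πa_pow (m k : ℕ) : π m (a ^ k) = Multiplicative.ofAdd ((k : ZMod (m+1))) := by
  rw [map_pow, πa, ← ofAdd_nsmul]
  congr 1
  simp

lemma π_φ (m : ℕ) (g : SurfaceGroup (m+2)) : π m (φhom (m+1) g) = 1 := by
  have key : (π m).comp (φhom (m+1)) = 1 := by
    apply PresentedGroup.ext
    intro x
    simp only [MonoidHom.comp_apply, MonoidHom.one_apply]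
    cases x with
    | inl i =>
        have hlt : i.val < m + 2 := i.isLt
        have hi : (PresentedGroup.of (Sum.inl i) : SurfaceGroup (m+2)) = gA (m+1) i.val := by
          rw [gA, Fin.cast_val_eq_self]
        rw [hi]
        rcases Nat.eq_zero_or_pos i.val with h0 | hpos
        · rw [h0, φA0, πa_pow]
          rw [show ((m+1 : ℕ) : ZMod (m+1)) = 0 from ZMod.natCast_self (m+1)]
          rfl
        · rw [φAj (m+1) i.val hpos (by omega), map_mul, map_mul, map_inv, πa_pow, πc]
          group
    | inr i =>
        have hlt : i.val < m + 2 := i.isLt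
        have hi : (PresentedGroup.of (Sum.inr i) : SurfaceGroup (m+2)) = gB (m+1) i.val := by
          rw [gB, Fin.cast_val_eq_self]
        rw [hi]
        rcases Nat.eq_zero_or_pos i.val with h0 | hpos
        · rw [h0, φB0, πb]
        · rw [φBj (m+1) i.val hpos (by omega), map_mul, map_mul, map_inv, πa_pow, πd]
          group
  exact DFunLike.congr_fun key g

lemma range_eq_ker (m : ℕ) : (φhom (m+1)).range = (π m).ker := by
  apply le_antisymm
  · rintro g ⟨x, rfl⟩
    exact π_φ m x
  · intro g hg
    obtain ⟨x, hx⟩ := QuotientGroup.mk'_surjective (Zs m) (Ψ m g)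
    have hg_eq : g = ΘQ m (mkQ m x) := by
      have h := DFunLike.congr_fun (E1 m) g
      simp only [MonoidHom.comp_apply, MonoidHom.id_apply] at h
      rw [← h]
      congr 1
      exact hx.symm
    have hxsplit : x = SemidirectProduct.inl x.left
        * SemidirectProduct.inr x.right :=
      (SemidirectProduct.inl_left_mul_inr_right x).symm
    set k : ℤ := Multiplicative.toAdd x.right with hk
    have hΘx : ΘQ m (mkQ m x) = φhom (m+1) x.left * a ^ k := by
      rw [ΘQ_mk, hxsplit]
      rw [map_mul, Θ_inl, Θ_inr]
      simp [hk]
    have hπg : (k : ZMod (m+1)) = 0 := by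
      have h1 : π m g = 1 := hg
      rw [hg_eq, hΘx, map_mul, π_φ, one_mul, map_zpow, πa] at h1
      have h2 := congrArg Multiplicative.toAdd h1
      simp only [toAdd_zpow, toAdd_ofAdd, toAdd_one, smul_eq_mul] at h2
      rw [← h2, zsmul_eq_mul, mul_one]
    obtain ⟨t, ht⟩ := (ZMod.intCast_zmod_eq_zero_iff_dvd k (m+1)).mp hπg
    refine ⟨x.left * (gA (m+1) 0) ^ t, ?_⟩
    rw [map_mul, map_zpow, φA0]
    rw [hg_eq, hΘx]
    congr 1
    rw [ht, ← zpow_natCast a (m+1), ← zpow_mul]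

lemma π_surj (m : ℕ) : Function.Surjective (π m) := by
  intro y
  refine ⟨a ^ (Multiplicative.toAdd y).val, ?_⟩
  haveI : NeZero (m+1) := ⟨by omega⟩
  rw [πa_pow, ZMod.natCast_rightInverse (Multiplicative.toAdd y)]
  rfl

lemma index_result (m : ℕ) : (φhom (m+1)).range.index = m + 1 := by
  rw [range_eq_ker, Subgroup.index_ker, MonoidHom.range_eq_top.mpr (π_surj m),
    Subgroup.card_top]
  haveI : NeZero (m+1) := ⟨by omega⟩
  rw [Nat.card_congr (Multiplicative.toAdd (α := ZMod (m+1)))]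
  exact Nat.card_zmod (m+1)

end SurfaceEmbed

/-- For every h ≥ 2, the genus-h surface group embeds into the genus-2 surface group
with image a subgroup of index h - 1. -/
theorem surfaceGroup_embeds_finite_index (h : ℕ) (hh : 2 ≤ h) :
    ∃ φ : SurfaceGroup h →* SurfaceGroup 2,
      Function.Injective φ ∧ φ.range.index = h - 1 := by
  obtain ⟨m, rfl⟩ : ∃ m, h = m + 2 := ⟨h - 2, by omega⟩
  refine ⟨SurfaceEmbed.φhom (m+1), SurfaceEmbed.φhom_inj m, ?_⟩
  rw [SurfaceEmbed.index_result m]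
  omega
end
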